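/- arXiv:1103.5575 — 7 statements merged into one kernel-verified Lean document; each statement's English description precedes it below -/
import Mathlib

section
/- Let p > 0 with p ≠ 1, b ∈ ℝ, c ≥ 0, let F be a Lévy measure on ℝ with F((−∞,−1]) = 0 and ∫_{(1,∞)} (1+x)^{1−p} dF(x) < ∞, and let h be a truncation function. Then the function g(π) := πb − pπ²c/2 + ∫_{(−1,∞)} (((1+πx)^{1−p} − 1)/(1−p) − π h(x)) dF(x) is differentiable at every π in the interior of A = {π ∈ ℝ : F({x : 1 + πx ≤ 0}) = 0}, the function x ↦ x(1+πx)^{−p} − h(x) is F-integrable for such π, and g′(π) = b − pπc + ∫_{(−1,∞)} (x(1+πx)^{−p} − h(x)) dF(x). -/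
open MeasureTheory Set Filter
open scoped ENNReal Topology


lemma half_rpow (p : ℝ) : ((1:ℝ)/2) ^ (-p-1) = 2 ^ (p+1) := by
  rw [one_div, ← Real.rpow_neg_one (2:ℝ), ← Real.rpow_mul (by norm_num)]
  ring_nf

lemma aux1 {p : ℝ} (hp : 0 < p) {u : ℝ} (hu : u ∈ Icc (1/2 : ℝ) (3/2)) :
    |u ^ (-p) - 1| ≤ p * 2 ^ (p+1) * |u - 1| := by
  have h2 : ((1:ℝ)/2) ^ (-p-1) = 2 ^ (p+1) := half_rpow p
  have key := Convex.norm_image_sub_le_of_norm_hasDerivWithin_le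
    (f := fun u : ℝ => u ^ (-p)) (f' := fun u : ℝ => -p * u ^ (-p-1))
    (s := Icc (1/2 : ℝ) (3/2)) (C := p * 2 ^ (p+1))
    (fun x hx => (Real.hasDerivAt_rpow_const (p := -p)
        (Or.inl (by rcases hx with ⟨h1,_⟩; positivity : x ≠ 0))).hasDerivWithinAt)
    (fun x hx => by
      rcases hx with ⟨h1, h2'⟩
      rw [Real.norm_eq_abs, abs_mul, abs_neg, abs_of_pos hp,
        abs_of_pos (Real.rpow_pos_of_pos (by linarith) _)]
      have hle : x ^ (-p-1) ≤ ((1:ℝ)/2) ^ (-p-1) :=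
        Real.rpow_le_rpow_of_nonpos (by norm_num) h1 (by linarith)
      rw [h2] at hle
      have h2p : (0:ℝ) < 2 ^ (p+1) := Real.rpow_pos_of_pos (by norm_num) _
      nlinarith)
    (convex_Icc _ _) (show (1:ℝ) ∈ Icc (1/2:ℝ) (3/2) by norm_num) hu
  simpa [Real.one_rpow, Real.norm_eq_abs] using key

lemma gderiv {p : ℝ} (hp1 : p ≠ 1) {w : ℝ} (hw : w ≠ 0) :
    HasDerivAt (fun w : ℝ => (w ^ (1-p) - 1)/(1-p) - w) (w ^ (-p) - 1) w := by
  have h1 : (1:ℝ) - p ≠ 0 := sub_ne_zero.mpr (Ne.symm hp1)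
  have := (((Real.hasDerivAt_rpow_const (p := 1-p) (Or.inl hw)).sub_const 1).div_const
    (1-p)).sub (hasDerivAt_id w)
  convert this using 1
  · exact rfl
  · exact rfl
  · exact rfl
  rw [show (1:ℝ)-p-1 = -p by ring]
  field_simp

lemma aux2 {p : ℝ} (hp : 0 < p) (hp1 : p ≠ 1) {u : ℝ} (hu : u ∈ Icc (1/2 : ℝ) (3/2)) :
    |(u ^ (1-p) - 1)/(1-p) - (u - 1)| ≤ p * 2 ^ (p+1) * (u-1)^2 := by
  have hsub : uIcc (1:ℝ) u ⊆ Icc (1/2 : ℝ) (3/2) := by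
    intro w hw
    exact ⟨le_trans (le_min (by norm_num) hu.1) hw.1,
      le_trans hw.2 (max_le (by norm_num) hu.2)⟩
  have key := Convex.norm_image_sub_le_of_norm_hasDerivWithin_le
    (f := fun w : ℝ => (w ^ (1-p) - 1)/(1-p) - w) (f' := fun w : ℝ => w ^ (-p) - 1)
    (s := uIcc (1:ℝ) u) (C := p * 2 ^ (p+1) * |u-1|)
    (fun x hx => (gderiv hp1 (by have := (hsub hx).1; positivity)).hasDerivWithinAt)
    (fun x hx => by
      rw [Real.norm_eq_abs]
      refine le_trans (aux1 hp (hsub hx)) ?_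
      have h2p : (0:ℝ) < 2 ^ (p+1) := Real.rpow_pos_of_pos (by norm_num) _
      have hxd : |x - 1| ≤ |u - 1| := by
        rcases le_total 1 u with hle | hle
        · rw [uIcc_of_le hle] at hx
          rw [abs_of_nonneg (by linarith [hx.1]), abs_of_nonneg (by linarith)]
          linarith [hx.2]
        · rw [uIcc_of_ge hle] at hx
          rw [abs_of_nonpos (by linarith [hx.2]), abs_of_nonpos (by linarith)]
          linarith [hx.1]
      exact mul_le_mul_of_nonneg_left hxd (by positivity))
    (convex_uIcc _ _) left_mem_uIcc right_mem_uIcc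
  simp only [Real.one_rpow, Real.norm_eq_abs] at key
  norm_num at key
  rw [show (u ^ (1-p) - 1)/(1-p) - (u - 1) = ((u ^ (1-p) - 1)/(1-p) - u) - (-1) by ring]
  calc |(u ^ (1-p) - 1)/(1-p) - u - (-1)| ≤ p * 2 ^ (p+1) * |u-1| * |u-1| := by
        simpa [sub_neg_eq_add] using key
    _ = p * 2 ^ (p+1) * (u-1)^2 := by rw [mul_assoc, ← abs_mul, ← sq, abs_sq]

set_option maxHeartbeats 1000000 in
lemma pointbound' {p π ε δ M x q : ℝ} (h : ℝ → ℝ) (hp : 0 < p) (hε : 0 < ε) (hδ : 0 < δ)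
    (hδ1 : δ ≤ 1) (hδh : ∀ y : ℝ, |y| ≤ δ → h y = y) (hδq : (|π|+ε) * δ ≤ 1/2)
    (hM : ∀ y, |h y| ≤ M) (hM0 : 0 ≤ M)
    (hx1 : -1 < x) (hx0 : x ≠ 0) (hqx : ε*|x| < 1+q*x) (hq : |q-π| ≤ ε) :
    |x*(1+q*x)^(-p) - h x| ≤
      (p*2^(p+1)*(|π|+ε) + (ε^(-p)*(δ^(1-p)+1) + ε^(-p) + M)/δ^2) * min (x^2) 1
        + ε^(-p) * Set.indicator (Set.Ioi 1) (fun y => (1+y)^(1-p)) x := by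
  have habs : 0 < |x| := abs_pos.mpr hx0
  have hqa : |q| ≤ |π| + ε := by
    calc |q| = |(q - π) + π| := by ring_nf
      _ ≤ |q - π| + |π| := abs_add_le _ _
      _ ≤ |π| + ε := by linarith
  have hεp : (0:ℝ) < ε^(-p) := Real.rpow_pos_of_pos hε _
  have hδp : (0:ℝ) < δ^(1-p) := Real.rpow_pos_of_pos hδ _
  have h2p : (0:ℝ) < 2^(p+1) := Real.rpow_pos_of_pos (by norm_num) _
  have hπε : (0:ℝ) ≤ |π| + ε := by positivity
  by_cases hxδ : |x| ≤ δ
  · -- small x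
    have hhx : h x = x := hδh x hxδ
    have hqxs : |q*x| ≤ 1/2 := by
      rw [abs_mul]
      calc |q| * |x| ≤ (|π|+ε)*δ := by
            apply mul_le_mul hqa hxδ (abs_nonneg x) hπε
        _ ≤ 1/2 := hδq
    have hu : 1+q*x ∈ Icc (1/2 : ℝ) (3/2) := by
      constructor <;> [linarith [neg_abs_le (q*x)]; linarith [le_abs_self (q*x)]]
    have key : |x*(1+q*x)^(-p) - h x| ≤ p*2^(p+1)*(|π|+ε) * min (x^2) 1 := by
      rw [hhx, show x*(1+q*x)^(-p) - x = x*((1+q*x)^(-p) - 1) by ring, abs_mul]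
      have h1 : |(1+q*x)^(-p) - 1| ≤ p*2^(p+1)*|q*x| := by
        have := aux1 hp hu
        simpa using this
      have hx2 : min (x^2) 1 = x^2 := min_eq_left (by nlinarith [sq_abs x])
      rw [hx2]
      calc |x| * |(1+q*x)^(-p) - 1| ≤ |x| * (p*2^(p+1)*|q*x|) :=
            mul_le_mul_of_nonneg_left h1 (abs_nonneg x)
        _ ≤ p*2^(p+1)*(|π|+ε) * x^2 := by
            have e : |x| * (p*2^(p+1)*|q*x|) = (p*2^(p+1)*|q|) * x^2 := by
              rw [abs_mul, ← sq_abs]; ring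
            rw [e]
            exact mul_le_mul_of_nonneg_right
              (mul_le_mul_of_nonneg_left hqa (by positivity)) (sq_nonneg x)
    have hind : Set.indicator (Set.Ioi 1) (fun y => (1+y:ℝ)^(1-p)) x = 0 := by
      apply Set.indicator_of_notMem
      simp only [mem_Ioi, not_lt]
      calc x ≤ |x| := le_abs_self x
        _ ≤ 1 := le_trans hxδ hδ1
    rw [hind]
    have hmn : (0:ℝ) ≤ min (x^2) 1 := le_min (sq_nonneg x) zero_le_one
    have : (0:ℝ) ≤ (ε^(-p)*(δ^(1-p)+1) + ε^(-p) + M)/δ^2 := by positivity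
    nlinarith
  · -- large x
    push_neg at hxδ
    have hup : (0:ℝ) < 1+q*x := lt_trans (by positivity) hqx
    have hrp : (1+q*x)^(-p) ≤ ε^(-p) * |x|^(-p) := by
      have h1 : (1+q*x)^(-p) ≤ (ε*|x|)^(-p) :=
        Real.rpow_le_rpow_of_nonpos (by positivity) hqx.le (by linarith)
      rwa [Real.mul_rpow hε.le (abs_nonneg x)] at h1
    have hxx : |x| * |x|^(-p) = |x|^(1-p) := by
      rw [show (1:ℝ)-p = 1 + (-p) by ring, Real.rpow_add habs, Real.rpow_one]
    have hmain : |x*(1+q*x)^(-p) - h x| ≤ ε^(-p) * |x|^(1-p) + M := by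
      calc |x*(1+q*x)^(-p) - h x| ≤ |x*(1+q*x)^(-p)| + |h x| := abs_sub _ _
        _ ≤ ε^(-p) * |x|^(1-p) + M := by
            refine add_le_add ?_ (hM x)
            have e1 : |x*(1+q*x)^(-p)| = |x| * (1+q*x)^(-p) := by
              rw [abs_mul, abs_of_pos (Real.rpow_pos_of_pos hup _)]
            have e2 : |x| * (1+q*x)^(-p) ≤ |x| * (ε^(-p) * |x|^(-p)) :=
              mul_le_mul_of_nonneg_left hrp (abs_nonneg x)
            have e3 : |x| * (ε^(-p) * |x|^(-p)) = ε^(-p) * |x|^(1-p) := by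
              rw [← hxx]; ring
            rw [e1]; rw [e3] at e2; exact e2
    have hmin : δ^2 ≤ min (x^2) 1 := by
      refine le_min ?_ (by nlinarith)
      nlinarith [sq_abs x]
    have hC2 : ((ε^(-p)*(δ^(1-p)+1) + ε^(-p) + M)/δ^2) * δ^2
        = ε^(-p)*(δ^(1-p)+1) + ε^(-p) + M := by field_simp
    have hC2nn : (0:ℝ) ≤ (ε^(-p)*(δ^(1-p)+1) + ε^(-p) + M)/δ^2 := by positivity
    have hC1nn : (0:ℝ) ≤ p*2^(p+1)*(|π|+ε) := by positivity
    have hmn : (0:ℝ) ≤ min (x^2) 1 := le_min (sq_nonneg x) zero_le_one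
    by_cases hx2 : x ≤ 1
    · have hxa : |x| ≤ 1 := abs_le.mpr ⟨hx1.le, hx2⟩
      have hple : |x|^(1-p) ≤ δ^(1-p) + 1 := by
        rcases le_or_gt p 1 with hple1 | hple1
        · have := Real.rpow_le_one (abs_nonneg x) hxa (by linarith : (0:ℝ) ≤ 1-p)
          linarith
        · have := Real.rpow_le_rpow_of_nonpos hδ hxδ.le (by linarith : (1:ℝ)-p ≤ 0)
          linarith
      have hind : Set.indicator (Set.Ioi 1) (fun y => (1+y:ℝ)^(1-p)) x = 0 :=
        Set.indicator_of_notMem (by simp only [mem_Ioi, not_lt]; exact hx2) _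
      rw [hind]
      have h1 : |x*(1+q*x)^(-p) - h x| ≤ ε^(-p)*(δ^(1-p)+1) + M := by
        refine hmain.trans ?_
        have := mul_le_mul_of_nonneg_left hple hεp.le
        linarith
      have h2 : ε^(-p)*(δ^(1-p)+1) + M ≤ ((ε^(-p)*(δ^(1-p)+1) + ε^(-p) + M)/δ^2) * min (x^2) 1 := by
        calc ε^(-p)*(δ^(1-p)+1) + M ≤ ((ε^(-p)*(δ^(1-p)+1) + ε^(-p) + M)/δ^2) * δ^2 := by
              rw [hC2]; linarith
          _ ≤ _ := mul_le_mul_of_nonneg_left hmin hC2nn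
      have h3 : (0:ℝ) ≤ (p*2^(p+1)*(|π|+ε)) * min (x^2) 1 := mul_nonneg hC1nn hmn
      rw [mul_zero, add_zero, add_mul]
      linarith [h1.trans h2]
    · push_neg at hx2
      have hxa : |x| = x := abs_of_pos (by linarith)
      have hple : x^(1-p) ≤ (1+x)^(1-p) + 1 := by
        rcases le_or_gt p 1 with hple1 | hple1
        · have := Real.rpow_le_rpow (by linarith : (0:ℝ) ≤ x) (by linarith : x ≤ 1+x)
            (by linarith : (0:ℝ) ≤ 1-p)
          have hnn : (0:ℝ) ≤ (1+x)^(1-p) := Real.rpow_nonneg (by linarith) _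
          linarith
        · have h1 := Real.rpow_le_rpow_of_nonpos one_pos hx2.le (by linarith : (1:ℝ)-p ≤ 0)
          rw [Real.one_rpow] at h1
          have hnn : (0:ℝ) ≤ (1+x)^(1-p) := Real.rpow_nonneg (by linarith) _
          linarith
      have hind : Set.indicator (Set.Ioi 1) (fun y => (1+y:ℝ)^(1-p)) x = (1+x)^(1-p) :=
        Set.indicator_of_mem (by simpa using hx2) _
      rw [hind]
      have hminx : min (x^2) 1 = 1 := min_eq_right (by nlinarith)
      rw [hminx]
      have h1 : |x*(1+q*x)^(-p) - h x| ≤ ε^(-p)*(1+x)^(1-p) + (ε^(-p) + M) := by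
        refine hmain.trans ?_
        rw [hxa]
        have := mul_le_mul_of_nonneg_left hple hεp.le
        linarith
      have h2 : ε^(-p) + M ≤ (ε^(-p)*(δ^(1-p)+1) + ε^(-p) + M)/δ^2 := by
        calc ε^(-p) + M ≤ ((ε^(-p)*(δ^(1-p)+1) + ε^(-p) + M)/δ^2) * δ^2 := by
              rw [hC2]; nlinarith
          _ ≤ _ := by nlinarith
      linarith

set_option maxHeartbeats 2000000 in
lemma pointbound0 {p π ε δ M x q : ℝ} (h : ℝ → ℝ) (hp : 0 < p) (hp1 : p ≠ 1) (hε : 0 < ε)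
    (hδ : 0 < δ) (hδ1 : δ ≤ 1) (hδh : ∀ y : ℝ, |y| ≤ δ → h y = y) (hδq : (|π|+ε) * δ ≤ 1/2)
    (hM : ∀ y, |h y| ≤ M) (hM0 : 0 ≤ M)
    (hx1 : -1 < x) (hx0 : x ≠ 0) (hqx : ε*|x| < 1+q*x) (hq : |q-π| ≤ ε) :
    |((1+q*x)^(1-p) - 1)/(1-p) - q * h x| ≤
      (p*2^(p+1)*(|π|+ε)^2 +
        (((ε*δ)^(1-p) + (1+|π|+ε)^(1-p) + ε^(1-p) + 1)/|1-p| + (|π|+ε)*M)/δ^2) * min (x^2) 1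
        + ((1+|π|+ε)^(1-p)/|1-p|) * Set.indicator (Set.Ioi 1) (fun y => (1+y)^(1-p)) x := by
  have habs : 0 < |x| := abs_pos.mpr hx0
  have hqa : |q| ≤ |π| + ε := by
    calc |q| = |(q - π) + π| := by ring_nf
      _ ≤ |q - π| + |π| := abs_add_le _ _
      _ ≤ |π| + ε := by linarith
  have h1p : (0:ℝ) < |1-p| := abs_pos.mpr (sub_ne_zero.mpr (Ne.symm hp1))
  have h2p : (0:ℝ) < 2^(p+1) := Real.rpow_pos_of_pos (by norm_num) _
  have hπε : (0:ℝ) ≤ |π| + ε := by positivity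
  have hεδp : (0:ℝ) < (ε*δ)^(1-p) := Real.rpow_pos_of_pos (by positivity) _
  have hεp : (0:ℝ) < ε^(1-p) := Real.rpow_pos_of_pos hε _
  have hbp : (0:ℝ) < (1+|π|+ε)^(1-p) := Real.rpow_pos_of_pos (by positivity) _
  have hqhM : |q * h x| ≤ (|π|+ε)*M :=
    (abs_mul q (h x)) ▸ mul_le_mul hqa (hM x) (abs_nonneg _) hπε
  set K : ℝ := ((ε*δ)^(1-p) + (1+|π|+ε)^(1-p) + ε^(1-p) + 1)/|1-p| + (|π|+ε)*M with hK
  have hKnn : (0:ℝ) ≤ K := by positivity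
  set C1 : ℝ := p*2^(p+1)*(|π|+ε)^2 with hC1
  have hC1nn : (0:ℝ) ≤ C1 := by positivity
  have hmn : (0:ℝ) ≤ min (x^2) 1 := le_min (sq_nonneg x) zero_le_one
  by_cases hxδ : |x| ≤ δ
  · -- small x
    have hhx : h x = x := hδh x hxδ
    have hqxs : |q*x| ≤ 1/2 := by
      rw [abs_mul]
      calc |q| * |x| ≤ (|π|+ε)*δ := mul_le_mul hqa hxδ (abs_nonneg x) hπε
        _ ≤ 1/2 := hδq
    have hu : 1+q*x ∈ Icc (1/2 : ℝ) (3/2) := by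
      constructor <;> [linarith [neg_abs_le (q*x)]; linarith [le_abs_self (q*x)]]
    have key := aux2 hp hp1 hu
    rw [show (1:ℝ)+q*x - 1 = q*x by ring] at key
    rw [hhx]
    have hqq : (q*x)^2 ≤ (|π|+ε)^2 * x^2 := by
      have h1 : |q|^2 ≤ (|π|+ε)^2 := by nlinarith [abs_nonneg q]
      calc (q*x)^2 = |q|^2 * x^2 := by rw [mul_pow, sq_abs q]
        _ ≤ (|π|+ε)^2 * x^2 := mul_le_mul_of_nonneg_right h1 (sq_nonneg x)
    have hx2 : min (x^2) 1 = x^2 := min_eq_left (by nlinarith [sq_abs x])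
    have hind : Set.indicator (Set.Ioi 1) (fun y => (1+y:ℝ)^(1-p)) x = 0 := by
      apply Set.indicator_of_notMem
      simp only [mem_Ioi, not_lt]
      calc x ≤ |x| := le_abs_self x
        _ ≤ 1 := le_trans hxδ hδ1
    rw [hind, hx2, mul_zero, add_zero, add_mul]
    have hKdnn : (0:ℝ) ≤ (K/δ^2) * x^2 := by positivity
    have hmain : |((1+q*x)^(1-p) - 1)/(1-p) - q*x| ≤ C1 * x^2 := by
      refine key.trans ?_
      rw [hC1]
      calc p * 2^(p+1) * (q*x)^2 ≤ p * 2^(p+1) * ((|π|+ε)^2 * x^2) :=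
            mul_le_mul_of_nonneg_left hqq (by positivity)
        _ = p*2^(p+1)*(|π|+ε)^2 * x^2 := by ring
    linarith
  · -- large x
    push_neg at hxδ
    have hup : (0:ℝ) < 1+q*x := lt_trans (by positivity) hqx
    have hupn : (0:ℝ) ≤ (1+q*x)^(1-p) := Real.rpow_nonneg hup.le _
    have hmain : |((1+q*x)^(1-p) - 1)/(1-p) - q * h x| ≤
        ((1+q*x)^(1-p) + 1)/|1-p| + (|π|+ε)*M := by
      calc |((1+q*x)^(1-p) - 1)/(1-p) - q * h x|
          ≤ |((1+q*x)^(1-p) - 1)/(1-p)| + |q * h x| := abs_sub _ _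
        _ ≤ ((1+q*x)^(1-p) + 1)/|1-p| + (|π|+ε)*M := by
            refine add_le_add ?_ hqhM
            rw [abs_div]
            refine (div_le_div_iff_of_pos_right h1p).mpr ?_
            calc |(1+q*x)^(1-p) - 1| ≤ |(1+q*x)^(1-p)| + |(1:ℝ)| := abs_sub _ _
              _ = (1+q*x)^(1-p) + 1 := by rw [abs_of_nonneg hupn, abs_one]
    have hmin : δ^2 ≤ min (x^2) 1 := by
      refine le_min ?_ (by nlinarith)
      nlinarith [sq_abs x]
    have hKC : K = (K/δ^2) * δ^2 := by field_simp
    have hKdnn : (0:ℝ) ≤ K/δ^2 := by positivity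
    have hKmin : K ≤ (K/δ^2) * min (x^2) 1 :=
      hKC ▸ (hKC ▸ mul_le_mul_of_nonneg_left hmin hKdnn)
    by_cases hx2 : x ≤ 1
    · have hxa : |x| ≤ 1 := abs_le.mpr ⟨hx1.le, hx2⟩
      have hub : (1+q*x)^(1-p) ≤ (ε*δ)^(1-p) + (1+|π|+ε)^(1-p) := by
        rcases le_or_gt p 1 with hple1 | hple1
        · have hu1 : 1+q*x ≤ 1+|π|+ε := by
            have : q*x ≤ |q| * |x| := le_trans (le_abs_self _) (le_of_eq (abs_mul q x))
            nlinarith [mul_le_mul hqa hxa (abs_nonneg x) hπε]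
          have := Real.rpow_le_rpow hup.le hu1 (by linarith : (0:ℝ) ≤ 1-p)
          linarith
        · have hεδu : ε*δ ≤ 1+q*x := by
            have : ε*δ ≤ ε*|x| := mul_le_mul_of_nonneg_left hxδ.le hε.le
            linarith
          have := Real.rpow_le_rpow_of_nonpos (by positivity : (0:ℝ) < ε*δ) hεδu
            (by linarith : (1:ℝ)-p ≤ 0)
          linarith
      have hind : Set.indicator (Set.Ioi 1) (fun y => (1+y:ℝ)^(1-p)) x = 0 :=
        Set.indicator_of_notMem (by simp only [mem_Ioi, not_lt]; exact hx2) _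
      rw [hind, mul_zero, add_zero, add_mul]
      have h1 : |((1+q*x)^(1-p) - 1)/(1-p) - q * h x| ≤ K := by
        refine hmain.trans ?_
        rw [hK]
        have : ((1+q*x)^(1-p) + 1)/|1-p| ≤
            ((ε*δ)^(1-p) + (1+|π|+ε)^(1-p) + ε^(1-p) + 1)/|1-p| :=
          (div_le_div_iff_of_pos_right h1p).mpr (by linarith)
        linarith
      have h2 : (0:ℝ) ≤ C1 * min (x^2) 1 := mul_nonneg hC1nn hmn
      linarith [h1.trans hKmin]
    · push_neg at hx2
      have hxa : |x| = x := abs_of_pos (by linarith)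
      have hub : (1+q*x)^(1-p) ≤ (1+|π|+ε)^(1-p)*(1+x)^(1-p) + ε^(1-p) := by
        have h1xp : (0:ℝ) < 1+x := by linarith
        rcases le_or_gt p 1 with hple1 | hple1
        · have hu1 : 1+q*x ≤ (1+|π|+ε)*(1+x) := by
            have h3 : q*x ≤ (|π|+ε)*x := by
              have : q*x ≤ |q| * |x| := le_trans (le_abs_self _) (le_of_eq (abs_mul q x))
              rw [hxa] at this
              nlinarith [mul_le_mul_of_nonneg_right hqa (by linarith : (0:ℝ) ≤ x)]
            nlinarith
          have h4 := Real.rpow_le_rpow hup.le hu1 (by linarith : (0:ℝ) ≤ 1-p)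
          rw [Real.mul_rpow (by positivity) h1xp.le] at h4
          linarith
        · have hεxu : ε*x ≤ 1+q*x := by have := hqx.le; rwa [hxa] at this
          have h4 := Real.rpow_le_rpow_of_nonpos (by positivity : (0:ℝ) < ε*x) hεxu
            (by linarith : (1:ℝ)-p ≤ 0)
          rw [Real.mul_rpow hε.le (by linarith : (0:ℝ) ≤ x)] at h4
          have h5 : x^(1-p) ≤ 1 :=
            Real.rpow_le_one_of_one_le_of_nonpos (by linarith) (by linarith)
          have h6 : ε^(1-p) * x^(1-p) ≤ ε^(1-p) := by nlinarith
          have h7 : (0:ℝ) ≤ (1+|π|+ε)^(1-p)*(1+x)^(1-p) := by positivity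
          linarith
      have hind : Set.indicator (Set.Ioi 1) (fun y => (1+y:ℝ)^(1-p)) x = (1+x)^(1-p) :=
        Set.indicator_of_mem (by simp only [mem_Ioi]; exact hx2) _
      rw [hind]
      have hminx : min (x^2) 1 = 1 := min_eq_right (by nlinarith)
      rw [hminx, mul_one]
      have hsplit : ((1+|π|+ε)^(1-p)*(1+x)^(1-p) + ε^(1-p) + 1)/|1-p| =
          ((1+|π|+ε)^(1-p)/|1-p|)*(1+x)^(1-p) + (ε^(1-p) + 1)/|1-p| := by ring
      have h1 : |((1+q*x)^(1-p) - 1)/(1-p) - q * h x| ≤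
          ((1+|π|+ε)^(1-p)/|1-p|)*(1+x)^(1-p) + K := by
        refine hmain.trans ?_
        have h8 : ((1+q*x)^(1-p) + 1)/|1-p| ≤
            ((1+|π|+ε)^(1-p)*(1+x)^(1-p) + ε^(1-p) + 1)/|1-p| :=
          (div_le_div_iff_of_pos_right h1p).mpr (by linarith)
        rw [hsplit] at h8
        have h9 : (ε^(1-p) + 1)/|1-p| ≤
            ((ε*δ)^(1-p) + (1+|π|+ε)^(1-p) + ε^(1-p) + 1)/|1-p| :=
          (div_le_div_iff_of_pos_right h1p).mpr (by linarith)
        rw [hK]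
        linarith
      have hKK : K ≤ K/δ^2 := by
        rw [le_div_iff₀ (by positivity : (0:ℝ) < δ^2)]
        have hδ21 : δ^2 ≤ 1 := by nlinarith
        exact le_trans (mul_le_mul_of_nonneg_left hδ21 hKnn) (le_of_eq (mul_one K))
      linarith

lemma keypos {π ε x q : ℝ} (hε : 0 < ε)
    (hm : 0 < 1+(π-2*ε)*x) (hpl : 0 < 1+(π+2*ε)*x) (hq : |q - π| ≤ ε) :
    ε * |x| < 1 + q*x := by
  have h1 : -(ε*|x|) ≤ (q-π)*x := by
    have h2 : |(q-π)*x| ≤ ε*|x| := by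
      rw [abs_mul]
      exact mul_le_mul_of_nonneg_right hq (abs_nonneg x)
    linarith [neg_abs_le ((q-π)*x)]
  rcases le_or_gt 0 x with hx | hx
  · rw [abs_of_nonneg hx] at h1 ⊢; nlinarith
  · rw [abs_of_neg hx] at h1 ⊢; nlinarith

lemma Fderiv {p x q : ℝ} (hp1 : p ≠ 1) (hpos : (0:ℝ) < 1+q*x) (h : ℝ → ℝ) :
    HasDerivAt (fun q : ℝ => ((1+q*x)^(1-p) - 1)/(1-p) - q * h x)
      (x*(1+q*x)^(-p) - h x) q := by
  have hne : (1:ℝ) - p ≠ 0 := sub_ne_zero.mpr (Ne.symm hp1)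
  have h1 : HasDerivAt (fun q : ℝ => 1+q*x) x q := by
    simpa using (hasDerivAt_mul_const x).const_add (1:ℝ)
  have h2 := ((h1.rpow_const (p := 1-p) (Or.inl hpos.ne')).sub_const 1).div_const (1-p)
  have h3 : HasDerivAt (fun q : ℝ => q * h x) (h x) q := hasDerivAt_mul_const (h x)
  convert h2.sub h3 using 1
  · exact rfl
  · exact rfl
  · exact rfl
  rw [show (1:ℝ)-p-1 = -p by ring]
  field_simp

theorem stmt1 (p b c : ℝ) (hp : 0 < p) (hp1 : p ≠ 1) (hc : 0 ≤ c)
    (F : Measure ℝ)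
    (hF0 : F {0} = 0)
    (hFlevy : ∫⁻ x, ENNReal.ofReal (min (x ^ 2) 1) ∂F ≠ ∞)
    (hFneg : F (Iic (-1 : ℝ)) = 0)
    (hFint : IntegrableOn (fun x => (1 + x) ^ (1 - p)) (Ioi (1 : ℝ)) F)
    (h : ℝ → ℝ) (hhC1 : ContDiff ℝ 1 h)
    (hhbdd : ∃ M, ∀ x, |h x| ≤ M)
    (hh0 : ∀ᶠ x in 𝓝 (0 : ℝ), h x = x)
    (hhcpt : ∃ R > 0, ∀ x, R < |x| → h x = 0) :
    ∀ π ∈ interior {π : ℝ | F {x | 1 + π * x ≤ 0} = 0},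
      IntegrableOn (fun x => x * (1 + π * x) ^ (-p) - h x) (Ioi (-1 : ℝ)) F ∧
      HasDerivAt
        (fun π => π * b - p * π ^ 2 * c / 2 +
          ∫ x in Ioi (-1 : ℝ), (((1 + π * x) ^ (1 - p) - 1) / (1 - p) - π * h x) ∂F)
        (b - p * π * c + ∫ x in Ioi (-1 : ℝ), (x * (1 + π * x) ^ (-p) - h x) ∂F) π := by
  obtain ⟨M, hM⟩ := hhbdd
  have hM0 : 0 ≤ M := le_trans (abs_nonneg _) (hM 0)
  intro π hπ
  -- neighborhood inside A
  obtain ⟨ε₀, hε₀pos, hball⟩ : ∃ ε₀ > 0,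
      Metric.ball π ε₀ ⊆ {π : ℝ | F {x | 1 + π * x ≤ 0} = 0} :=
    Metric.mem_nhds_iff.mp (mem_interior_iff_mem_nhds.mp hπ)
  set ε := ε₀/3 with hεdef
  have hε : 0 < ε := by positivity
  have hmem : ∀ q : ℝ, |q - π| ≤ 2*ε → F {x | 1 + q * x ≤ 0} = 0 := fun q hq =>
    hball (by rw [Metric.mem_ball, Real.dist_eq]; rw [hεdef] at hq; linarith)
  have hApl : F {x | 1 + (π+2*ε) * x ≤ 0} = 0 := hmem _ (by
    rw [show π+2*ε-π = 2*ε by ring, abs_of_pos (by positivity)])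
  have hAmi : F {x | 1 + (π-2*ε) * x ≤ 0} = 0 := hmem _ (by
    rw [show π-2*ε-π = -(2*ε) by ring, abs_neg, abs_of_pos (by positivity)])
  -- δ
  obtain ⟨δ₁, hδ₁pos, hδ₁⟩ : ∃ δ₁ > 0, ∀ y : ℝ, |y| < δ₁ → h y = y := by
    rcases Metric.eventually_nhds_iff.mp hh0 with ⟨δ₁, hδ₁pos, H⟩
    exact ⟨δ₁, hδ₁pos, fun y hy => H (by simpa [Real.dist_eq] using hy)⟩
  set δ : ℝ := min (min (δ₁/2) 1) (1/(2*(|π|+ε)+2)) with hδdef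
  have hδpos : 0 < δ := lt_min (lt_min (by positivity) one_pos) (by positivity)
  have hδ1 : δ ≤ 1 := le_trans (min_le_left _ _) (min_le_right _ _)
  have hδh : ∀ y : ℝ, |y| ≤ δ → h y = y := fun y hy =>
    hδ₁ y (lt_of_le_of_lt (hy.trans (le_trans (min_le_left _ _) (min_le_left _ _)))
      (by linarith))
  have hδq : (|π|+ε)*δ ≤ 1/2 := by
    have h1 : δ ≤ 1/(2*(|π|+ε)+2) := min_le_right _ _
    have h2 : (0:ℝ) ≤ |π|+ε := by positivity
    calc (|π|+ε)*δ ≤ (|π|+ε)*(1/(2*(|π|+ε)+2)) := mul_le_mul_of_nonneg_left h1 h2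
      _ ≤ 1/2 := by rw [mul_one_div, div_le_iff₀ (by positivity)]; linarith
  set μ := F.restrict (Ioi (-1:ℝ)) with hμdef
  have hnull : ∀ s : Set ℝ, F s = 0 → μ s = 0 := fun s hs => by
    rw [hμdef, Measure.restrict_apply' measurableSet_Ioi]
    exact le_antisymm (hs ▸ measure_mono inter_subset_left) (zero_le)
  -- a.e. facts
  have hae : ∀ᵐ x ∂μ, x ∈ Ioi (-1:ℝ) ∧ x ≠ 0 ∧
      0 < 1+(π-2*ε)*x ∧ 0 < 1+(π+2*ε)*x := by
    have h1 : ∀ᵐ x ∂μ, x ∈ Ioi (-1:ℝ) := ae_restrict_mem measurableSet_Ioi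
    have h2 : ∀ᵐ x ∂μ, x ≠ 0 := by
      rw [ae_iff]
      convert hnull {(0:ℝ)} hF0 using 2
      ext y; simp [not_not]
    have h3 : ∀ᵐ x ∂μ, 0 < 1+(π-2*ε)*x := by
      rw [ae_iff]
      convert hnull _ hAmi using 2
      ext y; simp [not_lt]
    have h4 : ∀ᵐ x ∂μ, 0 < 1+(π+2*ε)*x := by
      rw [ae_iff]
      convert hnull _ hApl using 2
      ext y; simp [not_lt]
    exact h1.and (h2.and (h3.and h4))
  -- integrability of bound pieces
  have hBmin : Integrable (fun x => min (x^2) 1) μ := by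
    refine ⟨((continuous_pow 2).min continuous_const).aestronglyMeasurable, ?_⟩
    rw [hasFiniteIntegral_iff_ofReal (ae_of_all _ fun x => le_min (sq_nonneg x) zero_le_one)]
    exact lt_of_le_of_lt (lintegral_mono' Measure.restrict_le_self le_rfl)
      (lt_top_iff_ne_top.mpr hFlevy)
  have hBind : Integrable (fun x => Set.indicator (Ioi 1) (fun y => (1+y:ℝ)^(1-p)) x) μ :=
    (hFint.integrable_indicator measurableSet_Ioi).restrict
  -- measurability
  have hmeasF : ∀ q : ℝ, AEStronglyMeasurable
      (fun x => ((1+q*x)^(1-p) - 1)/(1-p) - q * h x) μ := fun q => by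
    apply Measurable.aestronglyMeasurable
    have hhm : Measurable h := hhC1.continuous.measurable
    fun_prop
  have hmeasF' : AEStronglyMeasurable (fun x => x*(1+π*x)^(-p) - h x) μ := by
    apply Measurable.aestronglyMeasurable
    have hhm : Measurable h := hhC1.continuous.measurable
    fun_prop
  -- integrability of F π
  have hFπint : Integrable (fun x => ((1+π*x)^(1-p) - 1)/(1-p) - π * h x) μ := by
    refine Integrable.mono'
      ((hBmin.const_mul (p*2^(p+1)*(|π|+ε)^2 +
          (((ε*δ)^(1-p) + (1+|π|+ε)^(1-p) + ε^(1-p) + 1)/|1-p| + (|π|+ε)*M)/δ^2)).add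
        (hBind.const_mul ((1+|π|+ε)^(1-p)/|1-p|))) (hmeasF π) ?_
    filter_upwards [hae] with x hx
    obtain ⟨hx1, hx0, hmi, hpl⟩ := hx
    have hqx : ε*|x| < 1+π*x := keypos hε hmi hpl (by simp [hε.le])
    exact pointbound0 h hp hp1 hε hδpos hδ1 hδh hδq hM hM0 hx1 hx0 hqx (by simp [hε.le])
  -- bound on derivative
  have hbound : ∀ᵐ x ∂μ, ∀ q ∈ Metric.ball π ε,
      ‖x*(1+q*x)^(-p) - h x‖ ≤
        (p*2^(p+1)*(|π|+ε) + (ε^(-p)*(δ^(1-p)+1) + ε^(-p) + M)/δ^2) * min (x^2) 1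
          + ε^(-p) * Set.indicator (Ioi 1) (fun y => (1+y:ℝ)^(1-p)) x := by
    filter_upwards [hae] with x hx q hq
    obtain ⟨hx1, hx0, hmi, hpl⟩ := hx
    rw [Metric.mem_ball, Real.dist_eq] at hq
    have hqx : ε*|x| < 1+q*x := keypos hε hmi hpl hq.le
    exact pointbound' h hp hε hδpos hδ1 hδh hδq hM hM0 hx1 hx0 hqx hq.le
  have hBint : Integrable (fun x =>
      (p*2^(p+1)*(|π|+ε) + (ε^(-p)*(δ^(1-p)+1) + ε^(-p) + M)/δ^2) * min (x^2) 1
        + ε^(-p) * Set.indicator (Ioi 1) (fun y => (1+y:ℝ)^(1-p)) x) μ :=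
    (hBmin.const_mul _).add (hBind.const_mul _)
  -- differentiability a.e.
  have hdiff : ∀ᵐ x ∂μ, ∀ q ∈ Metric.ball π ε,
      HasDerivAt (fun q => ((1+q*x)^(1-p) - 1)/(1-p) - q * h x)
        (x*(1+q*x)^(-p) - h x) q := by
    filter_upwards [hae] with x hx q hq
    obtain ⟨hx1, hx0, hmi, hpl⟩ := hx
    rw [Metric.mem_ball, Real.dist_eq] at hq
    have hqx : ε*|x| < 1+q*x := keypos hε hmi hpl hq.le
    have hpos : (0:ℝ) < 1+q*x :=
      lt_trans (by positivity : (0:ℝ) < ε*|x|) hqx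
    exact Fderiv hp1 hpos h
  have main := hasDerivAt_integral_of_dominated_loc_of_deriv_le (μ := μ) (x₀ := π)
    (F := fun q x => ((1+q*x)^(1-p) - 1)/(1-p) - q * h x)
    (F' := fun q x => x*(1+q*x)^(-p) - h x)
    (Metric.ball_mem_nhds π hε) (Eventually.of_forall hmeasF) hFπint hmeasF' hbound hBint hdiff
  obtain ⟨hint, hderiv⟩ := main
  constructor
  · exact hint
  · have hpoly : HasDerivAt (fun q : ℝ => q*b - p*q^2*c/2) (b - p*π*c) π := by
      have h1 : HasDerivAt (fun q : ℝ => q*b) b π := hasDerivAt_mul_const b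
      have h2 : HasDerivAt (fun q : ℝ => p*q^2*c/2) (p*π*c) π := by
        have := (((hasDerivAt_pow 2 π).const_mul p).mul_const c).div_const 2
        convert this using 1
        · exact rfl
        · exact rfl
        simp
        ring
      exact h1.sub h2
    exact hpoly.add hderiv
end

section
/- Let b ∈ ℝ, c ≥ 0, let F be a Lévy measure on ℝ with F((−∞,−1]) = 0 and ∫_{(1,∞)} log(1+x) dF(x) < ∞, and let h be a truncation function. Then for every π in the interior of A = {π ∈ ℝ : F({x : 1 + πx ≤ 0}) = 0}, the function x ↦ log(1+πx) − π h(x) is F-integrable, the function g(π) := πb − π²c/2 + ∫_{(−1,∞)} (log(1+πx) − π h(x)) dF(x) is finite, continuous and concave on the interior of A, and g is differentiable there with g′(π) = b − πc + ∫_{(−1,∞)} (x/(1+πx) − h(x)) dF(x), the integrand being F-integrable. -/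
open MeasureTheory Set Filter
open scoped ENNReal Topology

private lemma intMin {F : Measure ℝ}
    (hFlevy : ∫⁻ x, ENNReal.ofReal (min (x ^ 2) 1) ∂F ≠ ∞) :
    Integrable (fun x => min (x ^ 2) 1) F := by
  refine ⟨(((continuous_pow 2).min continuous_const).aestronglyMeasurable), ?_⟩
  rw [hasFiniteIntegral_iff_ofReal (Eventually.of_forall fun x =>
    le_min (sq_nonneg x) zero_le_one)]
  exact hFlevy.lt_top

set_option maxHeartbeats 2000000 in
private lemma aux_main {F : Measure ℝ} (hF0 : F {0} = 0)
    (hFlevy : ∫⁻ x, ENNReal.ofReal (min (x ^ 2) 1) ∂F ≠ ∞)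
    (hFint : IntegrableOn (fun x => Real.log (1 + x)) (Ioi (1 : ℝ)) F)
    {h : ℝ → ℝ} (hhm : Measurable h) {M : ℝ} (hM : ∀ x, |h x| ≤ M)
    {δh : ℝ} (hδh0 : 0 < δh) (hδh : ∀ x, |x| < δh → h x = x)
    {π : ℝ} (hπ : π ∈ interior {π : ℝ | F {x | 1 + π * x ≤ 0} = 0}) :
    IntegrableOn (fun x => Real.log (1 + π * x) - π * h x) (Ioi (-1 : ℝ)) F ∧
    IntegrableOn (fun x => x / (1 + π * x) - h x) (Ioi (-1 : ℝ)) F ∧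
    HasDerivAt (fun p => ∫ x in Ioi (-1 : ℝ), (Real.log (1 + p * x) - p * h x) ∂F)
      (∫ x in Ioi (-1 : ℝ), (x / (1 + π * x) - h x) ∂F) π := by
  obtain ⟨R, hR0, hRball⟩ := Metric.isOpen_iff.mp isOpen_interior π hπ
  obtain ⟨r, hrdef⟩ : ∃ t : ℝ, t = R / 4 := ⟨_, rfl⟩
  have hr0 : 0 < r := by rw [hrdef]; positivity
  have hM0 : 0 ≤ M := le_trans (abs_nonneg _) (hM 0)
  -- endpoints π ± 2r are in A
  have hend : ∀ s : ℝ, |s| ≤ 2 * r → F {x | 1 + (π + s) * x ≤ 0} = 0 := by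
    intro s hs
    have hmem : π + s ∈ Metric.ball π R := by
      simp only [Metric.mem_ball, Real.dist_eq, add_sub_cancel_left]
      calc |s| ≤ 2 * r := hs
        _ < R := by rw [hrdef]; linarith
    have h' : π + s ∈ {π : ℝ | F {x | 1 + π * x ≤ 0} = 0} := interior_subset (hRball hmem)
    exact h'
  obtain ⟨N, hNdef⟩ : ∃ N : Set ℝ,
      N = {x : ℝ | 1 + (π - 2*r) * x ≤ 0} ∪ {x : ℝ | 1 + (π + 2*r) * x ≤ 0} := ⟨_, rfl⟩
  have hN : F N = 0 := by
    rw [hNdef]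
    refine measure_union_null ?_ (hend (2*r) (by rw [abs_of_pos (by positivity)]))
    have := hend (-(2*r)) (by rw [abs_neg, abs_of_pos (by positivity)])
    simpa [sub_eq_add_neg] using this
  -- the key positivity bound
  have hpos : ∀ x, x ∉ N → ∀ p ∈ Metric.closedBall π r, r * |x| < 1 + p * x := by
    intro x hx p hp
    rw [hNdef] at hx
    simp only [mem_union, mem_setOf_eq, not_or, not_le] at hx
    obtain ⟨h1, h2⟩ := hx
    rw [Metric.mem_closedBall, Real.dist_eq] at hp
    have hp1 : π - r ≤ p := by cases abs_le.mp hp; linarith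
    have hp2 : p ≤ π + r := by cases abs_le.mp hp; linarith
    rcases le_or_gt 0 x with hx0 | hx0
    · rw [abs_of_nonneg hx0]; nlinarith
    · rw [abs_of_neg hx0]; nlinarith
  -- constants
  obtain ⟨B, hBdef⟩ : ∃ t : ℝ, t = |π| + 2*r + 1 := ⟨_, rfl⟩
  have hB1 : 1 ≤ B := by have := abs_nonneg π; rw [hBdef]; linarith
  have hB0 : 0 < B := by linarith
  have hpB : ∀ p ∈ Metric.closedBall π r, |p| ≤ B := by
    intro p hp
    rw [Metric.mem_closedBall, Real.dist_eq] at hp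
    have h1 : |p| ≤ |π| + |p - π| := by simpa using abs_add_le π (p - π)
    rw [hBdef]; linarith
  obtain ⟨δ, hδdef⟩ : ∃ t : ℝ, t = min δh (1/(2*B)) := ⟨_, rfl⟩
  have hδ0 : 0 < δ := by rw [hδdef]; exact lt_min hδh0 (by positivity)
  have hδB : δ ≤ 1/(2*B) := by rw [hδdef]; exact min_le_right _ _
  have hδh' : δ ≤ δh := by rw [hδdef]; exact min_le_left _ _
  have hδ1 : δ ≤ 1/2 := by
    refine hδB.trans ?_
    rw [div_le_div_iff₀ (by positivity) (by norm_num)]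
    linarith
  have hpxhalf : ∀ x : ℝ, |x| < δ → ∀ p ∈ Metric.closedBall π r, |p * x| ≤ 1/2 := by
    intro x hx p hp
    have h1 : |p * x| ≤ B * |x| := by
      rw [abs_mul]; exact mul_le_mul_of_nonneg_right (hpB p hp) (abs_nonneg x)
    have hxB : |x| * (2*B) ≤ 1 :=
      (le_div_iff₀ (by positivity)).mp (le_of_lt (lt_of_lt_of_le hx hδB))
    nlinarith
  have hhalf : ∀ x : ℝ, |x| < δ → ∀ p ∈ Metric.closedBall π r, 1/2 ≤ 1 + p * x := by
    intro x hx p hp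
    have h1 := hpxhalf x hx p hp
    have h4 := neg_abs_le (p * x)
    linarith
  -- small x bounds
  have hφsmall : ∀ x : ℝ, |x| < δ → ∀ p ∈ Metric.closedBall π r,
      |Real.log (1 + p * x) - p * h x| ≤ 2 * B^2 * x^2 := by
    intro x hx p hp
    have hhx : h x = x := hδh x (lt_of_lt_of_le hx hδh')
    have hpx := hpxhalf x hx p hp
    have hlog := Real.abs_log_sub_add_sum_range_le (x := -(p*x)) (by rw [abs_neg]; linarith) 1
    simp only [Finset.sum_range_one, pow_one, Nat.cast_zero, zero_add, div_one, sub_neg_eq_add,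
      abs_neg] at hlog
    rw [show (1+1) = 2 from rfl] at hlog
    have h1 : |Real.log (1 + p * x) - p * x| = |(-(p*x)) + Real.log (1 + p * x)| := by
      rw [neg_add_eq_sub, abs_sub_comm]
    have h2 : |p*x|^2 / (1 - |p*x|) ≤ 2 * (p*x)^2 := by
      rw [div_le_iff₀ (by linarith)]
      nlinarith [sq_abs (p*x), mul_nonneg (sq_nonneg (p*x)) (by linarith : (0:ℝ) ≤ 1 - 2*|p*x|)]
    have h3 : (p*x)^2 ≤ B^2 * x^2 := by
      have h4 : (p*x)^2 = |p|^2 * x^2 := by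
        rw [← sq_abs (p*x), abs_mul, mul_pow, sq_abs x]
      have h5 : |p|^2 ≤ B^2 := by nlinarith [abs_nonneg p, hpB p hp]
      rw [h4]; exact mul_le_mul_of_nonneg_right h5 (sq_nonneg x)
    rw [hhx, h1]
    calc |(-(p*x)) + Real.log (1 + p * x)| ≤ |p*x|^2 / (1 - |p*x|) := hlog
      _ ≤ 2 * (p*x)^2 := h2
      _ ≤ 2 * B^2 * x^2 := by linarith
  have hψsmall : ∀ x : ℝ, |x| < δ → ∀ p ∈ Metric.closedBall π r,
      |x / (1 + p * x) - h x| ≤ 2 * B * x^2 := by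
    intro x hx p hp
    have hhx : h x = x := hδh x (lt_of_lt_of_le hx hδh')
    have hh2 := hhalf x hx p hp
    have hne : (1 : ℝ) + p * x ≠ 0 := by linarith
    have heq : x / (1 + p * x) - h x = -(p * x^2) / (1 + p * x) := by
      rw [hhx, eq_div_iff hne, sub_mul, div_mul_cancel₀ _ hne]; ring
    rw [heq, abs_div, abs_of_pos (by linarith : (0:ℝ) < 1 + p * x),
      div_le_iff₀ (by linarith : (0:ℝ) < 1 + p * x)]
    have h1 : |(-(p * x^2))| = |p| * x^2 := by
      rw [abs_neg, abs_mul, abs_of_nonneg (sq_nonneg x)]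
    rw [h1]
    nlinarith [mul_le_mul_of_nonneg_right (hpB p hp) (sq_nonneg x),
      mul_le_mul_of_nonneg_left hh2 (by positivity : (0:ℝ) ≤ 2*B*x^2)]
  -- large x bounds
  obtain ⟨m, hmdef⟩ : ∃ t : ℝ, t = r * δ := ⟨_, rfl⟩
  have hm0 : 0 < m := by rw [hmdef]; positivity
  obtain ⟨C₁, hC₁def⟩ : ∃ t : ℝ, t = Real.log (1 + B) + |Real.log m| := ⟨_, rfl⟩
  have hlogB0 : 0 ≤ Real.log (1 + B) := Real.log_nonneg (by linarith)
  have hC₁0 : 0 ≤ C₁ := by rw [hC₁def]; exact add_nonneg hlogB0 (abs_nonneg _)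
  have hind0 : ∀ x : ℝ, 0 ≤ (Ioi (1:ℝ)).indicator (fun x => Real.log (1+x)) x := by
    intro x
    refine indicator_nonneg (fun y hy => Real.log_nonneg ?_) x
    have := mem_Ioi.mp hy; linarith
  have hφlarge : ∀ x ∈ Ioi (-1:ℝ), δ ≤ |x| → ∀ p ∈ Metric.closedBall π r,
      r * |x| < 1 + p * x →
      |Real.log (1 + p * x) - p * h x| ≤
        (C₁ + B * M) + (Ioi (1:ℝ)).indicator (fun x => Real.log (1+x)) x := by
    intro x hx hxδ p hp hrx
    have hm : m < 1 + p * x := by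
      rw [hmdef]
      exact lt_of_le_of_lt (mul_le_mul_of_nonneg_left hxδ hr0.le) hrx
    have hpos' : (0:ℝ) < 1 + p * x := lt_trans hm0 hm
    have hlow : Real.log m ≤ Real.log (1 + p * x) := Real.log_le_log hm0 hm.le
    have hub : Real.log (1 + p * x) ≤
        Real.log (1 + B) + (Ioi (1:ℝ)).indicator (fun x => Real.log (1+x)) x := by
      rcases le_or_gt x 1 with hx1 | hx1
      · rw [indicator_of_notMem (by simpa using hx1)]
        have hxle : |x| ≤ 1 := abs_le.mpr ⟨le_of_lt (mem_Ioi.mp hx), hx1⟩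
        have h5 : 1 + p * x ≤ 1 + B := by
          have h6 : p * x ≤ |p| * |x| := by
            rw [← abs_mul]; exact le_abs_self _
          nlinarith [hpB p hp, abs_nonneg p, abs_nonneg x]
        have := Real.log_le_log hpos' h5
        linarith
      · rw [indicator_of_mem (mem_Ioi.mpr hx1)]
        have h5 : 1 + p * x ≤ (1 + B) * (1 + x) := by
          have h6 : p * x ≤ |p| * x :=
            mul_le_mul_of_nonneg_right (le_abs_self p) (by linarith)
          have h7 : |p| * x ≤ B * x :=
            mul_le_mul_of_nonneg_right (hpB p hp) (by linarith)
          nlinarith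
        calc Real.log (1 + p * x) ≤ Real.log ((1 + B) * (1 + x)) := Real.log_le_log hpos' h5
          _ = Real.log (1 + B) + Real.log (1 + x) :=
            Real.log_mul (by positivity) (by linarith)
    have habs : |Real.log (1 + p * x)| ≤
        C₁ + (Ioi (1:ℝ)).indicator (fun x => Real.log (1+x)) x := by
      rw [abs_le]
      have h7 := neg_abs_le (Real.log m)
      have h8 := hind0 x
      have h9 := abs_nonneg (Real.log m)
      constructor
      · rw [hC₁def]; linarith
      · rw [hC₁def]; linarith
    have hph : |p * h x| ≤ B * M := by
      rw [abs_mul]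
      exact mul_le_mul (hpB p hp) (hM x) (abs_nonneg _) (by linarith)
    calc |Real.log (1 + p * x) - p * h x| ≤ |Real.log (1 + p * x)| + |p * h x| :=
        abs_sub _ _
      _ ≤ (C₁ + B * M) + (Ioi (1:ℝ)).indicator (fun x => Real.log (1+x)) x := by linarith
  have hψlarge : ∀ x : ℝ, δ ≤ |x| → ∀ p : ℝ, r * |x| < 1 + p * x →
      |x / (1 + p * x) - h x| ≤ 1/r + M := by
    intro x hxδ p hrx
    have hx0 : 0 < |x| := lt_of_lt_of_le hδ0 hxδ
    have hpos' : (0:ℝ) < 1 + p * x := lt_of_le_of_lt (by positivity) hrx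
    have h1 : |x / (1 + p * x)| ≤ 1/r := by
      rw [abs_div, abs_of_pos hpos', div_le_div_iff₀ hpos' hr0]
      nlinarith
    calc |x / (1 + p * x) - h x| ≤ |x / (1 + p * x)| + |h x| := abs_sub _ _
      _ ≤ 1/r + M := add_le_add h1 (hM x)
  -- min conversion
  have hminlow : ∀ x : ℝ, δ ≤ |x| → δ^2 ≤ min (x^2) 1 := by
    intro x hxδ
    have h1 : δ^2 ≤ x^2 := by nlinarith [sq_abs x]
    have h2 : δ^2 ≤ 1 := by nlinarith
    exact le_min h1 h2
  have hminsmall : ∀ x : ℝ, |x| < δ → x^2 = min (x^2) 1 := by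
    intro x hx
    refine (min_eq_left ?_).symm
    nlinarith [sq_abs x, abs_nonneg x]
  have hmin0 : ∀ x : ℝ, 0 ≤ min (x^2) 1 := fun x => le_min (sq_nonneg x) zero_le_one
  -- uniform dominating bounds
  obtain ⟨K, hKdef⟩ : ∃ t : ℝ, t = 2*B^2 + (C₁ + B*M)/δ^2 := ⟨_, rfl⟩
  obtain ⟨K', hK'def⟩ : ∃ t : ℝ, t = 2*B + (1/r + M)/δ^2 := ⟨_, rfl⟩
  have hc2 : 0 ≤ (C₁ + B*M)/δ^2 := by positivity
  have hc3 : 0 ≤ (1/r + M)/δ^2 := by positivity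
  have hφbd : ∀ x ∈ Ioi (-1:ℝ), ∀ p ∈ Metric.closedBall π r, r * |x| < 1 + p * x →
      |Real.log (1 + p * x) - p * h x| ≤
        K * min (x^2) 1 + (Ioi (1:ℝ)).indicator (fun x => Real.log (1+x)) x := by
    intro x hx p hp hrx
    rcases lt_or_ge |x| δ with hxδ | hxδ
    · have h1 := hφsmall x hxδ p hp
      rw [hminsmall x hxδ] at h1
      have h8 := hind0 x
      have h9 := mul_nonneg hc2 (hmin0 x)
      rw [hKdef]
      nlinarith [hmin0 x]
    · have h1 := hφlarge x hx hxδ p hp hrx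
      have h2 := hminlow x hxδ
      have h3 : C₁ + B*M ≤ (C₁ + B*M)/δ^2 * min (x^2) 1 := by
        have h4 : (C₁ + B*M)/δ^2 * δ^2 = C₁ + B*M := div_mul_cancel₀ _ (by positivity)
        nlinarith [mul_le_mul_of_nonneg_left h2 hc2]
      rw [hKdef]
      nlinarith [hmin0 x, mul_nonneg (by positivity : (0:ℝ) ≤ 2*B^2) (hmin0 x)]
  have hψbd : ∀ x : ℝ, ∀ p ∈ Metric.closedBall π r, r * |x| < 1 + p * x →
      |x / (1 + p * x) - h x| ≤ K' * min (x^2) 1 := by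
    intro x p hp hrx
    rcases lt_or_ge |x| δ with hxδ | hxδ
    · have h1 := hψsmall x hxδ p hp
      rw [hminsmall x hxδ] at h1
      rw [hK'def]
      nlinarith [hmin0 x]
    · have h1 := hψlarge x hxδ p hrx
      have h2 := hminlow x hxδ
      have h3 : 1/r + M ≤ (1/r + M)/δ^2 * min (x^2) 1 := by
        have h4 : (1/r + M)/δ^2 * δ^2 = 1/r + M := div_mul_cancel₀ _ (by positivity)
        nlinarith [mul_le_mul_of_nonneg_left h2 hc3]
      rw [hK'def]
      nlinarith [mul_nonneg (by positivity : (0:ℝ) ≤ 2*B) (hmin0 x)]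
  -- a.e. facts
  have haeN : ∀ᵐ x ∂(F.restrict (Ioi (-1:ℝ))),
      x ∈ Ioi (-1:ℝ) ∧ ∀ p ∈ Metric.closedBall π r, r * |x| < 1 + p * x := by
    have h1 : F.restrict (Ioi (-1:ℝ)) N = 0 :=
      le_antisymm (le_trans (Measure.restrict_apply_le _ _) hN.le) (zero_le)
    filter_upwards [ae_restrict_mem measurableSet_Ioi,
      measure_eq_zero_iff_ae_notMem.mp h1] with x hx1 hx2
    exact ⟨hx1, hpos x hx2⟩
  have hφmeas : ∀ p : ℝ, AEStronglyMeasurable (fun x => Real.log (1 + p * x) - p * h x)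
      (F.restrict (Ioi (-1:ℝ))) := fun p =>
    ((Real.measurable_log.comp (measurable_const.add (measurable_id.const_mul p))).sub
      (hhm.const_mul p)).aestronglyMeasurable
  have hψmeas : ∀ p : ℝ, AEStronglyMeasurable (fun x => x / (1 + p * x) - h x)
      (F.restrict (Ioi (-1:ℝ))) := fun p =>
    ((measurable_id.div (measurable_const.add (measurable_id.const_mul p))).sub
      hhm).aestronglyMeasurable
  have hΦint : Integrable (fun x => K * min (x^2) 1 +
      (Ioi (1:ℝ)).indicator (fun x => Real.log (1+x)) x) (F.restrict (Ioi (-1:ℝ))) :=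
    (((intMin hFlevy).const_mul K).add
      (hFint.integrable_indicator measurableSet_Ioi)).restrict
  have hφint : ∀ p ∈ Metric.closedBall π r,
      Integrable (fun x => Real.log (1 + p * x) - p * h x) (F.restrict (Ioi (-1:ℝ))) := by
    intro p hp
    refine Integrable.mono' hΦint (hφmeas p) ?_
    filter_upwards [haeN] with x hx
    rw [Real.norm_eq_abs]
    exact hφbd x hx.1 p hp (hx.2 p hp)
  have hK'int : Integrable (fun x => K' * min (x^2) 1) (F.restrict (Ioi (-1:ℝ))) :=
    ((intMin hFlevy).const_mul K').restrict
  have hbound : ∀ᵐ x ∂(F.restrict (Ioi (-1:ℝ))), ∀ p ∈ Metric.ball π r,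
      ‖x / (1 + p * x) - h x‖ ≤ K' * min (x^2) 1 := by
    filter_upwards [haeN] with x hx p hp
    rw [Real.norm_eq_abs]
    exact hψbd x p (Metric.ball_subset_closedBall hp)
      (hx.2 p (Metric.ball_subset_closedBall hp))
  have hdiff : ∀ᵐ x ∂(F.restrict (Ioi (-1:ℝ))), ∀ p ∈ Metric.ball π r,
      HasDerivAt (fun q => Real.log (1 + q * x) - q * h x) (x / (1 + p * x) - h x) p := by
    filter_upwards [haeN] with x hx p hp
    have hp' := Metric.ball_subset_closedBall hp
    have hpos' : (0:ℝ) < 1 + p * x := lt_of_le_of_lt (by positivity) (hx.2 p hp')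
    have h1 : HasDerivAt (fun q : ℝ => 1 + q * x) x p := (hasDerivAt_mul_const x).const_add 1
    have h2 := (Real.hasDerivAt_log (ne_of_gt hpos')).comp p h1
    have h3 := h2.sub (hasDerivAt_mul_const (h x))
    have h4 : (1 + p * x)⁻¹ * x - h x = x / (1 + p * x) - h x := by
      rw [div_eq_inv_mul]
    rw [← h4]
    exact h3
  have hder := hasDerivAt_integral_of_dominated_loc_of_deriv_le
    (F := fun (p : ℝ) x => Real.log (1 + p * x) - p * h x)
    (F' := fun (p : ℝ) x => x / (1 + p * x) - h x)
    (bound := fun x => K' * min (x^2) 1)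
    (Metric.ball_mem_nhds π hr0) (Eventually.of_forall fun p => hφmeas p)
    (hφint π (Metric.mem_closedBall_self hr0.le))
    (hψmeas π) hbound hK'int hdiff
  exact ⟨hφint π (Metric.mem_closedBall_self hr0.le), hder.1, hder.2⟩

set_option maxHeartbeats 1000000 in
theorem stmt2 (b c : ℝ) (hc : 0 ≤ c)
    (F : Measure ℝ)
    (hF0 : F {0} = 0)
    (hFlevy : ∫⁻ x, ENNReal.ofReal (min (x ^ 2) 1) ∂F ≠ ∞)
    (hFneg : F (Iic (-1 : ℝ)) = 0)
    (hFint : IntegrableOn (fun x => Real.log (1 + x)) (Ioi (1 : ℝ)) F)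
    (h : ℝ → ℝ) (hhC1 : ContDiff ℝ 1 h)
    (hhbdd : ∃ M, ∀ x, |h x| ≤ M)
    (hh0 : ∀ᶠ x in 𝓝 (0 : ℝ), h x = x)
    (hhcpt : ∃ R > 0, ∀ x, R < |x| → h x = 0) :
    (∀ π ∈ interior {π : ℝ | F {x | 1 + π * x ≤ 0} = 0},
      IntegrableOn (fun x => Real.log (1 + π * x) - π * h x) (Ioi (-1 : ℝ)) F) ∧
    ContinuousOn
      (fun π => π * b - π ^ 2 * c / 2 +
        ∫ x in Ioi (-1 : ℝ), (Real.log (1 + π * x) - π * h x) ∂F)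
      (interior {π : ℝ | F {x | 1 + π * x ≤ 0} = 0}) ∧
    ConcaveOn ℝ (interior {π : ℝ | F {x | 1 + π * x ≤ 0} = 0})
      (fun π => π * b - π ^ 2 * c / 2 +
        ∫ x in Ioi (-1 : ℝ), (Real.log (1 + π * x) - π * h x) ∂F) ∧
    ∀ π ∈ interior {π : ℝ | F {x | 1 + π * x ≤ 0} = 0},
      IntegrableOn (fun x => x / (1 + π * x) - h x) (Ioi (-1 : ℝ)) F ∧
      HasDerivAt
        (fun π => π * b - π ^ 2 * c / 2 +
          ∫ x in Ioi (-1 : ℝ), (Real.log (1 + π * x) - π * h x) ∂F)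
        (b - π * c + ∫ x in Ioi (-1 : ℝ), (x / (1 + π * x) - h x) ∂F) π := by
  
  obtain ⟨M, hM⟩ := hhbdd
  obtain ⟨δh, hδh0, hδh⟩ : ∃ δ > 0, ∀ x : ℝ, |x| < δ → h x = x := by
    rcases Metric.eventually_nhds_iff.mp hh0 with ⟨ε, hε0, hε⟩
    exact ⟨ε, hε0, fun x hx => hε (by simpa [Real.dist_eq] using hx)⟩
  have hhm : Measurable h := hhC1.continuous.measurable
  have key := fun π hπ => aux_main hF0 hFlevy hFint hhm hM hδh0 hδh (π := π) hπ
  -- convexity of A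
  have hconv : Convex ℝ {π : ℝ | F {x | 1 + π * x ≤ 0} = 0} := by
    intro p hp q hq a a' ha ha' haa
    simp only [mem_setOf_eq] at hp hq ⊢
    refine measure_mono_null ?_ (measure_union_null hp hq)
    intro x hx
    simp only [mem_setOf_eq, mem_union, smul_eq_mul] at hx ⊢
    by_contra hcon
    push_neg at hcon
    obtain ⟨h1, h2⟩ := hcon
    rcases eq_or_lt_of_le ha with ha0 | ha0
    · have ha1 : a' = 1 := by linarith
      rw [← ha0, ha1] at hx
      nlinarith
    · nlinarith [mul_pos ha0 h1, mul_nonneg ha' h2.le]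
  -- derivative at every interior point
  have hg : ∀ π ∈ interior {π : ℝ | F {x | 1 + π * x ≤ 0} = 0},
      HasDerivAt (fun p => p * b - p ^ 2 * c / 2 +
        ∫ x in Ioi (-1 : ℝ), (Real.log (1 + p * x) - p * h x) ∂F)
      (b - π * c + ∫ x in Ioi (-1 : ℝ), (x / (1 + π * x) - h x) ∂F) π := by
    intro π hπ
    have h1 : HasDerivAt (fun p : ℝ => p * b - p ^ 2 * c / 2) (b - π * c) π := by
      have h2 := ((hasDerivAt_id π).mul_const b).sub
        (((hasDerivAt_pow 2 π).mul_const c).div_const 2)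
      refine h2.congr_deriv ?_
      push_cast; ring
    exact h1.add (key π hπ).2.2
  refine ⟨fun π hπ => (key π hπ).1,
    fun π hπ => ((hg π hπ).continuousAt).continuousWithinAt, ?_,
    fun π hπ => ⟨(key π hπ).2.1, hg π hπ⟩⟩
  -- concavity
  refine ⟨hconv.interior, ?_⟩
  intro p hp q hq a a' ha ha' haa
  have ha2 : a' = 1 - a := by linarith
  have hs : a • p + a' • q ∈ interior {π : ℝ | F {x | 1 + π * x ≤ 0} = 0} :=
    hconv.interior hp hq ha ha' haa
  simp only [smul_eq_mul] at hs ⊢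
  have hip := (key p hp).1
  have hiq := (key q hq).1
  have his := (key _ hs).1
  have hps : ∀ᵐ x ∂(F.restrict (Ioi (-1:ℝ))),
      a * (Real.log (1 + p * x) - p * h x) + a' * (Real.log (1 + q * x) - q * h x) ≤
        Real.log (1 + (a * p + a' * q) * x) - (a * p + a' * q) * h x := by
    have hp' : p ∈ {π : ℝ | F {x | 1 + π * x ≤ 0} = 0} := interior_subset hp
    have hq' : q ∈ {π : ℝ | F {x | 1 + π * x ≤ 0} = 0} := interior_subset hq
    rw [mem_setOf_eq] at hp' hq'
    have h1 : F.restrict (Ioi (-1:ℝ)) {x | 1 + p * x ≤ 0} = 0 :=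
      le_antisymm (le_trans (Measure.restrict_apply_le _ _) hp'.le) (zero_le)
    have h2 : F.restrict (Ioi (-1:ℝ)) {x | 1 + q * x ≤ 0} = 0 :=
      le_antisymm (le_trans (Measure.restrict_apply_le _ _) hq'.le) (zero_le)
    filter_upwards [measure_eq_zero_iff_ae_notMem.mp h1, measure_eq_zero_iff_ae_notMem.mp h2]
      with x hx1 hx2
    simp only [mem_setOf_eq, not_le] at hx1 hx2
    have hlog := strictConcaveOn_log_Ioi.concaveOn.2 (mem_Ioi.mpr hx1) (mem_Ioi.mpr hx2)
      ha ha' haa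
    simp only [smul_eq_mul] at hlog
    have harg : a * (1 + p * x) + a' * (1 + q * x) = 1 + (a * p + a' * q) * x := by
      linear_combination haa
    rw [harg] at hlog
    have hre : a * (Real.log (1 + p * x) - p * h x) + a' * (Real.log (1 + q * x) - q * h x)
        = (a * Real.log (1 + p * x) + a' * Real.log (1 + q * x))
          - (a * p + a' * q) * h x := by ring
    rw [hre]
    linarith
  have hint1 : ∫ x in Ioi (-1:ℝ), (a * (Real.log (1 + p * x) - p * h x)
        + a' * (Real.log (1 + q * x) - q * h x)) ∂F ≤
      ∫ x in Ioi (-1:ℝ), (Real.log (1 + (a*p+a'*q) * x) - (a*p+a'*q) * h x) ∂F :=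
    integral_mono_ae ((hip.const_mul a).add (hiq.const_mul a')) his hps
  rw [integral_add (hip.const_mul a) (hiq.const_mul a'),
    integral_const_mul, integral_const_mul] at hint1
  have hquad : (a*p + a'*q)^2 ≤ a*p^2 + a'*q^2 := by
    rw [ha2]
    nlinarith [mul_nonneg (mul_nonneg ha (by linarith : (0:ℝ) ≤ 1 - a)) (sq_nonneg (p - q))]
  have hq2 : (a*p + a'*q)^2 * c ≤ (a*p^2 + a'*q^2) * c := mul_le_mul_of_nonneg_right hquad hc
  linarith [hint1, hq2]
end

section
/- Let p > 0 with p ≠ 1 and let W be a random variable on a probability space with W > 0 almost surely and E[W^{1−p}] < ∞. Define k(π) := E[((1 + π(W−1))^{1−p} − 1)/(1−p)] for π ∈ [0,1]. Then k is finite and concave on [0,1], and k is differentiable at every π ∈ (0,1) with k′(π) = E[(W−1)(1 + π(W−1))^{−p}], where the random variable (W−1)(1 + π(W−1))^{−p} is integrable for every π ∈ (0,1). -/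
open MeasureTheory Set Filter
open scoped ENNReal Topology

lemma convexOn_rpow_neg {q : ℝ} (hq : q < 0) :
    ConvexOn ℝ (Ioi (0:ℝ)) fun x : ℝ => x ^ q := by
  have hint : interior (Ioi (0:ℝ)) = Ioi 0 := isOpen_Ioi.interior_eq
  refine convexOn_of_hasDerivWithinAt2_nonneg (f' := fun x => q * x ^ (q - 1))
    (f'' := fun x => q * ((q - 1) * x ^ (q - 2))) (convex_Ioi 0) ?_ ?_ ?_ ?_
  · intro x hx
    exact (Real.continuousAt_rpow_const x q (Or.inl (ne_of_gt hx))).continuousWithinAt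
  · intro x hx
    rw [hint] at hx ⊢
    exact (Real.hasDerivAt_rpow_const (Or.inl (ne_of_gt hx))).hasDerivWithinAt
  · intro x hx
    rw [hint] at hx ⊢
    have h := (Real.hasDerivAt_rpow_const (p := q - 1) (Or.inl (ne_of_gt hx))).const_mul q
    have : q - 1 - 1 = q - 2 := by ring
    rw [this] at h
    exact h.hasDerivWithinAt
  · intro x hx
    rw [hint] at hx
    have hx' : (0:ℝ) < x ^ (q - 2) := Real.rpow_pos_of_pos hx _
    have h2 : 0 < q * (q - 1) := mul_pos_of_neg_of_neg hq (by linarith)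
    show 0 ≤ q * ((q - 1) * x ^ (q - 2))
    nlinarith

lemma u_concave {p : ℝ} (hp : 0 < p) (hp1 : p ≠ 1) {x y a b : ℝ}
    (hx : 0 < x) (hy : 0 < y) (ha : 0 ≤ a) (hb : 0 ≤ b) (hab : a + b = 1) :
    a * ((x ^ (1 - p) - 1) / (1 - p)) + b * ((y ^ (1 - p) - 1) / (1 - p)) ≤
      ((a * x + b * y) ^ (1 - p) - 1) / (1 - p) := by
  set q := 1 - p with hq
  have hq0 : q ≠ 0 := sub_ne_zero.2 (Ne.symm hp1)
  have hlhs : a * ((x ^ q - 1) / q) + b * ((y ^ q - 1) / q)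
      = (a * x ^ q + b * y ^ q - (a + b)) / q := by ring
  rw [hlhs, hab]
  rcases lt_or_gt_of_ne hq0 with hqneg | hqpos
  · -- q < 0 : x ^ q convex, dividing by q < 0 flips
    have hconv := (convexOn_rpow_neg hqneg).2 (mem_Ioi.2 hx) (mem_Ioi.2 hy) ha hb hab
    simp only [smul_eq_mul] at hconv
    exact div_le_div_of_nonpos_of_le hqneg.le (by linarith)
  · -- 0 < q (< 1) : x ^ q concave
    have hq1 : q ≤ 1 := by simp [hq]; linarith
    have hconc := (Real.concaveOn_rpow hqpos.le hq1).2 (mem_Ici.2 hx.le) (mem_Ici.2 hy.le)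
      ha hb hab
    simp only [smul_eq_mul] at hconc
    exact div_le_div_of_nonneg_right (by linarith) hqpos.le

lemma base_pos {w t : ℝ} (hw : 0 < w) (ht0 : 0 ≤ t) (ht1 : t ≤ 1) :
    0 < 1 + t * (w - 1) := by
  rcases lt_or_eq_of_le ht1 with h | h
  · nlinarith [mul_nonneg ht0 hw.le]
  · subst h; simpa using hw

theorem stmt3 {Ω : Type*} [MeasurableSpace Ω] (μ : Measure Ω) [IsProbabilityMeasure μ]
    (p : ℝ) (hp : 0 < p) (hp1 : p ≠ 1)
    (W : Ω → ℝ) (hWmeas : Measurable W)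
    (hWpos : ∀ᵐ ω ∂μ, 0 < W ω)
    (hWint : Integrable (fun ω => W ω ^ (1 - p)) μ) :
    (∀ π ∈ Icc (0:ℝ) 1,
      Integrable (fun ω => ((1 + π * (W ω - 1)) ^ (1 - p) - 1) / (1 - p)) μ) ∧
    ConcaveOn ℝ (Icc (0:ℝ) 1)
      (fun π => ∫ ω, ((1 + π * (W ω - 1)) ^ (1 - p) - 1) / (1 - p) ∂μ) ∧
    ∀ π ∈ Ioo (0:ℝ) 1,
      Integrable (fun ω => (W ω - 1) * (1 + π * (W ω - 1)) ^ (-p)) μ ∧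
      HasDerivAt (fun π => ∫ ω, ((1 + π * (W ω - 1)) ^ (1 - p) - 1) / (1 - p) ∂μ)
        (∫ ω, (W ω - 1) * (1 + π * (W ω - 1)) ^ (-p) ∂μ) π := by
  have hq0 : (1:ℝ) - p ≠ 0 := sub_ne_zero.2 (Ne.symm hp1)
  have hmeas : ∀ π : ℝ, AEStronglyMeasurable
      (fun ω => ((1 + π * (W ω - 1)) ^ (1 - p) - 1) / (1 - p)) μ := fun π =>
    (show Measurable fun ω => ((1 + π * (W ω - 1)) ^ (1 - p) - 1) / (1 - p)
      by fun_prop).aestronglyMeasurable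
  have hint1 : ∀ π ∈ Icc (0:ℝ) 1,
      Integrable (fun ω => ((1 + π * (W ω - 1)) ^ (1 - p) - 1) / (1 - p)) μ := by
    intro π hπ
    obtain ⟨hπ0, hπ1⟩ := hπ
    refine Integrable.mono' (g := fun ω => (2 + W ω ^ (1 - p)) / |1 - p|)
      (((integrable_const 2).add hWint).div_const _) (hmeas π) ?_
    filter_upwards [hWpos] with ω hW
    have hs_pos : 0 < 1 + π * (W ω - 1) := base_pos hW hπ0 hπ1
    have hWpow : 0 < W ω ^ (1 - p) := Real.rpow_pos_of_pos hW _
    have hkey : (1 + π * (W ω - 1)) ^ (1 - p) ≤ 1 + W ω ^ (1 - p) := by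
      rcases le_total (1:ℝ) (W ω) with h1 | h1
      · have hhi : 1 + π * (W ω - 1) ≤ W ω := by nlinarith
        have hlo : 1 ≤ 1 + π * (W ω - 1) := by nlinarith
        rcases le_or_gt 0 (1 - p) with h2 | h2
        · have := Real.rpow_le_rpow hs_pos.le hhi h2
          linarith
        · have := Real.rpow_le_rpow_of_nonpos one_pos hlo h2.le
          rw [Real.one_rpow] at this
          linarith
      · have hhi : 1 + π * (W ω - 1) ≤ 1 := by
          nlinarith [mul_nonneg hπ0 (sub_nonneg.2 h1)]
        have hlo : W ω ≤ 1 + π * (W ω - 1) := by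
          nlinarith [mul_nonneg (sub_nonneg.2 hπ1) (sub_nonneg.2 h1)]
        rcases le_or_gt 0 (1 - p) with h2 | h2
        · have := Real.rpow_le_rpow hs_pos.le hhi h2
          rw [Real.one_rpow] at this
          linarith
        · have := Real.rpow_le_rpow_of_nonpos hW hlo h2.le
          linarith
    have hs_pow : 0 < (1 + π * (W ω - 1)) ^ (1 - p) := Real.rpow_pos_of_pos hs_pos _
    rw [Real.norm_eq_abs, abs_div, abs_sub_comm]
    apply div_le_div_of_nonneg_right _ (abs_nonneg _)
    rw [abs_le]
    constructor <;> nlinarith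
  refine ⟨hint1, ?_, ?_⟩
  · refine ⟨convex_Icc 0 1, fun x hx y hy a b ha hb hab => ?_⟩
    have hxy : a • x + b • y ∈ Icc (0:ℝ) 1 := (convex_Icc (0:ℝ) 1) hx hy ha hb hab
    simp only [smul_eq_mul] at hxy ⊢
    rw [← integral_const_mul, ← integral_const_mul,
      ← integral_add ((hint1 x hx).const_mul a) ((hint1 y hy).const_mul b)]
    refine integral_mono_ae (((hint1 x hx).const_mul a).add ((hint1 y hy).const_mul b))
      (hint1 _ hxy) ?_
    filter_upwards [hWpos] with ω hW
    obtain ⟨hx0, hx1⟩ := hx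
    obtain ⟨hy0, hy1⟩ := hy
    have h1 : 0 < 1 + x * (W ω - 1) := base_pos hW hx0 hx1
    have h2 : 0 < 1 + y * (W ω - 1) := base_pos hW hy0 hy1
    have hu := u_concave hp hp1 h1 h2 ha hb hab
    have harg : 1 + (a * x + b * y) * (W ω - 1)
        = a * (1 + x * (W ω - 1)) + b * (1 + y * (W ω - 1)) := by
      linear_combination (-1 : ℝ) * hab
    rw [harg]
    exact hu
  · intro π hπ
    obtain ⟨hπ0, hπ1⟩ := hπ
    set ε := min π (1 - π) / 2 with hε
    have hmin1 : min π (1 - π) ≤ π := min_le_left _ _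
    have hmin2 : min π (1 - π) ≤ 1 - π := min_le_right _ _
    have hε_pos : 0 < ε := by
      have : 0 < min π (1 - π) := lt_min hπ0 (by linarith)
      rw [hε]; linarith
    have ha_pos : 0 < π - ε := by rw [hε]; linarith
    have hb_lt : π + ε < 1 := by rw [hε]; linarith
    have hb1 : 0 < 1 - (π + ε) := by linarith
    have hbound_nonneg1 : (0:ℝ) ≤ (π - ε) ^ (-p) := (Real.rpow_pos_of_pos ha_pos _).le
    have hbound_nonneg2 : (0:ℝ) ≤ (1 - (π + ε)) ^ (-p) := (Real.rpow_pos_of_pos hb1 _).le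
    have hball : ∀ x ∈ Metric.ball π ε, π - ε < x ∧ x < π + ε := by
      intro x hx
      rw [Metric.mem_ball, Real.dist_eq, abs_sub_lt_iff] at hx
      constructor <;> linarith [hx.1, hx.2]
    have key := hasDerivAt_integral_of_dominated_loc_of_deriv_le (μ := μ) (𝕜 := ℝ)
      (F := fun x ω => ((1 + x * (W ω - 1)) ^ (1 - p) - 1) / (1 - p))
      (F' := fun x ω => (W ω - 1) * (1 + x * (W ω - 1)) ^ (-p))
      (x₀ := π)
      (bound := fun ω => (π - ε) ^ (-p) * W ω ^ (1 - p) + (1 - (π + ε)) ^ (-p))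
      (Metric.ball_mem_nhds π hε_pos) (Eventually.of_forall fun x => hmeas x) (hint1 π ⟨hπ0.le, hπ1.le⟩)
      ((show Measurable fun ω => (W ω - 1) * (1 + π * (W ω - 1)) ^ (-p)
        by fun_prop).aestronglyMeasurable)
      ?_ ((hWint.const_mul _).add (integrable_const _)) ?_
    · exact key
    · -- bound
      filter_upwards [hWpos] with ω hW
      intro x hx
      obtain ⟨hxl, hxr⟩ := hball x hx
      have hx0 : 0 < x := lt_trans ha_pos hxl
      have hx1 : x < 1 := lt_trans hxr hb_lt
      have hbase : 0 < 1 + x * (W ω - 1) := base_pos hW hx0.le hx1.le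
      have hbase_pow : 0 ≤ (1 + x * (W ω - 1)) ^ (-p) := (Real.rpow_pos_of_pos hbase _).le
      rw [Real.norm_eq_abs, abs_mul, abs_of_nonneg hbase_pow]
      have hWpow_nonneg : (0:ℝ) ≤ W ω ^ (1 - p) := (Real.rpow_pos_of_pos hW _).le
      rcases le_total (1:ℝ) (W ω) with h1 | h1
      · have haW : 0 < (π - ε) * W ω := mul_pos ha_pos hW
        have h2 : (π - ε) * W ω ≤ 1 + x * (W ω - 1) := by
          nlinarith [mul_le_mul_of_nonneg_right hxl.le (sub_nonneg.2 h1)]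
        have h3 : (1 + x * (W ω - 1)) ^ (-p) ≤ ((π - ε) * W ω) ^ (-p) :=
          Real.rpow_le_rpow_of_nonpos haW h2 (neg_nonpos.2 hp.le)
        rw [Real.mul_rpow ha_pos.le hW.le] at h3
        have habs : |W ω - 1| ≤ W ω := by rw [abs_of_nonneg (by linarith)]; linarith
        have hWsplit : W ω * W ω ^ (-p) = W ω ^ (1 - p) := by
          rw [show (1:ℝ) - p = 1 + (-p) by ring, Real.rpow_add hW, Real.rpow_one]
        have step : |W ω - 1| * (1 + x * (W ω - 1)) ^ (-p)
            ≤ W ω * ((π - ε) ^ (-p) * W ω ^ (-p)) :=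
          mul_le_mul habs h3 hbase_pow (by linarith)
        have : W ω * ((π - ε) ^ (-p) * W ω ^ (-p)) = (π - ε) ^ (-p) * W ω ^ (1 - p) := by
          rw [← hWsplit]; ring
        rw [this] at step
        linarith
      · have h2 : 1 - (π + ε) ≤ 1 + x * (W ω - 1) := by
          nlinarith [mul_le_mul_of_nonneg_right hxr.le (sub_nonneg.2 h1),
            mul_nonneg (show (0:ℝ) ≤ π + ε by linarith) hW.le]
        have h3 : (1 + x * (W ω - 1)) ^ (-p) ≤ (1 - (π + ε)) ^ (-p) :=
          Real.rpow_le_rpow_of_nonpos hb1 h2 (neg_nonpos.2 hp.le)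
        have habs : |W ω - 1| ≤ 1 := by rw [abs_of_nonpos (by linarith)]; linarith
        have step : |W ω - 1| * (1 + x * (W ω - 1)) ^ (-p) ≤ 1 * (1 - (π + ε)) ^ (-p) :=
          mul_le_mul habs h3 hbase_pow zero_le_one
        rw [one_mul] at step
        nlinarith [mul_nonneg hbound_nonneg1 hWpow_nonneg]
    · -- differentiability
      filter_upwards [hWpos] with ω hW
      intro x hx
      obtain ⟨hxl, hxr⟩ := hball x hx
      have hx0 : 0 < x := lt_trans ha_pos hxl
      have hx1 : x < 1 := lt_trans hxr hb_lt
      have hbase : 0 < 1 + x * (W ω - 1) := base_pos hW hx0.le hx1.le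
      have hlin : HasDerivAt (fun x : ℝ => 1 + x * (W ω - 1)) (W ω - 1) x := by
        simpa using (hasDerivAt_mul_const (W ω - 1)).const_add (1:ℝ)
      have hpow := (Real.hasDerivAt_rpow_const (p := 1 - p) (Or.inl hbase.ne')).comp x hlin
      have hfull := (hpow.sub_const 1).div_const (1 - p)
      have heq : (1 - p) * (1 + x * (W ω - 1)) ^ (1 - p - 1) * (W ω - 1) / (1 - p)
          = (W ω - 1) * (1 + x * (W ω - 1)) ^ (-p) := by
        rw [show (1:ℝ) - p - 1 = -p by ring]
        field_simp
      rw [heq] at hfull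
      exact hfull
end

section
/- Let η be a Borel measure on ℝ, y₀ ∈ ℝ, and f : ℝ × ℝ → ℝ be such that (i) there is ε > 0 so that for every y with |y − y₀| < ε the function x ↦ f(x,y) is measurable and ∫_ℝ |f(x,y)| dη(x) < ∞, and (ii) for every x ∈ ℝ the function y ↦ f(x,y) is concave and differentiable on ℝ. Then the function k(y) := ∫_ℝ f(x,y) dη(x) is finite and concave on (y₀ − ε, y₀ + ε), the function x ↦ ∂f/∂y(x, y₀) is η-integrable, k is differentiable at y₀, and k′(y₀) = ∫_ℝ ∂f/∂y(x, y₀) dη(x). -/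
open MeasureTheory Set Filter
open scoped ENNReal Topology

theorem stmt4 (η : Measure ℝ) (y₀ ε : ℝ) (hε : 0 < ε) (f : ℝ → ℝ → ℝ)
    (hint : ∀ y, |y - y₀| < ε → Integrable (fun x => f x y) η)
    (hconc : ∀ x : ℝ, ConcaveOn ℝ Set.univ (f x))
    (hdiff : ∀ x : ℝ, Differentiable ℝ (f x)) :
    ConcaveOn ℝ (Ioo (y₀ - ε) (y₀ + ε)) (fun y => ∫ x, f x y ∂η) ∧
    Integrable (fun x => deriv (f x) y₀) η ∧
    HasDerivAt (fun y => ∫ x, f x y ∂η) (∫ x, deriv (f x) y₀ ∂η) y₀ := by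
  have hmem : ∀ y : ℝ, y ∈ Ioo (y₀ - ε) (y₀ + ε) → |y - y₀| < ε := by
    intro y hy
    rw [abs_lt]
    constructor <;> [linarith [hy.1]; linarith [hy.2]]
  -- Concavity part
  have hcc : ConcaveOn ℝ (Ioo (y₀ - ε) (y₀ + ε)) (fun y => ∫ x, f x y ∂η) := by
    refine ⟨convex_Ioo _ _, ?_⟩
    intro y₁ h₁ y₂ h₂ a b ha hb hab
    have hcomb : a • y₁ + b • y₂ ∈ Ioo (y₀ - ε) (y₀ + ε) :=
      (convex_Ioo _ _) h₁ h₂ ha hb hab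
    have i₁ := hint y₁ (hmem _ h₁)
    have i₂ := hint y₂ (hmem _ h₂)
    have ic := hint _ (hmem _ hcomb)
    calc a • ∫ x, f x y₁ ∂η + b • ∫ x, f x y₂ ∂η
        = ∫ x, (a • f x y₁ + b • f x y₂) ∂η := by
          rw [← integral_smul, ← integral_smul]
          exact (integral_add (i₁.smul a) (i₂.smul b)).symm
      _ ≤ ∫ x, f x (a • y₁ + b • y₂) ∂η := by
          apply integral_mono ((i₁.smul a).add (i₂.smul b)) ic
          intro x
          exact (hconc x).2 (mem_univ _) (mem_univ _) ha hb hab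
  refine ⟨hcc, ?_⟩
  -- auxiliary points
  set p₁ : ℝ := y₀ - ε/2 with hp₁
  set p₂ : ℝ := y₀ - ε/4 with hp₂
  set p₃ : ℝ := y₀ + ε/4 with hp₃
  set p₄ : ℝ := y₀ + ε/2 with hp₄
  have int₁ : Integrable (fun x => f x p₁) η := hint _ (by rw [hp₁]; rw [abs_lt]; constructor <;> linarith)
  have int₂ : Integrable (fun x => f x p₂) η := hint _ (by rw [hp₂]; rw [abs_lt]; constructor <;> linarith)
  have int₃ : Integrable (fun x => f x p₃) η := hint _ (by rw [hp₃]; rw [abs_lt]; constructor <;> linarith)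
  have int₄ : Integrable (fun x => f x p₄) η := hint _ (by rw [hp₄]; rw [abs_lt]; constructor <;> linarith)
  have int₀ : Integrable (fun x => f x y₀) η := hint _ (by simpa using hε)
  -- the bound
  set bound : ℝ → ℝ := fun x => |slope (f x) p₁ p₂| + |slope (f x) p₃ p₄| with hbound
  have bound_int : Integrable bound η := by
    have h1 : Integrable (fun x => slope (f x) p₁ p₂) η := by
      have : (fun x => slope (f x) p₁ p₂) = fun x => (p₂ - p₁)⁻¹ * (f x p₂ - f x p₁) := by
        funext x; simp [slope, vsub_eq_sub, smul_eq_mul]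
      rw [this]
      exact (int₂.sub int₁).const_mul _
    have h2 : Integrable (fun x => slope (f x) p₃ p₄) η := by
      have : (fun x => slope (f x) p₃ p₄) = fun x => (p₄ - p₃)⁻¹ * (f x p₄ - f x p₃) := by
        funext x; simp [slope, vsub_eq_sub, smul_eq_mul]
      rw [this]
      exact (int₄.sub int₃).const_mul _
    exact h1.abs.add h2.abs
  -- measurability of the derivative
  have hderiv_meas : AEStronglyMeasurable (fun x => deriv (f x) y₀) η := by
    have hseq : ∀ n : ℕ, AEStronglyMeasurable
        (fun x => (f x (y₀ + ε/(2*(n+1))) - f x y₀) / (ε/(2*(n+1)))) η := by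
      intro n
      have hn : |y₀ + ε/(2*(n+1)) - y₀| < ε := by
        have h1 : (0:ℝ) < 2*((n:ℝ)+1) := by positivity
        have h2 : ε/(2*((n:ℝ)+1)) ≤ ε/2 := by
          apply div_le_div_of_nonneg_left hε.le (by norm_num)
          nlinarith [Nat.cast_nonneg (α := ℝ) n]
        have h3 : (0:ℝ) < ε/(2*((n:ℝ)+1)) := by positivity
        rw [abs_lt]; constructor <;> [linarith; linarith]
      exact (((hint _ hn).sub int₀).div_const _).aestronglyMeasurable
    refine aestronglyMeasurable_of_tendsto_ae atTop hseq ?_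
    filter_upwards with x
    have hd := (hdiff x y₀).hasDerivAt
    have htend : Tendsto (fun n : ℕ => ε/(2*((n:ℝ)+1))) atTop (𝓝[>] 0) := by
      apply tendsto_nhdsWithin_of_tendsto_nhds_of_eventually_within
      · have : Tendsto (fun n : ℕ => 2*((n:ℝ)+1)) atTop atTop := by
          apply Tendsto.const_mul_atTop (by norm_num)
          exact tendsto_atTop_add_const_right _ _ tendsto_natCast_atTop_atTop
        simpa using Tendsto.div_atTop (tendsto_const_nhds (x := ε)) this
      · filter_upwards with n
        have : (0:ℝ) < ε/(2*((n:ℝ)+1)) := by positivity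
        exact this
    have := hd.tendsto_slope_zero_right.comp htend
    convert this using 1
    funext n
    simp only [Function.comp, slope_def_field, div_eq_inv_mul, smul_eq_mul]
  -- apply the dominated differentiation theorem
  have key := hasDerivAt_integral_of_dominated_loc_of_deriv_le
    (μ := η) (F := fun y x => f x y) (F' := fun y x => deriv (f x) y) (x₀ := y₀)
    (bound := bound) (s := Metric.ball y₀ (ε/4)) (Metric.ball_mem_nhds _ (by positivity))
    (by
      have : ∀ᶠ y in 𝓝 y₀, |y - y₀| < ε := by
        have : Ioo (y₀ - ε) (y₀ + ε) ∈ 𝓝 y₀ := by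
          apply Ioo_mem_nhds <;> linarith
        filter_upwards [this] with y hy using hmem y hy
      filter_upwards [this] with y hy using (hint y hy).aestronglyMeasurable)
    int₀ hderiv_meas
    (by
      filter_upwards with x y hy
      rw [Metric.mem_ball, Real.dist_eq, abs_lt] at hy
      have hc := hconc x
      have hd := hdiff x
      -- deriv antitone
      have hanti := hc.antitoneOn_deriv (fun z _ => hd z)
      have h1 : deriv (f x) y ≤ slope (f x) p₁ p₂ := by
        have e1 : deriv (f x) y ≤ deriv (f x) p₂ :=
          hanti (mem_univ _) (mem_univ _) (by rw [hp₂]; linarith)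
        have e2 : deriv (f x) p₂ ≤ slope (f x) p₁ p₂ :=
          hc.deriv_le_slope (mem_univ _) (mem_univ _) (by rw [hp₁, hp₂]; linarith) (hd p₂)
        linarith
      have h2 : slope (f x) p₃ p₄ ≤ deriv (f x) y := by
        have e1 : slope (f x) p₃ p₄ ≤ deriv (f x) p₃ :=
          hc.slope_le_deriv (mem_univ _) (mem_univ _) (by rw [hp₃, hp₄]; linarith) (hd p₃)
        have e2 : deriv (f x) p₃ ≤ deriv (f x) y :=
          hanti (mem_univ _) (mem_univ _) (by rw [hp₃]; linarith)
        linarith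
      have hb' : |deriv (f x) y| ≤ |slope (f x) p₁ p₂| + |slope (f x) p₃ p₄| := by
        rw [abs_le]
        constructor
        · have := neg_abs_le (slope (f x) p₃ p₄)
          have := abs_nonneg (slope (f x) p₁ p₂)
          linarith
        · have := le_abs_self (slope (f x) p₁ p₂)
          have := abs_nonneg (slope (f x) p₃ p₄)
          linarith
      simpa [hbound, Real.norm_eq_abs] using hb')
    bound_int
    (by
      filter_upwards with x y _
      exact (hdiff x y).hasDerivAt)
  exact key
end

section
/- Let c : [0,1] → ℝ be concave and continuous, and let c_n : [0,1] → ℝ be a sequence of concave functions converging pointwise on [0,1] to c. Then c_n converges uniformly on [0,1] to c. -/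
open Set Filter
open scoped Topology

/-- Extrapolation upper bound for concave functions. -/
lemma aux_upper (f : ℝ → ℝ) (hf : ConcaveOn ℝ (Icc 0 1) f) {x y z : ℝ}
    (hx : x ∈ Icc (0:ℝ) 1) (hz : z ∈ Icc (0:ℝ) 1) {θ : ℝ} (h0 : 0 ≤ θ) (h2 : θ ≤ 1/2)
    (hy : y = θ * z + (1 - θ) * x) : f x ≤ f y + max 0 (f y - f z) := by
  have key : θ * f z + (1 - θ) * f x ≤ f y := by
    rw [hy]
    simpa [smul_eq_mul] using hf.2 hz hx h0 (by linarith) (by ring)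
  rcases le_or_gt (f z) (f y) with h | h
  · rw [max_eq_right (by linarith)]
    nlinarith [mul_nonneg (by linarith : (0:ℝ) ≤ 1 - 2*θ) (by linarith : (0:ℝ) ≤ f y - f z)]
  · rw [max_eq_left (by linarith)]
    nlinarith [mul_nonneg h0 (le_of_lt (by linarith : (0:ℝ) < f z - f y))]

theorem stmt8 (c : ℝ → ℝ) (hc : ConcaveOn ℝ (Icc 0 1) c)
    (hcont : ContinuousOn c (Icc 0 1))
    (cn : ℕ → ℝ → ℝ) (hcn : ∀ n, ConcaveOn ℝ (Icc 0 1) (cn n))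
    (hconv : ∀ x ∈ Icc (0:ℝ) 1, Tendsto (fun n => cn n x) atTop (𝓝 (c x))) :
    TendstoUniformlyOn cn c atTop (Icc 0 1) := by
  rw [Metric.tendstoUniformlyOn_iff]
  intro ε hε
  set ε' := ε / 6 with hε'def
  have hε' : 0 < ε' := by positivity
  -- uniform continuity of c
  have hu : UniformContinuousOn c (Icc 0 1) :=
    isCompact_Icc.uniformContinuousOn_of_continuous hcont
  rw [Metric.uniformContinuousOn_iff] at hu
  obtain ⟨δ, hδ, hδc⟩ := hu ε' hε'
  obtain ⟨k, hk⟩ := exists_nat_gt (max 2 (1 / δ))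
  have hk2 : (2:ℝ) < k := lt_of_le_of_lt (le_max_left _ _) hk
  have hkpos : (0:ℝ) < k := by linarith
  have hk2n : 2 ≤ k := by exact_mod_cast hk2.le
  have hkδ : 1 / (k:ℝ) < δ := by
    rw [div_lt_iff₀ hkpos]
    have : 1 / δ < k := lt_of_le_of_lt (le_max_right _ _) hk
    rw [div_lt_iff₀ hδ] at this
    linarith [mul_comm δ (k:ℝ) ▸ this]
  have hk1 : 0 < 1 / (k:ℝ) := by positivity
  set g : ℕ → ℝ := fun j => j / k with hgdef
  have hgmem : ∀ j, j ≤ k → g j ∈ Icc (0:ℝ) 1 := by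
    intro j hj
    constructor
    · positivity
    · rw [div_le_one hkpos]; exact_mod_cast hj
  have hgadj : ∀ j, g (j+1) - g j = 1 / k := by
    intro j
    simp only [hgdef]
    push_cast
    field_simp
    ring
  -- eventually all grid values are close
  have hev : ∀ᶠ n in atTop, ∀ j ∈ Finset.range (k+1), |cn n (g j) - c (g j)| < ε' := by
    rw [eventually_all_finset]
    intro j hj
    have hjk : j ≤ k := by simpa using Nat.lt_succ_iff.mp (Finset.mem_range.mp hj)
    have := (hconv (g j) (hgmem j hjk)).eventually (Metric.ball_mem_nhds _ hε')
    simpa [Real.dist_eq] using this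
  filter_upwards [hev] with n hn x hx
  have hngrid : ∀ j, j ≤ k → |cn n (g j) - c (g j)| < ε' := fun j hj =>
    hn j (Finset.mem_range.mpr (Nat.lt_succ_of_le hj))
  rw [Real.dist_eq]
  -- locate x in a grid cell
  set i : ℕ := min ⌊(k:ℝ) * x⌋₊ (k - 1) with hidef
  have hik : i + 1 ≤ k := by
    have : i ≤ k - 1 := min_le_right _ _
    omega
  have hxlo : g i ≤ x := by
    have h1 : (i:ℝ) ≤ ⌊(k:ℝ) * x⌋₊ := by exact_mod_cast min_le_left _ _
    have h2 : (⌊(k:ℝ) * x⌋₊ : ℝ) ≤ (k:ℝ) * x := Nat.floor_le (mul_nonneg hkpos.le hx.1)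
    rw [hgdef]
    rw [div_le_iff₀ hkpos]
    nlinarith
  have hxhi : x ≤ g (i + 1) := by
    rcases le_or_gt ⌊(k:ℝ) * x⌋₊ (k - 1) with h | h
    · have hieq : i = ⌊(k:ℝ) * x⌋₊ := min_eq_left h
      have := Nat.lt_floor_add_one ((k:ℝ) * x)
      rw [hgdef]
      rw [le_div_iff₀ hkpos]
      push_cast
      rw [hieq]
      push_cast
      nlinarith
    · have hieq : i = k - 1 := min_eq_right h.le
      have : i + 1 = k := by omega
      rw [hgdef, this]
      rw [le_div_iff₀ hkpos]
      nlinarith [hx.2]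
  have hcell : x - g i ≤ 1 / k := by
    have := hgadj i
    linarith
  have hcellpos : 0 ≤ x - g i := by linarith
  -- closeness of c at nearby points
  have hcc : ∀ y z : ℝ, y ∈ Icc (0:ℝ) 1 → z ∈ Icc (0:ℝ) 1 → |y - z| ≤ 1/k →
      |c y - c z| < ε' := by
    intro y z hy hz hyz
    have := hδc y hy z hz (by rw [Real.dist_eq]; linarith)
    rwa [Real.dist_eq] at this
  have hximem : g i ∈ Icc (0:ℝ) 1 := hgmem i (by omega)
  have hxi1mem : g (i+1) ∈ Icc (0:ℝ) 1 := hgmem (i+1) hik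
  have hcxi : |c (g i) - c x| < ε' := hcc _ _ hximem hx (by rw [abs_sub_comm, abs_of_nonneg hcellpos]; linarith)
  have hcxi1 : |c (g (i+1)) - c x| < ε' := by
    refine hcc _ _ hxi1mem hx ?_
    have h1 := hgadj i
    rw [abs_of_nonneg (by linarith)]
    linarith
  have hni : |cn n (g i) - c (g i)| < ε' := hngrid i (by omega)
  have hni1 : |cn n (g (i+1)) - c (g (i+1))| < ε' := hngrid (i+1) hik
  -- lower bound
  have hlow : c x - cn n x < 2 * ε' := by
    have hseg : x ∈ segment ℝ (g i) (g (i+1)) := by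
      rw [segment_eq_Icc (by linarith : g i ≤ g (i+1))]
      exact ⟨hxlo, hxhi⟩
    have hmin : min (cn n (g i)) (cn n (g (i+1))) ≤ cn n x :=
      (hcn n).ge_on_segment hximem hxi1mem hseg
    obtain ⟨a1, a2⟩ := abs_lt.mp hni
    obtain ⟨b1, b2⟩ := abs_lt.mp hni1
    obtain ⟨c1, c2⟩ := abs_lt.mp hcxi
    obtain ⟨d1, d2⟩ := abs_lt.mp hcxi1
    rcases min_cases (cn n (g i)) (cn n (g (i+1))) with ⟨h, _⟩ | ⟨h, _⟩ <;>
      rw [h] at hmin <;> linarith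
  -- upper bound
  have hup : cn n x - c x < 5 * ε' := by
    have key : ∃ y z : ℕ, y ≤ k ∧ z ≤ k ∧ |g y - g z| ≤ 1/k ∧ |g y - x| ≤ 1/k ∧
        cn n x ≤ cn n (g y) + max 0 (cn n (g y) - cn n (g z)) := by
      rcases Nat.eq_zero_or_pos i with hi0 | hipos
      · -- i = 0 : extrapolate from the right using g 1 and g 2
        refine ⟨1, 2, by omega, by omega, ?_, ?_, ?_⟩
        · have h1 := hgadj 1
          rw [abs_sub_comm, abs_of_nonneg (by linarith)]; linarith
        · have hx01 : x ≤ g 1 := by rw [hi0] at hxhi; exact hxhi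
          rw [abs_of_nonneg (by linarith)]
          have hg0 : g 0 = 0 := by simp [hgdef]
          have h0 := hgadj 0
          rw [hi0] at hxlo
          rw [hg0] at h0 hxlo
          linarith
        · set θ : ℝ := (g 1 - x) / (g 2 - x) with hθdef
          have hx01 : x ≤ g 1 := by rw [hi0] at hxhi; exact hxhi
          have h1 := hgadj 1
          have hden : 0 < g 2 - x := by linarith
          have hθ0 : 0 ≤ θ := div_nonneg (by linarith) hden.le
          have hθ2 : θ ≤ 1/2 := by
            rw [hθdef, div_le_div_iff₀ hden (by norm_num)]
            have hg0 : g 0 = 0 := by simp [hgdef]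
            have h0 := hgadj 0
            rw [hi0] at hxlo
            rw [hg0] at h0 hxlo
            linarith
          have hyeq : g 1 = θ * g 2 + (1 - θ) * x := by
            rw [hθdef]
            field_simp
            ring
          exact aux_upper (cn n) (hcn n) hx (hgmem 2 (by omega)) hθ0 hθ2 hyeq
      · -- i ≥ 1 : extrapolate from the left using g i and g (i-1)
        obtain ⟨m, him⟩ : ∃ m, i = m + 1 := ⟨i - 1, by omega⟩
        rw [him] at hxlo hxhi hcell hcellpos hik
        refine ⟨m+1, m, by omega, by omega, ?_, ?_, ?_⟩
        · have h1 := hgadj m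
          rw [abs_of_nonneg (by linarith)]; linarith
        · rw [abs_sub_comm, abs_of_nonneg hcellpos]; exact hcell
        · set θ : ℝ := (x - g (m+1)) / (x - g m) with hθdef
          have h1 := hgadj m
          have hden : 0 < x - g m := by linarith
          have hθ0 : 0 ≤ θ := div_nonneg (by linarith) hden.le
          have hθ2 : θ ≤ 1/2 := by
            rw [hθdef, div_le_div_iff₀ hden (by norm_num)]
            have h2 := hgadj (m+1)
            linarith [hxhi]
          have hyeq : g (m+1) = θ * g m + (1 - θ) * x := by
            rw [hθdef]
            field_simp
            ring
          exact aux_upper (cn n) (hcn n) hx (hgmem m (by omega)) hθ0 hθ2 hyeq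
    obtain ⟨y, z, hy, hz, hyz, hyx, hbd⟩ := key
    have hcy : |c (g y) - c x| < ε' := hcc _ _ (hgmem y hy) hx hyx
    have hcyz : |c (g y) - c (g z)| < ε' := hcc _ _ (hgmem y hy) (hgmem z hz) hyz
    have hny : |cn n (g y) - c (g y)| < ε' := hngrid y hy
    have hnz : |cn n (g z) - c (g z)| < ε' := hngrid z hz
    obtain ⟨a1, a2⟩ := abs_lt.mp hny
    obtain ⟨b1, b2⟩ := abs_lt.mp hnz
    obtain ⟨c1, c2⟩ := abs_lt.mp hcy
    obtain ⟨d1, d2⟩ := abs_lt.mp hcyz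
    have hmax : max 0 (cn n (g y) - cn n (g z)) < 3 * ε' := by
      rcases max_cases 0 (cn n (g y) - cn n (g z)) with ⟨h, _⟩ | ⟨h, _⟩ <;>
        rw [h] <;> linarith
    linarith
  rw [abs_lt]
  rw [hε'def] at hlow hup
  constructor <;> linarith
end

section
/- Let 0 < p_a < p_b, c ≥ 0, and let F be a Lévy measure on ℝ with F((−∞,−1]) = 0 such that ∫_{(1,∞)} x dF(x) < ∞ and ∫_{(1,∞)} (1+x)^{1−q} dF(x) < ∞ for every q ∈ (p_a, p_b). Let A := {π ∈ ℝ : F({x : 1 + πx ≤ 0}) = 0}. Then the functions K(π,p) := ∫_{(−1,∞)} ( x(1+πx)^{−p} − x − p x² (1+πx)^{−1−p} ) dF(x) and M(π,p) := ∫_{(−1,∞)} ( −πx (1+πx)^{−p} log(1+πx) ) dF(x) are well defined (the integrands are F-integrable) and jointly continuous at every (π,p) with π in the interior of A, π ≠ 0, and p ∈ (p_a, p_b). -/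
open MeasureTheory Set Filter
open scoped ENNReal Topology

lemma aux_log_abs_le {m a : ℝ} (hm : 0 < m) (hm1 : m ≤ 1) (ha : m ≤ a) :
    |Real.log a| ≤ |a - 1| / m := by
  have ha0 : 0 < a := lt_of_lt_of_le hm ha
  rcases le_or_gt 1 a with h | h
  · rw [abs_of_nonneg (Real.log_nonneg h), abs_of_nonneg (by linarith)]
    calc Real.log a ≤ a - 1 := Real.log_le_sub_one_of_pos ha0
    _ ≤ (a - 1) / m := by rw [le_div_iff₀ hm]; nlinarith
  · rw [abs_of_nonpos (Real.log_nonpos ha0.le h.le), abs_of_neg (by linarith)]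
    rw [← Real.log_inv, le_div_iff₀ hm]
    have := Real.log_le_sub_one_of_pos (inv_pos.mpr ha0)
    calc Real.log a⁻¹ * m ≤ (a⁻¹ - 1) * m := by nlinarith
    _ ≤ (a⁻¹ - 1) * a := by
        apply mul_le_mul_of_nonneg_left ha
        have : 1 ≤ a⁻¹ := (one_le_inv₀ ha0).mpr h.le
        linarith
    _ = -(a - 1) := by field_simp; ring

lemma aux_rpow_sub_one {p t : ℝ} (hp : 0 ≤ p) (ht : 0 < t)
    (h : |Real.log t| * p ≤ 1) : |t ^ (-p) - 1| ≤ 2 * (|Real.log t| * p) := by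
  rw [Real.rpow_def_of_pos ht]
  have := Real.abs_exp_sub_one_le (x := Real.log t * (-p)) (by
    rw [abs_mul, abs_neg, abs_of_nonneg hp]; exact h)
  calc |Real.exp (Real.log t * (-p)) - 1| ≤ 2 * |Real.log t * (-p)| := this
  _ = 2 * (|Real.log t| * p) := by rw [abs_mul, abs_neg, abs_of_nonneg hp]

lemma aux_rpow_le {m t p P : ℝ} (hm : 0 < m) (hm1 : m ≤ 1) (hmt : m ≤ t)
    (hp : 0 ≤ p) (hpP : p ≤ P) : t ^ (-p) ≤ m ^ (-P) := by
  calc t ^ (-p) ≤ m ^ (-p) := Real.rpow_le_rpow_of_nonpos hm hmt (by linarith)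
  _ ≤ m ^ (-P) := Real.rpow_le_rpow_of_exponent_ge hm hm1 (by linarith)

set_option maxHeartbeats 2000000 in
lemma aux_key (π₀ δ s q1 q2 q3 ε X₀ X₁ m M m₂ r Chalf P Λ r₁ CI CII B₁ B₂ B₃ a b : ℝ)
    (hπne : π₀ ≠ 0)
    (hs_def : s = |π₀|) (hδ : 0 < δ) (hδs : δ ≤ s / 2)
    (hq20 : 0 < q2) (hq2a : q1 < q2) (hq30 : 0 < q3)
    (hε_def : ε = q2 - q1)
    (hX₀_def : X₀ = (s + δ / 2)⁻¹) (hX₁_def : X₁ = max 1 X₀)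
    (hm_def : m = 1 - (s + δ / 4) * X₀) (hM_def : M = 1 + (s + δ / 4) * X₁)
    (hm₂_def : m₂ = min 1 (s - δ / 4))
    (hr_def : r = min ((2 * (s + δ))⁻¹) ((2 * q3 * (s + δ))⁻¹))
    (hCh_def : Chalf = (1 / 2 : ℝ) ^ (-(1 + q3)))
    (hP_def : P = m ^ (-(1 + q3)))
    (hΛ_def : Λ = Real.log M - Real.log m)
    (hr₁_def : r₁ = min (r ^ 2) 1)
    (hCI_def : CI = 4 * q3 * (s + δ) + q3 * Chalf + 2 * Chalf * (s + δ) ^ 2)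
    (hCII_def : CII = X₁ * P + X₁ + q3 * X₁ ^ 2 * P + (s + δ) * X₁ * P * Λ)
    (hB₁_def : B₁ = max 1 (r ^ 2) * CI + CII / r₁)
    (hB₂_def : B₂ = 2 + q3 / (s - δ / 4))
    (hB₃_def : B₃ = (m₂ ^ (1 - q1) + M ^ (1 - q1)) / ε)
    (ha_def : a = π₀ - δ / 2) (hb_def : b = π₀ + δ / 2)
    (π p x : ℝ) (hπl : π₀ - δ / 4 ≤ π) (hπu : π ≤ π₀ + δ / 4)
    (hpl : q2 ≤ p) (hpu : p ≤ q3)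
    (hx : -1 < x) (ha0 : 0 < 1 + (π₀ - δ / 2) * x) (hb0 : 0 < 1 + (π₀ + δ / 2) * x) :
    |x * (1 + π * x) ^ (-p) - x - p * x ^ 2 * (1 + π * x) ^ (-(1 + p))| ≤
      B₁ * min (x ^ 2) 1 +
        (Ioi (1 : ℝ)).indicator (fun x => B₂ * x + B₃ * (1 + x) ^ (1 - q1)) x ∧
    |(-(π * x)) * (1 + π * x) ^ (-p) * Real.log (1 + π * x)| ≤
      B₁ * min (x ^ 2) 1 +
        (Ioi (1 : ℝ)).indicator (fun x => B₂ * x + B₃ * (1 + x) ^ (1 - q1)) x := by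
  have hs : 0 < s := by rw [hs_def]; exact abs_pos.mpr hπne
  have hε : 0 < ε := by rw [hε_def]; linarith
  have hX₀pos : 0 < X₀ := by rw [hX₀_def]; positivity
  have hX₁ : 1 ≤ X₁ := by rw [hX₁_def]; exact le_max_left _ _
  have hX₁pos : 0 < X₁ := lt_of_lt_of_le one_pos hX₁
  have hmpos : 0 < m := by
    have h1 : (s + δ / 4) * X₀ = (s + δ / 4) / (s + δ / 2) := by
      rw [hX₀_def]; ring
    have h2 : (s + δ / 4) / (s + δ / 2) < 1 :=
      (div_lt_one (by positivity)).mpr (by linarith)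
    rw [hm_def, h1]; linarith
  have hm1 : m ≤ 1 := by
    have : 0 ≤ (s + δ / 4) * X₀ := by positivity
    rw [hm_def]; linarith
  have hM1 : 1 ≤ M := by
    have : 0 ≤ (s + δ / 4) * X₁ := by positivity
    rw [hM_def]; linarith
  have hm₂pos : 0 < m₂ := by rw [hm₂_def]; exact lt_min one_pos (by linarith)
  have hm₂1 : m₂ ≤ 1 := by rw [hm₂_def]; exact min_le_left _ _
  have hrpos : 0 < r := by rw [hr_def]; exact lt_min (by positivity) (by positivity)
  have hChpos : 0 < Chalf := by rw [hCh_def]; exact Real.rpow_pos_of_pos (by norm_num) _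
  have hPpos : 0 < P := by rw [hP_def]; exact Real.rpow_pos_of_pos hmpos _
  have hlogm : Real.log m ≤ 0 := Real.log_nonpos hmpos.le hm1
  have hlogM : 0 ≤ Real.log M := Real.log_nonneg hM1
  have hΛ0 : 0 ≤ Λ := by rw [hΛ_def]; linarith
  have hr₁pos : 0 < r₁ := by rw [hr₁_def]; exact lt_min (by positivity) one_pos
  have hCI0 : 0 ≤ CI := by rw [hCI_def]; positivity
  have hCII0 : 0 ≤ CII := by
    rw [hCII_def]
    have h1 : 0 ≤ X₁ * P := by positivity
    have h2 : 0 ≤ q3 * X₁ ^ 2 * P := by positivity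
    have h3 : 0 ≤ (s + δ) * X₁ * P * Λ := mul_nonneg (by positivity) hΛ0
    linarith
  have hB₁0 : 0 ≤ B₁ := by
    rw [hB₁_def]
    have h1 : 0 ≤ max 1 (r ^ 2) * CI := mul_nonneg (le_trans zero_le_one (le_max_left _ _)) hCI0
    have h2 : 0 ≤ CII / r₁ := div_nonneg hCII0 hr₁pos.le
    linarith
  have hB₂0 : 0 ≤ B₂ := by
    rw [hB₂_def]
    have : 0 ≤ q3 / (s - δ / 4) := div_nonneg hq30.le (by linarith)
    linarith
  have hB₃0 : 0 ≤ B₃ := by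
    rw [hB₃_def]
    have h1 : 0 ≤ m₂ ^ (1 - q1) := Real.rpow_nonneg hm₂pos.le _
    have h2 : 0 ≤ M ^ (1 - q1) := Real.rpow_nonneg (by linarith) _
    positivity
  have hind_nonneg : ∀ x : ℝ,
      0 ≤ (Ioi (1 : ℝ)).indicator (fun x => B₂ * x + B₃ * (1 + x) ^ (1 - q1)) x := by
    intro y
    apply Set.indicator_nonneg
    intro z hz
    have hz0 : (0 : ℝ) ≤ z := le_of_lt (lt_trans one_pos hz)
    have h1 : 0 ≤ B₂ * z := mul_nonneg hB₂0 hz0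
    have h2 : 0 ≤ B₃ * (1 + z) ^ (1 - q1) :=
      mul_nonneg hB₃0 (Real.rpow_nonneg (by linarith) _)
    linarith
  have ha' : 0 < 1 + a * x := ha_def ▸ ha0
  have hb' : 0 < 1 + b * x := hb_def ▸ hb0
  have hp0 : 0 ≤ p := le_trans hq20.le hpl
  have hπabs : |π| ≤ s + δ / 4 := by
    have h1 : |π - π₀| ≤ δ / 4 := abs_le.mpr ⟨by linarith, by linarith⟩
    have h2 := abs_sub_abs_le_abs_sub π π₀
    linarith [h1, h2, hs_def.ge, hs_def.le]
  have hlow : m ≤ 1 + π * x := by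
    rcases le_or_gt 0 (π * x) with h | h
    · linarith [hm1]
    · have hxX₀ : |x| ≤ X₀ := by
        rcases hπne.lt_or_gt with hneg | hpos
        · have hsval : s = -π₀ := by rw [hs_def]; exact abs_of_neg hneg
          have hπneg : π < 0 := by linarith [hπu]
          have hxp : 0 < x := by
            by_contra hcon
            push_neg at hcon
            exact absurd (mul_nonneg_of_nonpos_of_nonpos hπneg.le hcon) (not_le.mpr h)
          have hax : (s + δ / 2) * x < 1 := by rw [hsval]; linarith only [ha0]
          rw [abs_of_pos hxp, hX₀_def, ← one_div, le_div_iff₀ (by positivity)]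
          linarith
        · have hsval : s = π₀ := by rw [hs_def]; exact abs_of_pos hpos
          have hπpos : 0 < π := by linarith
          have hxn : x < 0 := by
            by_contra hcon
            push_neg at hcon
            exact absurd (mul_nonneg hπpos.le hcon) (not_le.mpr h)
          have hbx : (s + δ / 2) * (-x) < 1 := by rw [hsval]; linarith only [hb0]
          rw [abs_of_neg hxn, hX₀_def, ← one_div, le_div_iff₀ (by positivity)]
          linarith
      have h4 : |π * x| ≤ (s + δ / 4) * X₀ := by
        rw [abs_mul]; exact mul_le_mul hπabs hxX₀ (abs_nonneg x) (by linarith)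
      have h3 : -(π * x) ≤ (s + δ / 4) * X₀ := le_trans (neg_le_abs (π * x)) h4
      rw [hm_def]; linarith
  have ht0 : 0 < 1 + π * x := lt_of_lt_of_le hmpos hlow
  have hupp : |x| ≤ X₁ → 1 + π * x ≤ M := by
    intro hxx
    have h1 : π * x ≤ |π| * |x| := by rw [← abs_mul]; exact le_abs_self _
    have h2 : |π| * |x| ≤ (s + δ / 4) * X₁ := mul_le_mul hπabs hxx (abs_nonneg x) (by linarith)
    rw [hM_def]; linarith
  have hxabs1 : x ≤ 1 → |x| ≤ X₁ := fun h => abs_le.mpr ⟨by linarith, by linarith⟩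
  have hX₀X₁ : X₀ ≤ X₁ := by rw [hX₁_def]; exact le_max_right _ _
  have hπ₀negX : π₀ < 0 → |x| ≤ X₁ := by
    intro hneg
    rcases le_or_gt x 1 with h | h
    · exact hxabs1 h
    · have hsval : s = -π₀ := by rw [hs_def]; exact abs_of_neg hneg
      have hax : (s + δ / 2) * x < 1 := by rw [hsval]; linarith only [ha0]
      have hxX₀ : x ≤ X₀ := by
        rw [hX₀_def, ← one_div, le_div_iff₀ (by positivity)]
        linarith
      rw [abs_of_pos (lt_trans one_pos h)]
      exact le_trans hxX₀ hX₀X₁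
  rcases le_or_gt |x| r with hxr | hxr
  · -- Region I : |x| ≤ r
    have hπx : |π * x| ≤ (s + δ) * r := by
      rw [abs_mul]; exact mul_le_mul (by linarith) hxr (abs_nonneg x) (by linarith)
    have hrle1 : r ≤ (2 * (s + δ))⁻¹ := by rw [hr_def]; exact min_le_left _ _
    have hrle2 : r ≤ (2 * q3 * (s + δ))⁻¹ := by rw [hr_def]; exact min_le_right _ _
    have hr1 : (s + δ) * r ≤ 1 / 2 := by
      have h := mul_le_mul_of_nonneg_left hrle1 (by linarith : (0:ℝ) ≤ s + δ)
      have he : (s + δ) * (2 * (s + δ))⁻¹ = 1 / 2 := by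
        field_simp
      linarith
    have hr2 : q3 * ((s + δ) * r) ≤ 1 / 2 := by
      have h : q3 * ((s + δ) * r) ≤ q3 * ((s + δ) * (2 * q3 * (s + δ))⁻¹) := by
        apply mul_le_mul_of_nonneg_left (mul_le_mul_of_nonneg_left hrle2 (by linarith)) hq30.le
      have he : q3 * ((s + δ) * (2 * q3 * (s + δ))⁻¹) = 1 / 2 := by
        field_simp
      linarith
    have hth : 1 / 2 ≤ 1 + π * x := by
      have := neg_abs_le (π * x); linarith
    have hlogt : |Real.log (1 + π * x)| ≤ 2 * |π * x| := by
      have h := aux_log_abs_le (m := 1 / 2) (by norm_num) (by norm_num) hth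
      rw [show (1:ℝ) + π * x - 1 = π * x by ring] at h
      calc |Real.log (1 + π * x)| ≤ |π * x| / (1 / 2) := h
      _ = 2 * |π * x| := by ring
    have hlp : |Real.log (1 + π * x)| * p ≤ 1 := by
      have h1 : |Real.log (1 + π * x)| * p ≤ (2 * ((s + δ) * r)) * q3 := by
        apply mul_le_mul _ hpu hp0 (by positivity)
        calc |Real.log (1 + π * x)| ≤ 2 * |π * x| := hlogt
        _ ≤ 2 * ((s + δ) * r) := by linarith
      linarith only [h1, hr2]
    have hrp1 := aux_rpow_sub_one hp0 ht0 hlp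
    have htpC : (1 + π * x) ^ (-p) ≤ Chalf := by
      rw [hCh_def]; exact aux_rpow_le (by norm_num) (by norm_num) hth hp0 (by linarith)
    have ht1pC : (1 + π * x) ^ (-(1 + p)) ≤ Chalf := by
      rw [hCh_def]; exact aux_rpow_le (by norm_num) (by norm_num) hth (by linarith) (by linarith)
    have hx2min : x ^ 2 ≤ max 1 (r ^ 2) * min (x ^ 2) 1 := by
      rcases le_or_gt (x ^ 2) 1 with h | h
      · rw [min_eq_left h]
        calc x ^ 2 = 1 * x ^ 2 := (one_mul _).symm
        _ ≤ max 1 (r ^ 2) * x ^ 2 := mul_le_mul_of_nonneg_right (le_max_left _ _) (sq_nonneg x)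
      · rw [min_eq_right h.le]
        have h2 : x ^ 2 ≤ r ^ 2 := by
          rw [← sq_abs x]; exact pow_le_pow_left₀ (abs_nonneg x) hxr 2
        calc x ^ 2 ≤ r ^ 2 := h2
        _ ≤ max 1 (r ^ 2) * 1 := by rw [mul_one]; exact le_max_right _ _
    have hg : |x * (1 + π * x) ^ (-p) - x - p * x ^ 2 * (1 + π * x) ^ (-(1 + p))| ≤ CI * x ^ 2 := by
      have e1 : x * (1 + π * x) ^ (-p) - x - p * x ^ 2 * (1 + π * x) ^ (-(1 + p))
          = x * ((1 + π * x) ^ (-p) - 1) - p * x ^ 2 * (1 + π * x) ^ (-(1 + p)) := by ring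
      rw [e1]
      have hπxsx : |π * x| ≤ (s + δ) * |x| := by
        rw [abs_mul]; exact mul_le_mul_of_nonneg_right (by linarith) (abs_nonneg x)
      have hA : |x * ((1 + π * x) ^ (-p) - 1)| ≤ 4 * q3 * (s + δ) * x ^ 2 := by
        rw [abs_mul]
        have h1 : |(1 + π * x) ^ (-p) - 1| ≤ 4 * q3 * ((s + δ) * |x|) := by
          calc |(1 + π * x) ^ (-p) - 1| ≤ 2 * (|Real.log (1 + π * x)| * p) := hrp1
          _ ≤ 2 * ((2 * |π * x|) * q3) := by
              apply mul_le_mul_of_nonneg_left _ (by norm_num)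
              exact mul_le_mul hlogt hpu hp0 (by positivity)
          _ ≤ 4 * q3 * ((s + δ) * |x|) := by
              have h5 := mul_le_mul_of_nonneg_left hπxsx hq30.le
              linarith only [h5]
        calc |x| * |(1 + π * x) ^ (-p) - 1| ≤ |x| * (4 * q3 * ((s + δ) * |x|)) :=
            mul_le_mul_of_nonneg_left h1 (abs_nonneg x)
        _ = 4 * q3 * (s + δ) * (|x| * |x|) := by ring
        _ = 4 * q3 * (s + δ) * x ^ 2 := by rw [abs_mul_abs_self]; ring
      have hB : |p * x ^ 2 * (1 + π * x) ^ (-(1 + p))| ≤ q3 * Chalf * x ^ 2 := by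
        rw [abs_mul, abs_mul, abs_of_nonneg hp0, abs_of_nonneg (sq_nonneg x),
          abs_of_nonneg (Real.rpow_nonneg ht0.le _)]
        calc p * x ^ 2 * (1 + π * x) ^ (-(1 + p)) ≤ q3 * x ^ 2 * Chalf := by
              apply mul_le_mul (mul_le_mul hpu le_rfl (sq_nonneg x) hq30.le) ht1pC
                (Real.rpow_nonneg ht0.le _) (by positivity)
        _ = q3 * Chalf * x ^ 2 := by ring
      calc |x * ((1 + π * x) ^ (-p) - 1) - p * x ^ 2 * (1 + π * x) ^ (-(1 + p))|
          ≤ |x * ((1 + π * x) ^ (-p) - 1)| + |p * x ^ 2 * (1 + π * x) ^ (-(1 + p))| :=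
            abs_sub _ _
      _ ≤ 4 * q3 * (s + δ) * x ^ 2 + q3 * Chalf * x ^ 2 := add_le_add hA hB
      _ ≤ CI * x ^ 2 := by
          rw [hCI_def]
          have h9 : 0 ≤ 2 * Chalf * (s + δ) ^ 2 * x ^ 2 :=
            mul_nonneg (mul_nonneg (mul_nonneg (by norm_num) hChpos.le) (sq_nonneg _)) (sq_nonneg _)
          linarith only [h9]
    have hh : |(-(π * x)) * (1 + π * x) ^ (-p) * Real.log (1 + π * x)| ≤ CI * x ^ 2 := by
      rw [abs_mul, abs_mul, abs_neg]
      have h1 : |π * x| ≤ (s + δ) * |x| := by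
        rw [abs_mul]; exact mul_le_mul_of_nonneg_right (by linarith) (abs_nonneg x)
      have h2 : |(1 + π * x) ^ (-p)| ≤ Chalf := by
        rw [abs_of_nonneg (Real.rpow_nonneg ht0.le _)]; exact htpC
      have h3 : |Real.log (1 + π * x)| ≤ 2 * ((s + δ) * |x|) := by linarith
      calc |π * x| * |(1 + π * x) ^ (-p)| * |Real.log (1 + π * x)|
          ≤ ((s + δ) * |x|) * Chalf * (2 * ((s + δ) * |x|)) := by
            apply mul_le_mul (mul_le_mul h1 h2 (abs_nonneg _) (by positivity)) h3 (abs_nonneg _)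
            positivity
      _ = 2 * Chalf * (s + δ) ^ 2 * (|x| * |x|) := by ring
      _ = 2 * Chalf * (s + δ) ^ 2 * x ^ 2 := by rw [abs_mul_abs_self]; ring
      _ ≤ CI * x ^ 2 := by
          rw [hCI_def]
          have h9 : 0 ≤ 4 * q3 * (s + δ) * x ^ 2 :=
            mul_nonneg (mul_nonneg (mul_nonneg (by norm_num) hq30.le) (by linarith)) (sq_nonneg _)
          have h10 : 0 ≤ q3 * Chalf * x ^ 2 :=
            mul_nonneg (mul_nonneg hq30.le hChpos.le) (sq_nonneg _)
          linarith only [h9, h10]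
    have hfin : CI * x ^ 2 ≤ B₁ * min (x ^ 2) 1 + (Ioi (1 : ℝ)).indicator (fun x => B₂ * x + B₃ * (1 + x) ^ (1 - q1)) x := by
      have h1 : CI * x ^ 2 ≤ CI * (max 1 (r ^ 2) * min (x ^ 2) 1) :=
        mul_le_mul_of_nonneg_left hx2min hCI0
      have h2 : max 1 (r ^ 2) * CI * min (x ^ 2) 1 ≤ B₁ * min (x ^ 2) 1 := by
        apply mul_le_mul_of_nonneg_right _ (le_min (sq_nonneg x) zero_le_one)
        rw [hB₁_def]
        have : 0 ≤ CII / r₁ := div_nonneg hCII0 hr₁pos.le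
        linarith
      have h3 := hind_nonneg x
      have h4 : CI * (max 1 (r ^ 2) * min (x ^ 2) 1) = max 1 (r ^ 2) * CI * min (x ^ 2) 1 := by
        ring
      linarith
    exact ⟨le_trans hg hfin, le_trans hh hfin⟩
  · -- Region II / III
    have regII : |x| ≤ X₁ →
        |x * (1 + π * x) ^ (-p) - x - p * x ^ 2 * (1 + π * x) ^ (-(1 + p))| ≤ B₁ * min (x ^ 2) 1 + (Ioi (1 : ℝ)).indicator (fun x => B₂ * x + B₃ * (1 + x) ^ (1 - q1)) x ∧
        |(-(π * x)) * (1 + π * x) ^ (-p) * Real.log (1 + π * x)| ≤ B₁ * min (x ^ 2) 1 + (Ioi (1 : ℝ)).indicator (fun x => B₂ * x + B₃ * (1 + x) ^ (1 - q1)) x := by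
      intro hxX
      have htM : 1 + π * x ≤ M := hupp hxX
      have htpP : (1 + π * x) ^ (-p) ≤ P := by
        rw [hP_def]; exact aux_rpow_le hmpos hm1 hlow hp0 (by linarith)
      have ht1pP : (1 + π * x) ^ (-(1 + p)) ≤ P := by
        rw [hP_def]; exact aux_rpow_le hmpos hm1 hlow (by linarith) (by linarith)
      have hlogtΛ : |Real.log (1 + π * x)| ≤ Λ := by
        rw [abs_le, hΛ_def]
        constructor
        · have := (Real.log_le_log_iff hmpos ht0).mpr hlow
          linarith
        · have := (Real.log_le_log_iff ht0 (by linarith : (0:ℝ) < M)).mpr htM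
          linarith
      have hminr : r₁ ≤ min (x ^ 2) 1 := by
        rw [hr₁_def]
        apply min_le_min _ le_rfl
        rw [← sq_abs x]; exact pow_le_pow_left₀ hrpos.le hxr.le 2
      have hx2X : x ^ 2 ≤ X₁ ^ 2 := by
        rw [← sq_abs x]; exact pow_le_pow_left₀ (abs_nonneg x) hxX 2
      have hg : |x * (1 + π * x) ^ (-p) - x - p * x ^ 2 * (1 + π * x) ^ (-(1 + p))| ≤ CII := by
        have hA : |x * (1 + π * x) ^ (-p)| ≤ X₁ * P := by
          rw [abs_mul, abs_of_nonneg (Real.rpow_nonneg ht0.le _)]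
          exact mul_le_mul hxX htpP (Real.rpow_nonneg ht0.le _) (by positivity)
        have hB : |p * x ^ 2 * (1 + π * x) ^ (-(1 + p))| ≤ q3 * X₁ ^ 2 * P := by
          rw [abs_mul, abs_mul, abs_of_nonneg hp0, abs_of_nonneg (sq_nonneg x),
            abs_of_nonneg (Real.rpow_nonneg ht0.le _)]
          apply mul_le_mul _ ht1pP (Real.rpow_nonneg ht0.le _) (by positivity)
          exact mul_le_mul hpu hx2X (sq_nonneg x) hq30.le
        have hΛterm : 0 ≤ (s + δ) * X₁ * P * Λ := mul_nonneg (by positivity) hΛ0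
        calc |x * (1 + π * x) ^ (-p) - x - p * x ^ 2 * (1 + π * x) ^ (-(1 + p))|
            ≤ |x * (1 + π * x) ^ (-p) - x| + |p * x ^ 2 * (1 + π * x) ^ (-(1 + p))| :=
              abs_sub _ _
        _ ≤ (|x * (1 + π * x) ^ (-p)| + |x|) + |p * x ^ 2 * (1 + π * x) ^ (-(1 + p))| :=
              add_le_add_left (abs_sub _ _) _
        _ ≤ (X₁ * P + X₁) + q3 * X₁ ^ 2 * P := by
              have := add_le_add (add_le_add hA hxX) hB
              linarith
        _ ≤ CII := by rw [hCII_def]; linarith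
      have hh : |(-(π * x)) * (1 + π * x) ^ (-p) * Real.log (1 + π * x)| ≤ CII := by
        rw [abs_mul, abs_mul, abs_neg]
        have h1 : |π * x| ≤ (s + δ) * X₁ := by
          rw [abs_mul]; exact mul_le_mul (by linarith) hxX (abs_nonneg x) (by linarith)
        have h2 : |(1 + π * x) ^ (-p)| ≤ P := by
          rw [abs_of_nonneg (Real.rpow_nonneg ht0.le _)]; exact htpP
        have hXP : 0 ≤ X₁ * P := by positivity
        have hq3P : 0 ≤ q3 * X₁ ^ 2 * P := by positivity
        calc |π * x| * |(1 + π * x) ^ (-p)| * |Real.log (1 + π * x)|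
            ≤ ((s + δ) * X₁) * P * Λ := by
              apply mul_le_mul (mul_le_mul h1 h2 (abs_nonneg _) (by positivity)) hlogtΛ
                (abs_nonneg _) (by positivity)
        _ ≤ CII := by rw [hCII_def]; linarith [hX₁pos]
      have hfin : CII ≤ B₁ * min (x ^ 2) 1 + (Ioi (1 : ℝ)).indicator (fun x => B₂ * x + B₃ * (1 + x) ^ (1 - q1)) x := by
        have h0 : CII / r₁ * r₁ = CII := div_mul_cancel₀ _ hr₁pos.ne'
        have h1 : CII ≤ CII / r₁ * min (x ^ 2) 1 := by
          calc CII = CII / r₁ * r₁ := h0.symm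
          _ ≤ CII / r₁ * min (x ^ 2) 1 :=
              mul_le_mul_of_nonneg_left hminr (div_nonneg hCII0 hr₁pos.le)
        have h2 : CII / r₁ * min (x ^ 2) 1 ≤ B₁ * min (x ^ 2) 1 := by
          apply mul_le_mul_of_nonneg_right _ (le_min (sq_nonneg x) zero_le_one)
          rw [hB₁_def]
          have : 0 ≤ max 1 (r ^ 2) * CI :=
            mul_nonneg (le_trans zero_le_one (le_max_left _ _)) hCI0
          linarith
        have h3 := hind_nonneg x
        linarith
      exact ⟨le_trans hg hfin, le_trans hh hfin⟩
    rcases le_or_gt x 1 with hx1 | hx1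
    · exact regII (hxabs1 hx1)
    rcases hπne.lt_or_gt with hneg | hpos
    · exact regII (hπ₀negX hneg)
    -- Region III : x > 1, π₀ > 0
    have hsval : s = π₀ := by rw [hs_def]; exact abs_of_pos hpos
    have hπge : s - δ / 4 ≤ π := by linarith [hπl]
    have hπge0 : (0:ℝ) < s - δ / 4 := by linarith
    have hx0 : (0:ℝ) < x := lt_trans one_pos hx1
    have hπx0 : 0 ≤ π * x := mul_nonneg (by linarith) hx0.le
    have ht1 : 1 ≤ 1 + π * x := by linarith
    have htp1 : (1 + π * x) ^ (-p) ≤ 1 :=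
      Real.rpow_le_one_of_one_le_of_nonpos ht1 (by linarith)
    have hsx : (0:ℝ) < (s - δ / 4) * x := mul_pos hπge0 hx0
    have htinv : (1 + π * x) ^ (-(1 + p)) ≤ ((s - δ / 4) * x)⁻¹ := by
      calc (1 + π * x) ^ (-(1 + p)) ≤ (1 + π * x) ^ (-(1:ℝ)) :=
          Real.rpow_le_rpow_of_exponent_le ht1 (by linarith)
      _ = (1 + π * x)⁻¹ := Real.rpow_neg_one _
      _ ≤ ((s - δ / 4) * x)⁻¹ := by
          apply inv_anti₀ hsx
          have h5 := mul_le_mul_of_nonneg_right hπge hx0.le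
          linarith only [h5]
    have hg : |x * (1 + π * x) ^ (-p) - x - p * x ^ 2 * (1 + π * x) ^ (-(1 + p))| ≤ B₂ * x := by
      have hA : |x * (1 + π * x) ^ (-p)| ≤ x := by
        rw [abs_mul, abs_of_pos hx0, abs_of_nonneg (Real.rpow_nonneg ht0.le _)]
        have h5 := mul_le_mul_of_nonneg_left htp1 hx0.le
        linarith only [h5]
      have hB : |p * x ^ 2 * (1 + π * x) ^ (-(1 + p))| ≤ q3 / (s - δ / 4) * x := by
        rw [abs_mul, abs_mul, abs_of_nonneg hp0, abs_of_nonneg (sq_nonneg x),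
          abs_of_nonneg (Real.rpow_nonneg ht0.le _)]
        calc p * x ^ 2 * (1 + π * x) ^ (-(1 + p)) ≤ q3 * x ^ 2 * ((s - δ / 4) * x)⁻¹ := by
              apply mul_le_mul (mul_le_mul hpu le_rfl (sq_nonneg x) hq30.le) htinv
                (Real.rpow_nonneg ht0.le _) (by positivity)
        _ = q3 / (s - δ / 4) * x := by
              rw [mul_inv, div_eq_mul_inv]
              have e : x ^ 2 * x⁻¹ = x := by
                rw [sq, mul_assoc, mul_inv_cancel₀ hx0.ne', mul_one]
              calc q3 * x ^ 2 * ((s - δ / 4)⁻¹ * x⁻¹)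
                  = q3 * (s - δ / 4)⁻¹ * (x ^ 2 * x⁻¹) := by ring
              _ = q3 * (s - δ / 4)⁻¹ * x := by rw [e]
      calc |x * (1 + π * x) ^ (-p) - x - p * x ^ 2 * (1 + π * x) ^ (-(1 + p))|
          ≤ |x * (1 + π * x) ^ (-p) - x| + |p * x ^ 2 * (1 + π * x) ^ (-(1 + p))| := abs_sub _ _
      _ ≤ (|x * (1 + π * x) ^ (-p)| + |x|) + |p * x ^ 2 * (1 + π * x) ^ (-(1 + p))| :=
            add_le_add_left (abs_sub _ _) _
      _ ≤ (x + x) + q3 / (s - δ / 4) * x := by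
            rw [abs_of_pos hx0]
            exact add_le_add (add_le_add_left hA _) hB
      _ = B₂ * x := by rw [hB₂_def]; ring
    have hε' : (0:ℝ) ≤ ε⁻¹ := inv_nonneg.mpr hε.le
    have hlogt0 : 0 ≤ Real.log (1 + π * x) := Real.log_nonneg ht1
    have hlt : Real.log (1 + π * x) ≤ ε⁻¹ * (1 + π * x) ^ ε := by
      have h1 : Real.log ((1 + π * x) ^ ε) = ε * Real.log (1 + π * x) := Real.log_rpow ht0 ε
      have h2 : Real.log ((1 + π * x) ^ ε) ≤ (1 + π * x) ^ ε - 1 :=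
        Real.log_le_sub_one_of_pos (Real.rpow_pos_of_pos ht0 ε)
      have h3 : ε * Real.log (1 + π * x) ≤ (1 + π * x) ^ ε := by
        rw [← h1]; linarith
      calc Real.log (1 + π * x) = ε⁻¹ * (ε * Real.log (1 + π * x)) := by field_simp
      _ ≤ ε⁻¹ * (1 + π * x) ^ ε := mul_le_mul_of_nonneg_left h3 hε'
    have hcomb : π * x * (1 + π * x) ^ (-p) * Real.log (1 + π * x)
        ≤ ε⁻¹ * (1 + π * x) ^ (1 - q1) := by
      have hπxt : π * x ≤ 1 + π * x := by linarith
      have e1 : (1 + π * x) ^ ((1:ℝ) + -p + ε)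
          = (1 + π * x) * (1 + π * x) ^ (-p) * (1 + π * x) ^ ε := by
        rw [Real.rpow_add ht0, Real.rpow_add ht0, Real.rpow_one]
      calc π * x * (1 + π * x) ^ (-p) * Real.log (1 + π * x)
          ≤ (1 + π * x) * (1 + π * x) ^ (-p) * (ε⁻¹ * (1 + π * x) ^ ε) := by
            apply mul_le_mul _ hlt hlogt0 _
            · exact mul_le_mul_of_nonneg_right hπxt (Real.rpow_nonneg ht0.le _)
            · exact mul_nonneg ht0.le (Real.rpow_nonneg ht0.le _)
      _ = ε⁻¹ * (1 + π * x) ^ ((1:ℝ) + -p + ε) := by rw [e1]; ring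
      _ ≤ ε⁻¹ * (1 + π * x) ^ (1 - q1) := by
          apply mul_le_mul_of_nonneg_left _ hε'
          apply Real.rpow_le_rpow_of_exponent_le ht1
          rw [hε_def] at *
          linarith [hpl]
    have hm₂t : m₂ * (1 + x) ≤ 1 + π * x := by
      have h2 : m₂ ≤ s - δ / 4 := by rw [hm₂_def]; exact min_le_right _ _
      have h5 := mul_le_mul_of_nonneg_right h2 hx0.le
      have h6 := mul_le_mul_of_nonneg_right hπge hx0.le
      linarith only [h5, h6, hm₂1, hx0.le]
    have hMt : 1 + π * x ≤ M * (1 + x) := by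
      have h1 : π * x ≤ (s + δ / 4) * x := by
        apply mul_le_mul_of_nonneg_right _ hx0.le
        linarith [le_abs_self π, hπabs]
      have hsd : (0:ℝ) ≤ s + δ / 4 := by linarith
      have h3 : (s + δ / 4) * x ≤ (s + δ / 4) * X₁ * x :=
        mul_le_mul_of_nonneg_right (by
          calc s + δ / 4 = (s + δ / 4) * 1 := (mul_one _).symm
          _ ≤ (s + δ / 4) * X₁ := mul_le_mul_of_nonneg_left hX₁ hsd) hx0.le
      have h4 : (0:ℝ) ≤ (s + δ / 4) * X₁ := mul_nonneg hsd (by linarith)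
      rw [hM_def]
      have h5 : (1 + (s + δ / 4) * X₁) * (1 + x) = 1 + x + (s + δ / 4) * X₁ + (s + δ / 4) * X₁ * x := by ring
      rw [h5]
      linarith only [h1, h3, h4, hx0.le]
    have hsplit : (1 + π * x) ^ (1 - q1)
        ≤ (m₂ ^ (1 - q1) + M ^ (1 - q1)) * (1 + x) ^ (1 - q1) := by
      have h1x : (0:ℝ) ≤ 1 + x := by linarith
      have hMpos : (0:ℝ) < M := by linarith
      rcases le_or_gt 0 (1 - q1) with hq | hq
      · calc (1 + π * x) ^ (1 - q1) ≤ (M * (1 + x)) ^ (1 - q1) :=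
            Real.rpow_le_rpow ht0.le hMt hq
        _ = M ^ (1 - q1) * (1 + x) ^ (1 - q1) := Real.mul_rpow hMpos.le h1x
        _ ≤ (m₂ ^ (1 - q1) + M ^ (1 - q1)) * (1 + x) ^ (1 - q1) := by
            apply mul_le_mul_of_nonneg_right _ (Real.rpow_nonneg h1x _)
            linarith [Real.rpow_nonneg hm₂pos.le (1 - q1)]
      · calc (1 + π * x) ^ (1 - q1) ≤ (m₂ * (1 + x)) ^ (1 - q1) :=
            Real.rpow_le_rpow_of_nonpos (mul_pos hm₂pos (by linarith)) hm₂t hq.le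
        _ = m₂ ^ (1 - q1) * (1 + x) ^ (1 - q1) := Real.mul_rpow hm₂pos.le h1x
        _ ≤ (m₂ ^ (1 - q1) + M ^ (1 - q1)) * (1 + x) ^ (1 - q1) := by
            apply mul_le_mul_of_nonneg_right _ (Real.rpow_nonneg h1x _)
            linarith [Real.rpow_nonneg hMpos.le (1 - q1)]
    have hh : |(-(π * x)) * (1 + π * x) ^ (-p) * Real.log (1 + π * x)|
        ≤ B₃ * (1 + x) ^ (1 - q1) := by
      rw [abs_mul, abs_mul, abs_neg, abs_of_nonneg hπx0,
        abs_of_nonneg (Real.rpow_nonneg ht0.le _), abs_of_nonneg hlogt0]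
      calc π * x * (1 + π * x) ^ (-p) * Real.log (1 + π * x)
          ≤ ε⁻¹ * (1 + π * x) ^ (1 - q1) := hcomb
      _ ≤ ε⁻¹ * ((m₂ ^ (1 - q1) + M ^ (1 - q1)) * (1 + x) ^ (1 - q1)) :=
          mul_le_mul_of_nonneg_left hsplit hε'
      _ = B₃ * (1 + x) ^ (1 - q1) := by rw [hB₃_def, div_eq_mul_inv]; ring
    have hboundx : B₁ * min (x ^ 2) 1 + (Ioi (1 : ℝ)).indicator (fun x => B₂ * x + B₃ * (1 + x) ^ (1 - q1)) x = B₁ * min (x ^ 2) 1 + (B₂ * x + B₃ * (1 + x) ^ (1 - q1)) := by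
      rw [indicator_of_mem (mem_Ioi.mpr hx1)]
    have h1 : 0 ≤ B₁ * min (x ^ 2) 1 := mul_nonneg hB₁0 (le_min (sq_nonneg x) zero_le_one)
    constructor
    · rw [hboundx]
      have h2 : 0 ≤ B₃ * (1 + x) ^ (1 - q1) :=
        mul_nonneg hB₃0 (Real.rpow_nonneg (by linarith) _)
      linarith [hg]
    · rw [hboundx]
      have h2 : 0 ≤ B₂ * x := mul_nonneg hB₂0 hx0.le
      linarith [hh]

set_option maxHeartbeats 1000000 in
theorem stmt11 (pa pb c : ℝ) (hpa : 0 < pa) (hab : pa < pb) (hc : 0 ≤ c)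
    (F : Measure ℝ)
    (hF0 : F {0} = 0)
    (hFlevy : ∫⁻ x, ENNReal.ofReal (min (x ^ 2) 1) ∂F ≠ ∞)
    (hFneg : F (Iic (-1 : ℝ)) = 0)
    (hFx : IntegrableOn (fun x => x) (Ioi (1 : ℝ)) F)
    (hFq : ∀ q ∈ Ioo pa pb, IntegrableOn (fun x => (1 + x) ^ (1 - q)) (Ioi (1 : ℝ)) F) :
    ∀ π₀ ∈ interior {π : ℝ | F {x | 1 + π * x ≤ 0} = 0}, π₀ ≠ 0 →
      ∀ p₀ ∈ Ioo pa pb,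
        IntegrableOn
          (fun x => x * (1 + π₀ * x) ^ (-p₀) - x - p₀ * x ^ 2 * (1 + π₀ * x) ^ (-(1 + p₀)))
          (Ioi (-1 : ℝ)) F ∧
        IntegrableOn
          (fun x => -(π₀ * x) * (1 + π₀ * x) ^ (-p₀) * Real.log (1 + π₀ * x))
          (Ioi (-1 : ℝ)) F ∧
        ContinuousAt (fun q : ℝ × ℝ =>
          ∫ x in Ioi (-1 : ℝ),
            (x * (1 + q.1 * x) ^ (-q.2) - x - q.2 * x ^ 2 * (1 + q.1 * x) ^ (-(1 + q.2))) ∂F)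
          (π₀, p₀) ∧
        ContinuousAt (fun q : ℝ × ℝ =>
          ∫ x in Ioi (-1 : ℝ),
            (-(q.1 * x) * (1 + q.1 * x) ^ (-q.2) * Real.log (1 + q.1 * x)) ∂F)
          (π₀, p₀) := by
  intro π₀ hπ₀int hπne p₀ hp₀
  obtain ⟨hpap₀, hp₀pb⟩ := hp₀
  obtain ⟨δ₀, hδ₀, hball⟩ := Metric.mem_nhds_iff.mp (mem_interior_iff_mem_nhds.mp hπ₀int)
  set s : ℝ := |π₀| with hs_def
  have hs : 0 < s := abs_pos.mpr hπne
  set δ : ℝ := min δ₀ s / 2 with hδ_def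
  have hδ : 0 < δ := by
    have : 0 < min δ₀ s := lt_min hδ₀ hs
    positivity
  have hδs : δ ≤ s / 2 := by
    have := min_le_right δ₀ s
    rw [hδ_def]; linarith
  have hδδ₀ : δ < δ₀ := by
    have := min_le_left δ₀ s
    rw [hδ_def]; linarith
  have hmemA : ∀ π : ℝ, |π - π₀| ≤ δ / 2 → F {x | 1 + π * x ≤ 0} = 0 := by
    intro π hπ
    exact hball (by
      simp only [Metric.mem_ball, Real.dist_eq]
      exact lt_of_le_of_lt hπ (by linarith))
  set a : ℝ := π₀ - δ / 2 with ha_def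
  set b : ℝ := π₀ + δ / 2 with hb_def
  have haA : F {x | 1 + a * x ≤ 0} = 0 := hmemA a (by rw [ha_def]; rw [show π₀ - δ/2 - π₀ = -(δ/2) by ring, abs_neg, abs_of_pos (by linarith)])
  have hbA : F {x | 1 + b * x ≤ 0} = 0 := hmemA b (by rw [hb_def]; rw [show π₀ + δ/2 - π₀ = δ/2 by ring, abs_of_pos (by linarith)])
  have hπ₀A : F {x | 1 + π₀ * x ≤ 0} = 0 := hmemA π₀ (by simp; positivity)
  have hae_of : ∀ π : ℝ, F {x | 1 + π * x ≤ 0} = 0 → ∀ᵐ x ∂F, 0 < 1 + π * x := by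
    intro π h
    rw [ae_iff]
    convert h using 2
    ext x; simp [not_lt]
  have haae := hae_of a haA
  have hbae := hae_of b hbA
  have hπ₀ae := hae_of π₀ hπ₀A
  -- p-constants
  set q1 : ℝ := (pa + p₀) / 2 with hq1_def
  set q2 : ℝ := (q1 + p₀) / 2 with hq2_def
  set q3 : ℝ := (p₀ + pb) / 2 with hq3_def
  have hq1a : pa < q1 := by rw [hq1_def]; linarith
  have hq1b : q1 < p₀ := by rw [hq1_def]; linarith
  have hq2a : q1 < q2 := by rw [hq2_def]; linarith
  have hq2b : q2 < p₀ := by rw [hq2_def]; linarith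
  have hq20 : 0 < q2 := by rw [hq2_def]; linarith
  have hq3a : p₀ < q3 := by rw [hq3_def]; linarith
  have hq3b : q3 < pb := by rw [hq3_def]; linarith
  have hq30 : 0 < q3 := by linarith
  set ε : ℝ := q2 - q1 with hε_def
  have hε : 0 < ε := by rw [hε_def]; linarith
  -- geometric constants
  set X₀ : ℝ := (s + δ / 2)⁻¹ with hX₀_def
  have hX₀pos : 0 < X₀ := by rw [hX₀_def]; positivity
  set X₁ : ℝ := max 1 X₀ with hX₁_def
  have hX₁ : 1 ≤ X₁ := le_max_left _ _
  have hX₁pos : 0 < X₁ := lt_of_lt_of_le one_pos hX₁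
  set m : ℝ := 1 - (s + δ / 4) * X₀ with hm_def
  have hmpos : 0 < m := by
    have h1 : (s + δ / 4) * X₀ = (s + δ / 4) / (s + δ / 2) := by
      rw [hX₀_def]; ring
    have h2 : (s + δ / 4) / (s + δ / 2) < 1 :=
      (div_lt_one (by positivity)).mpr (by linarith)
    rw [hm_def, h1]; linarith
  have hm1 : m ≤ 1 := by
    have : 0 ≤ (s + δ / 4) * X₀ := by positivity
    rw [hm_def]; linarith
  set M : ℝ := 1 + (s + δ / 4) * X₁ with hM_def
  have hM1 : 1 ≤ M := by
    have : 0 ≤ (s + δ / 4) * X₁ := by positivity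
    rw [hM_def]; linarith
  set m₂ : ℝ := min 1 (s - δ / 4) with hm₂_def
  have hm₂pos : 0 < m₂ := lt_min one_pos (by linarith)
  have hm₂1 : m₂ ≤ 1 := min_le_left _ _
  set r : ℝ := min ((2 * (s + δ))⁻¹) ((2 * q3 * (s + δ))⁻¹) with hr_def
  have hrpos : 0 < r := lt_min (by positivity) (by positivity)
  set Chalf : ℝ := (1 / 2 : ℝ) ^ (-(1 + q3)) with hCh_def
  have hChpos : 0 < Chalf := Real.rpow_pos_of_pos (by norm_num) _
  set P : ℝ := m ^ (-(1 + q3)) with hP_def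
  have hPpos : 0 < P := Real.rpow_pos_of_pos hmpos _
  set Λ : ℝ := Real.log M - Real.log m with hΛ_def
  have hlogm : Real.log m ≤ 0 := Real.log_nonpos hmpos.le hm1
  have hlogM : 0 ≤ Real.log M := Real.log_nonneg hM1
  have hΛ0 : 0 ≤ Λ := by rw [hΛ_def]; linarith
  set r₁ : ℝ := min (r ^ 2) 1 with hr₁_def
  have hr₁pos : 0 < r₁ := lt_min (by positivity) one_pos
  set CI : ℝ := 4 * q3 * (s + δ) + q3 * Chalf + 2 * Chalf * (s + δ) ^ 2 with hCI_def
  have hCI0 : 0 ≤ CI := by rw [hCI_def]; positivity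
  set CII : ℝ := X₁ * P + X₁ + q3 * X₁ ^ 2 * P + (s + δ) * X₁ * P * Λ with hCII_def
  have hCII0 : 0 ≤ CII := by
    rw [hCII_def]
    have h1 : 0 ≤ X₁ * P := by positivity
    have h2 : 0 ≤ q3 * X₁ ^ 2 * P := by positivity
    have h3 : 0 ≤ (s + δ) * X₁ * P * Λ := by
      apply mul_nonneg _ hΛ0; positivity
    linarith
  set B₁ : ℝ := max 1 (r ^ 2) * CI + CII / r₁ with hB₁_def
  have hB₁0 : 0 ≤ B₁ := by
    rw [hB₁_def]
    have h1 : 0 ≤ max 1 (r ^ 2) * CI := mul_nonneg (le_trans zero_le_one (le_max_left _ _)) hCI0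
    have h2 : 0 ≤ CII / r₁ := div_nonneg hCII0 hr₁pos.le
    linarith
  set B₂ : ℝ := 2 + q3 / (s - δ / 4) with hB₂_def
  have hB₂0 : 0 ≤ B₂ := by
    rw [hB₂_def]
    have : 0 ≤ q3 / (s - δ / 4) := div_nonneg hq30.le (by linarith)
    linarith
  set B₃ : ℝ := (m₂ ^ (1 - q1) + M ^ (1 - q1)) / ε with hB₃_def
  have hB₃0 : 0 ≤ B₃ := by
    rw [hB₃_def]
    have h1 : 0 ≤ m₂ ^ (1 - q1) := Real.rpow_nonneg hm₂pos.le _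
    have h2 : 0 ≤ M ^ (1 - q1) := Real.rpow_nonneg (by linarith) _
    positivity
  set bound : ℝ → ℝ := fun x =>
    B₁ * min (x ^ 2) 1 + (Ioi (1 : ℝ)).indicator (fun x => B₂ * x + B₃ * (1 + x) ^ (1 - q1)) x
    with hbound_def
  have hind_nonneg : ∀ x : ℝ,
      0 ≤ (Ioi (1 : ℝ)).indicator (fun x => B₂ * x + B₃ * (1 + x) ^ (1 - q1)) x := by
    intro x
    apply indicator_nonneg
    intro y hy
    have hy0 : (0 : ℝ) ≤ y := le_of_lt (lt_trans one_pos hy)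
    have h1 : 0 ≤ B₂ * y := mul_nonneg hB₂0 hy0
    have h2 : 0 ≤ B₃ * (1 + y) ^ (1 - q1) :=
      mul_nonneg hB₃0 (Real.rpow_nonneg (by linarith) _)
    linarith
  have hbound_nonneg : ∀ x : ℝ, 0 ≤ bound x := by
    intro x
    have h1 : 0 ≤ B₁ * min (x ^ 2) 1 := by positivity
    have := hind_nonneg x
    simp only [hbound_def]
    linarith
  -- THE KEY POINTWISE BOUND
  have key : ∀ π p x : ℝ, π ∈ Icc (π₀ - δ / 4) (π₀ + δ / 4) → p ∈ Icc q2 q3 →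
      -1 < x → 0 < 1 + a * x → 0 < 1 + b * x →
      |x * (1 + π * x) ^ (-p) - x - p * x ^ 2 * (1 + π * x) ^ (-(1 + p))| ≤ bound x ∧
      |(-(π * x)) * (1 + π * x) ^ (-p) * Real.log (1 + π * x)| ≤ bound x := by
    intro π p x hπK hpK hx ha' hb'
    have h := aux_key π₀ δ s q1 q2 q3 ε X₀ X₁ m M m₂ r Chalf P Λ r₁ CI CII B₁ B₂ B₃ a b
      hπne hs_def hδ hδs hq20 hq2a hq30 hε_def hX₀_def hX₁_def hm_def hM_def
      hm₂_def hr_def hCh_def hP_def hΛ_def hr₁_def hCI_def hCII_def hB₁_def hB₂_def hB₃_def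
      ha_def hb_def π p x hπK.1 hπK.2 hpK.1 hpK.2 hx (ha_def ▸ ha') (hb_def ▸ hb')
    simpa only [hbound_def] using h
  -- measurability
  have hgm : ∀ π p : ℝ, AEStronglyMeasurable
      (fun x => x * (1 + π * x) ^ (-p) - x - p * x ^ 2 * (1 + π * x) ^ (-(1 + p)))
      (F.restrict (Ioi (-1 : ℝ))) := by
    intro π p
    apply Measurable.aestronglyMeasurable
    fun_prop
  have hhm : ∀ π p : ℝ, AEStronglyMeasurable
      (fun x => -(π * x) * (1 + π * x) ^ (-p) * Real.log (1 + π * x))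
      (F.restrict (Ioi (-1 : ℝ))) := by
    intro π p
    apply Measurable.aestronglyMeasurable
    have hlog : Measurable (fun x : ℝ => Real.log (1 + π * x)) :=
      (measurable_const.add (measurable_id.const_mul π)).log
    fun_prop
  -- A.E. hypotheses on the restricted measure
  have hae : ∀ᵐ x ∂(F.restrict (Ioi (-1 : ℝ))),
      -1 < x ∧ 0 < 1 + a * x ∧ 0 < 1 + b * x ∧ 0 < 1 + π₀ * x := by
    have h1 : ∀ᵐ x ∂(F.restrict (Ioi (-1 : ℝ))), x ∈ Ioi (-1 : ℝ) :=
      ae_restrict_mem measurableSet_Ioi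
    have h2 : ∀ᵐ x ∂(F.restrict (Ioi (-1 : ℝ))), 0 < 1 + a * x ∧ 0 < 1 + b * x ∧ 0 < 1 + π₀ * x :=
      ae_restrict_of_ae ((haae.and hbae).and hπ₀ae |>.mono (fun x h => ⟨h.1.1, h.1.2, h.2⟩))
    filter_upwards [h1, h2] with x hx h2
    exact ⟨hx, h2⟩
  -- the bound is integrable
  have hbound_int : Integrable bound (F.restrict (Ioi (-1 : ℝ))) := by
    have hmin_meas : Measurable fun x : ℝ => min (x ^ 2) 1 :=
      (measurable_id.pow_const 2).min measurable_const
    have hmin_int : Integrable (fun x : ℝ => min (x ^ 2) 1) F := by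
      refine ⟨hmin_meas.aestronglyMeasurable, ?_⟩
      rw [hasFiniteIntegral_iff_ofReal (Eventually.of_forall fun x => le_min (sq_nonneg x) zero_le_one)]
      exact lt_top_iff_ne_top.mpr hFlevy
    have h1 : Integrable (fun x : ℝ => B₁ * min (x ^ 2) 1) (F.restrict (Ioi (-1 : ℝ))) :=
      ((hmin_int.const_mul B₁).restrict)
    have h2 : IntegrableOn (fun x : ℝ => B₂ * x + B₃ * (1 + x) ^ (1 - q1)) (Ioi (1 : ℝ)) F := by
      apply Integrable.add
      · exact hFx.const_mul B₂
      · exact (hFq q1 ⟨hq1a, by linarith⟩).const_mul B₃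
    have h3 : Integrable
        ((Ioi (1 : ℝ)).indicator (fun x : ℝ => B₂ * x + B₃ * (1 + x) ^ (1 - q1))) F :=
      h2.integrable_indicator measurableSet_Ioi
    exact h1.add h3.restrict
  -- neighbourhood in the parameter space
  have hnhds : (Icc (π₀ - δ / 4) (π₀ + δ / 4)) ×ˢ (Icc q2 q3) ∈ 𝓝 ((π₀, p₀) : ℝ × ℝ) :=
    prod_mem_nhds (Icc_mem_nhds (by linarith) (by linarith))
      (Icc_mem_nhds hq2b hq3a)
  have hπ₀mem : π₀ ∈ Icc (π₀ - δ / 4) (π₀ + δ / 4) := by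
    constructor <;> [linarith; linarith]
  have hp₀mem : p₀ ∈ Icc q2 q3 := ⟨hq2b.le, hq3a.le⟩
  -- Integrability of the two integrands at (π₀, p₀)
  have hint_g : IntegrableOn
      (fun x => x * (1 + π₀ * x) ^ (-p₀) - x - p₀ * x ^ 2 * (1 + π₀ * x) ^ (-(1 + p₀)))
      (Ioi (-1 : ℝ)) F := by
    apply Integrable.mono hbound_int (hgm π₀ p₀)
    filter_upwards [hae] with x hx
    rw [Real.norm_eq_abs, Real.norm_eq_abs]
    exact le_trans (key π₀ p₀ x hπ₀mem hp₀mem hx.1 hx.2.1 hx.2.2.1).1 (le_abs_self _)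
  have hint_h : IntegrableOn
      (fun x => -(π₀ * x) * (1 + π₀ * x) ^ (-p₀) * Real.log (1 + π₀ * x))
      (Ioi (-1 : ℝ)) F := by
    apply Integrable.mono hbound_int (hhm π₀ p₀)
    filter_upwards [hae] with x hx
    rw [Real.norm_eq_abs, Real.norm_eq_abs]
    exact le_trans (key π₀ p₀ x hπ₀mem hp₀mem hx.1 hx.2.1 hx.2.2.1).2 (le_abs_self _)
  refine ⟨hint_g, hint_h, ?_, ?_⟩
  · -- continuity of the K-integral
    apply continuousAt_of_dominated (bound := bound)
    · exact Eventually.of_forall fun q => hgm q.1 q.2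
    · apply eventually_of_mem hnhds
      rintro ⟨π, p⟩ ⟨hπ, hp⟩
      filter_upwards [hae] with x hx
      rw [Real.norm_eq_abs]
      exact (key π p x hπ hp hx.1 hx.2.1 hx.2.2.1).1
    · exact hbound_int
    · filter_upwards [hae] with x hx
      have hpos : 0 < 1 + π₀ * x := hx.2.2.2
      have c1 : ContinuousAt (fun q : ℝ × ℝ => 1 + q.1 * x) (π₀, p₀) := by fun_prop
      have c2 : ContinuousAt (fun q : ℝ × ℝ => -q.2) (π₀, p₀) := by fun_prop
      have c3 : ContinuousAt (fun q : ℝ × ℝ => -(1 + q.2)) (π₀, p₀) := by fun_prop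
      have r1 := ContinuousAt.rpow c1 c2 (Or.inl hpos.ne')
      have r2 := ContinuousAt.rpow c1 c3 (Or.inl hpos.ne')
      exact ((continuousAt_const.mul r1).sub continuousAt_const).sub
        ((continuousAt_snd.mul continuousAt_const).mul r2)
  · -- continuity of the M-integral
    apply continuousAt_of_dominated (bound := bound)
    · exact Eventually.of_forall fun q => hhm q.1 q.2
    · apply eventually_of_mem hnhds
      rintro ⟨π, p⟩ ⟨hπ, hp⟩
      filter_upwards [hae] with x hx
      rw [Real.norm_eq_abs]
      exact (key π p x hπ hp hx.1 hx.2.1 hx.2.2.1).2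
    · exact hbound_int
    · filter_upwards [hae] with x hx
      have hpos : 0 < 1 + π₀ * x := hx.2.2.2
      have c1 : ContinuousAt (fun q : ℝ × ℝ => 1 + q.1 * x) (π₀, p₀) := by fun_prop
      have c2 : ContinuousAt (fun q : ℝ × ℝ => -q.2) (π₀, p₀) := by fun_prop
      have r1 := ContinuousAt.rpow c1 c2 (Or.inl hpos.ne')
      have clog : ContinuousAt (fun q : ℝ × ℝ => Real.log (1 + q.1 * x)) (π₀, p₀) :=
        ContinuousAt.log c1 hpos.ne'
      exact (((continuousAt_fst.mul continuousAt_const).neg.mul r1).mul clog)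
end

section
/- Let 0 < p_a < p < p_b, b ∈ ℝ, c ≥ 0, and let F be a Lévy measure on ℝ with F((−∞,−1]) = 0 such that ∫_{(1,∞)} x dF(x) < ∞ and ∫_{(1,∞)} (1+x)^{1−q} dF(x) < ∞ for every q ∈ (p_a, p_b). Define G(π,p) := πb − pπ²c + ∫_{(−1,∞)} (πx(1+πx)^{−p} − πx) dF(x). Let π₀ ≠ 0 lie in the interior of A := {π ∈ ℝ : F({x : 1 + πx ≤ 0}) = 0} and suppose G(π₀,p) = 0. Then the map π ↦ G(π,p) is differentiable at π₀ and its derivative equals −pπ₀ ( c + ∫_{(−1,∞)} x² (1+π₀x)^{−p−1} dF(x) ), where the integral is finite; in particular the sign of this derivative is opposite to the sign of π₀ whenever c > 0. -/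
open MeasureTheory Set Filter
open scoped ENNReal Topology

lemma aux_key_s12 (ε π₀ π x : ℝ) (hε : 0 < ε)
    (ha : 0 < 1 + (π₀ - 3*ε/4)*x) (hb : 0 < 1 + (π₀ + 3*ε/4)*x)
    (hπ : |π - π₀| ≤ ε/2) : 1 + π₀*x + 3*ε/4*|x| ≤ 6*(1+π*x) := by
  obtain ⟨h1, h2⟩ := abs_le.mp hπ
  rcases abs_cases x with ⟨hx, hx0⟩ | ⟨hx, hx0⟩ <;> rw [hx]
  · have h3 : (π₀ - ε/2) * x ≤ π * x := mul_le_mul_of_nonneg_right (by linarith) hx0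
    nlinarith
  · have h3 : (π₀ + ε/2) * x ≤ π * x := mul_le_mul_of_nonpos_right (by linarith) (le_of_lt hx0)
    nlinarith

lemma aux_mvt (p δ y : ℝ) (hp : 0 < p) (hδ : 0 < δ) (hδ1 : δ ≤ 1) (hy : δ ≤ 1 + y) :
    |(1+y) ^ (-p) - 1| ≤ p * δ ^ (-p-1) * |y| := by
  have key := Convex.norm_image_sub_le_of_norm_hasDerivWithin_le
    (f := fun z => (1+z) ^ (-p)) (f' := fun z => (0+1) * (-p) * (1+z) ^ (-p-1))
    (s := Ici (δ - 1)) (C := p * δ ^ (-p-1)) (x := 0) (y := y)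
    (fun z hz => by
      have hz' : 0 < 1 + z := by have := mem_Ici.mp hz; linarith
      exact (((hasDerivAt_const z (1:ℝ)).add (hasDerivAt_id z)).rpow_const
        (Or.inl hz'.ne')).hasDerivWithinAt)
    (fun z hz => by
      have hz' : δ ≤ 1 + z := by have := mem_Ici.mp hz; linarith
      have h1 : (1+z) ^ (-p-1) ≤ δ ^ (-p-1) :=
        Real.rpow_le_rpow_of_nonpos hδ hz' (by linarith)
      have h2 : (0:ℝ) ≤ (1+z) ^ (-p-1) := Real.rpow_nonneg (by linarith) _
      rw [Real.norm_eq_abs, abs_mul, abs_mul]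
      rw [abs_of_nonneg h2, abs_of_nonpos (by linarith : -p ≤ (0:ℝ))]
      have : |(0:ℝ)+1| = 1 := by norm_num
      rw [this, one_mul, neg_neg]
      exact mul_le_mul_of_nonneg_left h1 hp.le)
    (convex_Ici _) (by simp; linarith) (by simp; linarith)
  simp only [Real.norm_eq_abs, add_zero, sub_zero, Real.one_rpow] at key
  exact key

lemma aux_arith (E E1 X w x t : ℝ)
    (ht : t ≤ E*X + E1*X + w*(E*X) + w*(E1*X) + x) : t ≤ (1 + w) * (E + E1) * X + x := by
  have h : (1+w)*(E+E1)*X + x = E*X + E1*X + w*(E*X) + w*(E1*X) + x := by ring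
  linarith

noncomputable def phiD (p : ℝ) (π x : ℝ) : ℝ :=
  x * (1 + π * x) ^ (-p) - x - p * π * (x ^ 2 * (1 + π * x) ^ (-p - 1))

noncomputable def myBound (C₁ C₂ p : ℝ) (x : ℝ) : ℝ :=
  if |x| ≤ 1 then C₁ * x ^ 2 else C₂ * x ^ (1-p) + x

set_option maxHeartbeats 1000000 in
theorem stmt12 (pa pb p b c : ℝ) (hpa : 0 < pa) (hpap : pa < p) (hppb : p < pb) (hc : 0 ≤ c)
    (F : Measure ℝ)
    (hF0 : F {0} = 0)
    (hFlevy : ∫⁻ x, ENNReal.ofReal (min (x ^ 2) 1) ∂F ≠ ∞)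
    (hFneg : F (Iic (-1 : ℝ)) = 0)
    (hFx : IntegrableOn (fun x => x) (Ioi (1 : ℝ)) F)
    (hFq : ∀ q ∈ Ioo pa pb, IntegrableOn (fun x => (1 + x) ^ (1 - q)) (Ioi (1 : ℝ)) F)
    (π₀ : ℝ) (hπ₀ : π₀ ∈ interior {π : ℝ | F {x | 1 + π * x ≤ 0} = 0}) (hπ₀ne : π₀ ≠ 0)
    (hG0 : π₀ * b - p * π₀ ^ 2 * c +
      ∫ x in Ioi (-1 : ℝ), (π₀ * x * (1 + π₀ * x) ^ (-p) - π₀ * x) ∂F = 0) :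
    IntegrableOn (fun x => x ^ 2 * (1 + π₀ * x) ^ (-p - 1)) (Ioi (-1 : ℝ)) F ∧
    HasDerivAt
      (fun π => π * b - p * π ^ 2 * c +
        ∫ x in Ioi (-1 : ℝ), (π * x * (1 + π * x) ^ (-p) - π * x) ∂F)
      (-(p * π₀) * (c + ∫ x in Ioi (-1 : ℝ), x ^ 2 * (1 + π₀ * x) ^ (-p - 1) ∂F)) π₀ ∧
    (0 < c →
      (0 < π₀ →
        -(p * π₀) * (c + ∫ x in Ioi (-1 : ℝ), x ^ 2 * (1 + π₀ * x) ^ (-p - 1) ∂F) < 0) ∧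
      (π₀ < 0 →
        0 < -(p * π₀) * (c + ∫ x in Ioi (-1 : ℝ), x ^ 2 * (1 + π₀ * x) ^ (-p - 1) ∂F))) := by
  have hp : 0 < p := hpa.trans hpap
  have hπ₀abs : 0 < |π₀| := abs_pos.mpr hπ₀ne
  -- a ball inside A
  obtain ⟨ε, hεpos, hball⟩ : ∃ ε > 0, Metric.ball π₀ ε ⊆ {π : ℝ | F {x | 1 + π * x ≤ 0} = 0} :=
    Metric.mem_nhds_iff.mp (mem_interior_iff_mem_nhds.mp hπ₀)
  have hπ₀A : F {x | 1 + π₀ * x ≤ 0} = 0 := hball (Metric.mem_ball_self hεpos)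
  have hl : F {x | 1 + (π₀ - 3*ε/4) * x ≤ 0} = 0 := by
    apply hball; rw [Metric.mem_ball, Real.dist_eq]
    rw [show π₀ - 3*ε/4 - π₀ = -(3*ε/4) by ring, abs_neg, abs_of_pos (by linarith)]; linarith
  have hr : F {x | 1 + (π₀ + 3*ε/4) * x ≤ 0} = 0 := by
    apply hball; rw [Metric.mem_ball, Real.dist_eq]
    rw [show π₀ + 3*ε/4 - π₀ = 3*ε/4 by ring, abs_of_pos (by linarith)]; linarith
  -- the a.e. positivity
  have haeF : ∀ᵐ x ∂F, 0 < 1 + (π₀ - 3*ε/4)*x ∧ 0 < 1 + (π₀ + 3*ε/4)*x ∧ 0 < 1 + π₀*x := by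
    have e1 : ∀ᵐ x ∂F, 0 < 1 + (π₀ - 3*ε/4)*x := by
      rw [ae_iff]; simpa [not_lt] using hl
    have e2 : ∀ᵐ x ∂F, 0 < 1 + (π₀ + 3*ε/4)*x := by
      rw [ae_iff]; simpa [not_lt] using hr
    have e3 : ∀ᵐ x ∂F, 0 < 1 + π₀*x := by
      rw [ae_iff]; simpa [not_lt] using hπ₀A
    filter_upwards [e1, e2, e3] with x h1 h2 h3; exact ⟨h1, h2, h3⟩
  have hae : ∀ᵐ x ∂F.restrict (Ioi (-1:ℝ)),
      0 < 1 + (π₀ - 3*ε/4)*x ∧ 0 < 1 + (π₀ + 3*ε/4)*x ∧ 0 < 1 + π₀*x :=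
    haeF.filter_mono (ae_mono Measure.restrict_le_self)
  -- constants
  set M : ℝ := |π₀| + ε with hM_def
  set δ : ℝ := min (1/2) (3*ε/(8*|π₀|)) / 6 with hδ_def
  have hδpos : 0 < δ := by
    have : 0 < 3*ε/(8*|π₀|) := by positivity
    have := lt_min (by norm_num : (0:ℝ) < 1/2) this
    rw [hδ_def]; linarith
  have hδ1 : δ ≤ 1 := by
    have := min_le_left (1/2 : ℝ) (3*ε/(8*|π₀|))
    rw [hδ_def]; linarith
  have hMpos : 0 < M := by rw [hM_def]; linarith
  have hπM : ∀ π ∈ Metric.ball π₀ (ε/2), |π| ≤ M := by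
    intro π hπ
    rw [Metric.mem_ball, Real.dist_eq] at hπ
    calc |π| = |π₀ + (π - π₀)| := by ring_nf
      _ ≤ |π₀| + |π - π₀| := abs_add_le _ _
      _ ≤ M := by rw [hM_def]; linarith
  -- lower bounds on 1 + π x
  have hlow : ∀ x : ℝ, 0 < 1 + (π₀ - 3*ε/4)*x → 0 < 1 + (π₀ + 3*ε/4)*x → 0 < 1 + π₀*x →
      ∀ π ∈ Metric.ball π₀ (ε/2), δ ≤ 1 + π*x ∧ ε/8*|x| ≤ 1 + π*x := by
    intro x h1 h2 h3 π hπ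
    rw [Metric.mem_ball, Real.dist_eq] at hπ
    have hkey := aux_key_s12 ε π₀ π x hεpos h1 h2 hπ.le
    have habs : 0 ≤ |x| := abs_nonneg x
    constructor
    · rcases le_or_gt (|x|) (1/(2*|π₀|)) with h | h
      · have hb1 : |π₀ * x| ≤ 1/2 := by
          rw [abs_mul]
          calc |π₀| * |x| ≤ |π₀| * (1/(2*|π₀|)) := mul_le_mul_of_nonneg_left h hπ₀abs.le
            _ = 1/2 := by field_simp
        have hb2 : -(1/2 : ℝ) ≤ π₀ * x := by
          have := neg_abs_le (π₀ * x); linarith [abs_le.mp hb1]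
        have hmin : min (1/2) (3*ε/(8*|π₀|)) ≤ 1/2 := min_le_left _ _
        rw [hδ_def]; nlinarith
      · have hb1 : 3*ε/(8*|π₀|) ≤ 3*ε/4*|x| := by
          have h2' := mul_le_mul_of_nonneg_left h.le (by positivity : (0:ℝ) ≤ 3*ε/4)
          calc 3*ε/(8*|π₀|) = 3*ε/4 * (1/(2*|π₀|)) := by field_simp; ring
            _ ≤ 3*ε/4*|x| := h2'
        have hmin : min (1/2) (3*ε/(8*|π₀|)) ≤ 3*ε/(8*|π₀|) := min_le_right _ _
        rw [hδ_def]; nlinarith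
    · nlinarith
  -- abbreviations
  obtain ⟨C₁, hC₁_def⟩ : ∃ C₁ : ℝ, C₁ = (1 + 2*p*M) * δ ^ (-p-1) := ⟨_, rfl⟩
  obtain ⟨C₂, hC₂_def⟩ : ∃ C₂ : ℝ, C₂ = (1 + p*M) * ((ε/8) ^ (-p) + (ε/8) ^ (-p-1)) := ⟨_, rfl⟩
  have hδ'pos : (0:ℝ) < δ ^ (-p-1) := Real.rpow_pos_of_pos hδpos _
  have hε8 : (0:ℝ) < ε/8 := by linarith
  have hεp : (0:ℝ) < (ε/8) ^ (-p) := Real.rpow_pos_of_pos hε8 _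
  have hεp1 : (0:ℝ) < (ε/8) ^ (-p-1) := Real.rpow_pos_of_pos hε8 _
  -- the big a.e. bundle
  have hmain : ∀ᵐ x ∂F.restrict (Ioi (-1:ℝ)),
      (∀ π ∈ Metric.ball π₀ (ε/2), |phiD p π x| ≤ myBound C₁ C₂ p x) ∧
      |x * (1 + π₀ * x) ^ (-p) - x| ≤ myBound C₁ C₂ p x ∧
      |x ^ 2 * (1 + π₀ * x) ^ (-p - 1)| ≤ myBound C₁ C₂ p x ∧
      (∀ π ∈ Metric.ball π₀ (ε/2),
        HasDerivAt (fun π => π * x * (1 + π * x) ^ (-p) - π * x) (phiD p π x) π) ∧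
      0 ≤ x ^ 2 * (1 + π₀ * x) ^ (-p - 1) := by
    filter_upwards [hae, ae_restrict_mem measurableSet_Ioi] with x hx hxI
    obtain ⟨h1, h2, h3⟩ := hx
    have hπ₀ball : π₀ ∈ Metric.ball π₀ (ε/2) := Metric.mem_ball_self (by linarith)
    have hxsq : (0:ℝ) ≤ x ^ 2 := sq_nonneg x
    -- per-π bounds
    have hT : ∀ π ∈ Metric.ball π₀ (ε/2),
        |x * ((1 + π*x) ^ (-p) - 1)| ≤ p * M * δ ^ (-p-1) * x ^ 2 ∧
        x ^ 2 * (1 + π*x) ^ (-p-1) ≤ δ ^ (-p-1) * x ^ 2 ∧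
        0 ≤ (1 + π*x) ^ (-p) ∧ 0 ≤ x ^ 2 * (1 + π*x) ^ (-p-1) := by
      intro π hπ
      obtain ⟨hδle, hgrow⟩ := hlow x h1 h2 h3 π hπ
      have hπpos : 0 < 1 + π*x := lt_of_lt_of_le hδpos hδle
      have hmvt := aux_mvt p δ (π*x) hp hδpos hδ1 (by linarith)
      have hπM' := hπM π hπ
      have hMx : |π * x| ≤ M * |x| := by
        rw [abs_mul]; exact mul_le_mul_of_nonneg_right hπM' (abs_nonneg x)
      refine ⟨?_, ?_, Real.rpow_nonneg hπpos.le _, mul_nonneg hxsq (Real.rpow_nonneg hπpos.le _)⟩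
      · rw [abs_mul]
        calc |x| * |(1 + π*x) ^ (-p) - 1| ≤ |x| * (p * δ ^ (-p-1) * |π * x|) :=
              mul_le_mul_of_nonneg_left hmvt (abs_nonneg x)
          _ ≤ |x| * (p * δ ^ (-p-1) * (M * |x|)) := by
              apply mul_le_mul_of_nonneg_left _ (abs_nonneg x)
              exact mul_le_mul_of_nonneg_left hMx (by positivity)
          _ = p * M * δ ^ (-p-1) * (|x| * |x|) := by ring
          _ = p * M * δ ^ (-p-1) * x ^ 2 := by rw [abs_mul_abs_self, ← sq]
      · have := Real.rpow_le_rpow_of_nonpos hδpos hδle (by linarith : -p-1 ≤ (0:ℝ))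
        calc x ^ 2 * (1 + π*x) ^ (-p-1) ≤ x ^ 2 * δ ^ (-p-1) :=
              mul_le_mul_of_nonneg_left this hxsq
          _ = δ ^ (-p-1) * x ^ 2 := by ring
    have hg2nn : 0 ≤ x ^ 2 * (1 + π₀ * x) ^ (-p - 1) := (hT π₀ hπ₀ball).2.2.2
    have hDD : ∀ π ∈ Metric.ball π₀ (ε/2),
        HasDerivAt (fun π => π * x * (1 + π * x) ^ (-p) - π * x) (phiD p π x) π := by
      intro π hπ
      obtain ⟨hδle, _⟩ := hlow x h1 h2 h3 π hπ
      have hπpos : 0 < 1 + π*x := lt_of_lt_of_le hδpos hδle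
      have h0 : HasDerivAt (fun π : ℝ => 1 + π * x) (1 * x) π :=
        ((hasDerivAt_id π).mul_const x).const_add 1
      have hpow := h0.rpow_const (p := -p) (Or.inl hπpos.ne')
      have hmul := ((hasDerivAt_id π).mul_const x).mul hpow
      have hfin := hmul.sub ((hasDerivAt_id π).mul_const x)
      exact hfin.congr_deriv (by simp only [phiD, id_eq]; ring)
    rcases le_or_gt (|x|) 1 with hx1 | hx1
    · -- small x
      have hbx : myBound C₁ C₂ p x = C₁ * x ^ 2 := if_pos hx1
      have hbd : ∀ π ∈ Metric.ball π₀ (ε/2), |phiD p π x| ≤ myBound C₁ C₂ p x := by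
        intro π hπ
        obtain ⟨hT1, hT2, _, hT4⟩ := hT π hπ
        have hπM' := hπM π hπ
        have habsπ : -M ≤ π ∧ π ≤ M := abs_le.mp hπM'
        have key : |phiD p π x| ≤ p * M * δ ^ (-p-1) * x ^ 2 + p * M * (δ ^ (-p-1) * x ^ 2) := by
          have hrw : phiD p π x = x * ((1 + π*x) ^ (-p) - 1) - p * π * (x ^ 2 * (1 + π*x) ^ (-p-1)) := by
            rw [phiD]; ring
          rw [hrw]
          have htri := abs_sub (x * ((1 + π*x) ^ (-p) - 1)) (p * π * (x ^ 2 * (1 + π*x) ^ (-p-1)))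
          have hB : |p * π * (x ^ 2 * (1 + π*x) ^ (-p-1))| ≤ p * M * (δ ^ (-p-1) * x ^ 2) := by
            rw [abs_mul, abs_mul, abs_of_pos hp, abs_of_nonneg hT4]
            calc p * |π| * (x ^ 2 * (1 + π*x) ^ (-p-1)) ≤ p * M * (x ^ 2 * (1 + π*x) ^ (-p-1)) := by
                  apply mul_le_mul_of_nonneg_right _ hT4
                  exact mul_le_mul_of_nonneg_left hπM' hp.le
              _ ≤ p * M * (δ ^ (-p-1) * x ^ 2) := by
                  apply mul_le_mul_of_nonneg_left _ (by positivity)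
                  calc x ^ 2 * (1 + π*x) ^ (-p-1) ≤ δ ^ (-p-1) * x ^ 2 := hT2
                    _ ≤ δ ^ (-p-1) * x ^ 2 := le_refl _
          linarith [htri, hT1, hB]
        rw [hbx, hC₁_def]
        nlinarith [key, mul_nonneg (mul_nonneg hp.le hMpos.le) (mul_nonneg hδ'pos.le hxsq)]
      refine ⟨hbd, ?_, ?_, hDD, hg2nn⟩
      · obtain ⟨hT1, _, _, _⟩ := hT π₀ hπ₀ball
        have hrw : x * (1 + π₀ * x) ^ (-p) - x = x * ((1 + π₀*x) ^ (-p) - 1) := by ring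
        rw [hrw, hbx, hC₁_def]
        nlinarith [hT1, mul_nonneg hδ'pos.le hxsq, mul_nonneg (mul_nonneg hp.le hMpos.le) (mul_nonneg hδ'pos.le hxsq)]
      · obtain ⟨_, hT2, _, hT4⟩ := hT π₀ hπ₀ball
        rw [abs_of_nonneg hg2nn, hbx, hC₁_def]
        nlinarith [hT2, mul_nonneg hδ'pos.le hxsq, mul_nonneg (mul_nonneg hp.le hMpos.le) (mul_nonneg hδ'pos.le hxsq)]
    · -- large x
      have hxgt : (1:ℝ) < x := by
        rcases le_or_gt 0 x with h | h
        · rwa [abs_of_nonneg h] at hx1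
        · exfalso; rw [abs_of_neg h] at hx1
          have : (-1:ℝ) < x := hxI
          linarith
      have hxpos : (0:ℝ) < x := by linarith
      have hbx : myBound C₁ C₂ p x = C₂ * x ^ (1-p) + x :=
        if_neg (by rw [abs_of_pos hxpos]; linarith)
      have e1 : x ^ (1-p) = x * x ^ (-p) := by
        rw [show (1-p) = 1 + (-p) by ring, Real.rpow_add hxpos, Real.rpow_one]
      have e2 : x ^ (1-p) = x ^ 2 * x ^ (-p-1) := by
        rw [show (1-p) = 2 + (-p-1) by ring, Real.rpow_add hxpos,
          show ((2:ℝ)) = ((2:ℕ):ℝ) by norm_num, Real.rpow_natCast]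
      have hx1pnn : (0:ℝ) ≤ x ^ (1-p) := Real.rpow_nonneg hxpos.le _
      have hT2 : ∀ π ∈ Metric.ball π₀ (ε/2),
          (1 + π*x) ^ (-p) ≤ (ε/8) ^ (-p) * x ^ (-p) ∧
          (1 + π*x) ^ (-p-1) ≤ (ε/8) ^ (-p-1) * x ^ (-p-1) ∧ 0 < 1 + π*x := by
        intro π hπ
        obtain ⟨hδle, hgrow⟩ := hlow x h1 h2 h3 π hπ
        rw [abs_of_pos hxpos] at hgrow
        have hεx : 0 < ε/8 * x := by positivity
        refine ⟨?_, ?_, lt_of_lt_of_le hδpos hδle⟩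
        · calc (1 + π*x) ^ (-p) ≤ (ε/8 * x) ^ (-p) :=
              Real.rpow_le_rpow_of_nonpos hεx hgrow (by linarith)
            _ = (ε/8) ^ (-p) * x ^ (-p) := Real.mul_rpow hε8.le hxpos.le
        · calc (1 + π*x) ^ (-p-1) ≤ (ε/8 * x) ^ (-p-1) :=
              Real.rpow_le_rpow_of_nonpos hεx hgrow (by linarith)
            _ = (ε/8) ^ (-p-1) * x ^ (-p-1) := Real.mul_rpow hε8.le hxpos.le
      have habs1 : ∀ π ∈ Metric.ball π₀ (ε/2),
          |x * (1 + π*x) ^ (-p) - x| ≤ (ε/8) ^ (-p) * x ^ (1-p) + x := by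
        intro π hπ
        obtain ⟨hA, _, hπpos⟩ := hT2 π hπ
        have hAnn : 0 ≤ (1 + π*x) ^ (-p) := Real.rpow_nonneg hπpos.le _
        have t1 : x * (1 + π*x) ^ (-p) ≤ (ε/8) ^ (-p) * x ^ (1-p) := by
          rw [e1]
          calc x * (1 + π*x) ^ (-p) ≤ x * ((ε/8) ^ (-p) * x ^ (-p)) :=
              mul_le_mul_of_nonneg_left hA hxpos.le
            _ = (ε/8) ^ (-p) * (x * x ^ (-p)) := by ring
        have t1' : 0 ≤ x * (1 + π*x) ^ (-p) := mul_nonneg hxpos.le hAnn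
        rw [abs_le]
        constructor
        · nlinarith [mul_nonneg hεp.le hx1pnn]
        · nlinarith [mul_nonneg hεp.le hx1pnn]
      have ht2 : ∀ π ∈ Metric.ball π₀ (ε/2),
          x ^ 2 * (1 + π*x) ^ (-p-1) ≤ (ε/8) ^ (-p-1) * x ^ (1-p) ∧
          0 ≤ x ^ 2 * (1 + π*x) ^ (-p-1) := by
        intro π hπ
        obtain ⟨_, hB, hπpos⟩ := hT2 π hπ
        have hBnn : 0 ≤ (1 + π*x) ^ (-p-1) := Real.rpow_nonneg hπpos.le _
        constructor
        · rw [e2]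
          calc x ^ 2 * (1 + π*x) ^ (-p-1) ≤ x ^ 2 * ((ε/8) ^ (-p-1) * x ^ (-p-1)) :=
              mul_le_mul_of_nonneg_left hB hxsq
            _ = (ε/8) ^ (-p-1) * (x ^ 2 * x ^ (-p-1)) := by ring
        · exact mul_nonneg hxsq hBnn
      have hbd : ∀ π ∈ Metric.ball π₀ (ε/2), |phiD p π x| ≤ myBound C₁ C₂ p x := by
        intro π hπ
        have hab1 := habs1 π hπ
        obtain ⟨hb2, hb2nn⟩ := ht2 π hπ
        have hπM' := hπM π hπ
        have hBabs : |p * π * (x ^ 2 * (1 + π*x) ^ (-p-1))| ≤ p * M * ((ε/8) ^ (-p-1) * x ^ (1-p)) := by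
          rw [abs_mul, abs_mul, abs_of_pos hp, abs_of_nonneg hb2nn]
          calc p * |π| * (x ^ 2 * (1 + π*x) ^ (-p-1))
              ≤ p * M * (x ^ 2 * (1 + π*x) ^ (-p-1)) :=
                mul_le_mul_of_nonneg_right (mul_le_mul_of_nonneg_left hπM' hp.le) hb2nn
            _ ≤ p * M * ((ε/8) ^ (-p-1) * x ^ (1-p)) :=
                mul_le_mul_of_nonneg_left hb2 (by positivity)
        have hrw : phiD p π x = (x * (1 + π*x) ^ (-p) - x) - p * π * (x ^ 2 * (1 + π*x) ^ (-p-1)) := by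
          rw [phiD]
        rw [hrw, hbx, hC₂_def]
        have htri := abs_sub (x * (1 + π*x) ^ (-p) - x) (p * π * (x ^ 2 * (1 + π*x) ^ (-p-1)))
        have n1 : 0 ≤ (ε/8) ^ (-p) * x ^ (1-p) := mul_nonneg hεp.le hx1pnn
        have n2 : 0 ≤ (ε/8) ^ (-p-1) * x ^ (1-p) := mul_nonneg hεp1.le hx1pnn
        have n3 : 0 ≤ p * M * ((ε/8) ^ (-p) * x ^ (1-p)) := mul_nonneg (by positivity) n1
        apply aux_arith
        linarith [htri, hab1, hBabs, n2, n3]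
      refine ⟨hbd, ?_, ?_, hDD, hg2nn⟩
      · have hab1 := habs1 π₀ hπ₀ball
        rw [hbx, hC₂_def]
        have n2 : 0 ≤ (ε/8) ^ (-p-1) * x ^ (1-p) := mul_nonneg hεp1.le hx1pnn
        have n3 : 0 ≤ p * M * ((ε/8) ^ (-p) * x ^ (1-p)) := mul_nonneg (by positivity) (mul_nonneg hεp.le hx1pnn)
        have n4 : 0 ≤ p * M * ((ε/8) ^ (-p-1) * x ^ (1-p)) := mul_nonneg (by positivity) n2
        apply aux_arith
        linarith [hab1, n2, n3, n4]
      · obtain ⟨hb2, hb2nn⟩ := ht2 π₀ hπ₀ball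
        rw [abs_of_nonneg hg2nn, hbx, hC₂_def]
        have n1 : 0 ≤ (ε/8) ^ (-p) * x ^ (1-p) := mul_nonneg hεp.le hx1pnn
        have n3 : 0 ≤ p * M * ((ε/8) ^ (-p) * x ^ (1-p)) := mul_nonneg (by positivity) n1
        have n4 : 0 ≤ p * M * ((ε/8) ^ (-p-1) * x ^ (1-p)) := mul_nonneg (by positivity) (mul_nonneg hεp1.le hx1pnn)
        apply aux_arith
        linarith [hb2, n1, n3, n4, hxpos]
  -- measurability
  have hmeasPhi : ∀ π : ℝ, AEStronglyMeasurable (fun x => π * x * (1 + π * x) ^ (-p) - π * x)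
      (F.restrict (Ioi (-1:ℝ))) := by
    intro π; apply Measurable.aestronglyMeasurable; fun_prop
  have hmeasPhiD : AEStronglyMeasurable (phiD p π₀) (F.restrict (Ioi (-1:ℝ))) := by
    apply Measurable.aestronglyMeasurable
    unfold phiD; fun_prop
  have hg2meas : AEStronglyMeasurable (fun x => x ^ 2 * (1 + π₀ * x) ^ (-p - 1))
      (F.restrict (Ioi (-1:ℝ))) := by
    apply Measurable.aestronglyMeasurable; fun_prop
  have hg1meas : AEStronglyMeasurable (fun x => x * (1 + π₀ * x) ^ (-p) - x)
      (F.restrict (Ioi (-1:ℝ))) := by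
    apply Measurable.aestronglyMeasurable; fun_prop
  -- integrability of x^2 on Ioc (-1) 1
  have hx2int : IntegrableOn (fun x => x ^ 2) (Ioc (-1:ℝ) 1) F := by
    constructor
    · apply Measurable.aestronglyMeasurable; fun_prop
    · rw [hasFiniteIntegral_iff_ofReal (ae_of_all _ fun x => sq_nonneg x)]
      calc ∫⁻ x in Ioc (-1:ℝ) 1, ENNReal.ofReal (x ^ 2) ∂F
          ≤ ∫⁻ x in Ioc (-1:ℝ) 1, ENNReal.ofReal (min (x ^ 2) 1) ∂F := by
            apply setLIntegral_mono_ae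
            · apply Measurable.aemeasurable; fun_prop
            · apply ae_of_all
              intro x hx
              have hle : x ^ 2 ≤ 1 := by nlinarith [hx.1, hx.2]
              rw [min_eq_left hle]
        _ ≤ ∫⁻ x, ENNReal.ofReal (min (x ^ 2) 1) ∂F := setLIntegral_le_lintegral _ _
        _ < ⊤ := hFlevy.lt_top
  -- integrability of x^(1-p) on Ioi 1
  have hx1pint : IntegrableOn (fun x => x ^ (1-p)) (Ioi (1:ℝ)) F := by
    have h := hFq p ⟨hpap, hppb⟩
    apply Integrable.mono' (h.const_mul (max 1 ((2:ℝ) ^ (p-1))))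
    · apply Measurable.aestronglyMeasurable; fun_prop
    · filter_upwards [ae_restrict_mem measurableSet_Ioi] with x hx
      have hx1 : (1:ℝ) < x := hx
      have hxpos : (0:ℝ) < x := by linarith
      rw [Real.norm_eq_abs, abs_of_nonneg (Real.rpow_nonneg hxpos.le _)]
      have h1x : (0:ℝ) < 1 + x := by linarith
      have hKnn : 0 ≤ (1+x) ^ (1-p) := Real.rpow_nonneg h1x.le _
      rcases le_or_gt p 1 with hp1 | hp1
      · have hle : x ^ (1-p) ≤ (1+x) ^ (1-p) :=
          Real.rpow_le_rpow hxpos.le (by linarith) (by linarith)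
        calc x ^ (1-p) ≤ (1+x) ^ (1-p) := hle
          _ ≤ max 1 ((2:ℝ) ^ (p-1)) * (1+x) ^ (1-p) :=
            le_mul_of_one_le_left hKnn (le_max_left _ _)
      · have h2x : (2*x) ^ (1-p) ≤ (1+x) ^ (1-p) :=
          Real.rpow_le_rpow_of_nonpos h1x (by linarith) (by linarith)
        have hsp : (2*x) ^ (1-p) = 2 ^ (1-p) * x ^ (1-p) :=
          Real.mul_rpow (by norm_num) hxpos.le
        have h2p : (2:ℝ) ^ (p-1) * 2 ^ (1-p) = 1 := by
          rw [← Real.rpow_add (by norm_num : (0:ℝ) < 2)]; norm_num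
        have hre : x ^ (1-p) = 2 ^ (p-1) * ((2*x) ^ (1-p)) := by
          rw [hsp, ← mul_assoc, h2p, one_mul]
        have h2pnn : (0:ℝ) ≤ (2:ℝ) ^ (p-1) := Real.rpow_nonneg (by norm_num) _
        rw [hre]
        calc (2:ℝ) ^ (p-1) * ((2*x) ^ (1-p)) ≤ 2 ^ (p-1) * ((1+x) ^ (1-p)) :=
              mul_le_mul_of_nonneg_left h2x h2pnn
          _ ≤ max 1 ((2:ℝ) ^ (p-1)) * (1+x) ^ (1-p) :=
              mul_le_mul_of_nonneg_right (le_max_right _ _) hKnn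
  -- integrability of the bound
  have hboundint : IntegrableOn (myBound C₁ C₂ p) (Ioi (-1:ℝ)) F := by
    have hu : Ioc (-1:ℝ) 1 ∪ Ioi 1 = Ioi (-1:ℝ) := Ioc_union_Ioi_eq_Ioi (by norm_num)
    rw [← hu]
    apply IntegrableOn.union
    · apply IntegrableOn.congr_fun (hx2int.const_mul C₁) ?_ measurableSet_Ioc
      intro x hx
      have hle : |x| ≤ 1 := abs_le.mpr ⟨hx.1.le, hx.2⟩
      simp only [myBound, if_pos hle]
    · apply IntegrableOn.congr_fun ((hx1pint.const_mul C₂).add hFx) ?_ measurableSet_Ioi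
      intro x hx
      have hgt : ¬ |x| ≤ 1 := by
        rw [abs_of_pos (by linarith [mem_Ioi.mp hx] : (0:ℝ) < x)]
        simpa using mem_Ioi.mp hx
      simp only [myBound, if_neg hgt, Pi.add_apply]
  -- individual integrabilities
  have hg2int : IntegrableOn (fun x => x ^ 2 * (1 + π₀ * x) ^ (-p - 1)) (Ioi (-1:ℝ)) F := by
    apply hboundint.mono' hg2meas
    filter_upwards [hmain] with x hx
    rw [Real.norm_eq_abs]; exact hx.2.2.1
  have hg1int : IntegrableOn (fun x => x * (1 + π₀ * x) ^ (-p) - x) (Ioi (-1:ℝ)) F := by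
    apply hboundint.mono' hg1meas
    filter_upwards [hmain] with x hx
    rw [Real.norm_eq_abs]; exact hx.2.1
  have hPhiint : Integrable (fun x => π₀ * x * (1 + π₀ * x) ^ (-p) - π₀ * x)
      (F.restrict (Ioi (-1:ℝ))) :=
    (hg1int.const_mul π₀).congr (ae_of_all _ fun x => by ring)
  -- dominated differentiation
  obtain ⟨hPhiDint, hderiv⟩ := hasDerivAt_integral_of_dominated_loc_of_deriv_le
    (Metric.ball_mem_nhds π₀ (show (0:ℝ) < ε/2 by linarith))
    (Filter.Eventually.of_forall hmeasPhi)
    hPhiint hmeasPhiD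
    (hmain.mono fun x hx => fun π hπ => by rw [Real.norm_eq_abs]; exact hx.1 π hπ)
    hboundint
    (hmain.mono fun x hx => hx.2.2.2.1)
  -- split the integral of phiD
  have hsplit : ∫ x in Ioi (-1:ℝ), phiD p π₀ x ∂F
      = (∫ x in Ioi (-1:ℝ), (x * (1 + π₀ * x) ^ (-p) - x) ∂F)
        - p * π₀ * ∫ x in Ioi (-1:ℝ), (x ^ 2 * (1 + π₀ * x) ^ (-p - 1)) ∂F := by
    have heq : (fun x => phiD p π₀ x)
        = fun x => (x * (1 + π₀ * x) ^ (-p) - x) - (p * π₀) * (x ^ 2 * (1 + π₀ * x) ^ (-p - 1)) := by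
      funext x; rw [phiD]
    rw [heq, integral_sub hg1int (hg2int.const_mul (p*π₀)), integral_const_mul]
  -- use hG0
  have hG0' : ∫ x in Ioi (-1:ℝ), (x * (1 + π₀ * x) ^ (-p) - x) ∂F = p * π₀ * c - b := by
    have e : ∫ x in Ioi (-1:ℝ), (π₀ * x * (1 + π₀ * x) ^ (-p) - π₀ * x) ∂F
        = π₀ * ∫ x in Ioi (-1:ℝ), (x * (1 + π₀ * x) ^ (-p) - x) ∂F := by
      rw [← integral_const_mul]
      exact integral_congr_ae (ae_of_all _ fun x => by ring)
    rw [e] at hG0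
    have h2 : π₀ * (b - p * π₀ * c + ∫ x in Ioi (-1:ℝ), (x * (1 + π₀ * x) ^ (-p) - x) ∂F) = 0 := by
      linear_combination hG0
    rcases mul_eq_zero.mp h2 with h | h
    · exact absurd h hπ₀ne
    · linarith
  -- polynomial part
  have hpoly : HasDerivAt (fun π : ℝ => π * b - p * π ^ 2 * c) (1 * b - p * (2 * π₀ ^ 1) * c) π₀ := by
    have h1 := (hasDerivAt_id π₀).mul_const b
    have h2 : HasDerivAt (fun π : ℝ => π ^ 2) ((2:ℕ) * π₀ ^ 1) π₀ := hasDerivAt_pow 2 π₀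
    have h3 := (h2.const_mul p).mul_const c
    have h4 := h1.sub h3
    exact h4.congr_deriv (by push_cast; ring)
  have htotal := hpoly.add hderiv
  refine ⟨hg2int, ?_, ?_⟩
  · refine htotal.congr_deriv ?_
    rw [hsplit, hG0']
    ring
  · intro hc'
    have hJ : 0 ≤ ∫ x in Ioi (-1:ℝ), x ^ 2 * (1 + π₀ * x) ^ (-p - 1) ∂F :=
      integral_nonneg_of_ae (hmain.mono fun x hx => hx.2.2.2.2)
    constructor
    · intro hπpos
      have hpp : 0 < p * π₀ := mul_pos hp hπpos
      nlinarith
    · intro hπneg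
      have hpp : p * π₀ < 0 := mul_neg_of_pos_of_neg hp hπneg
      nlinarith
end
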